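/- arXiv:2104.08944 — 6 statements merged into one kernel-verified Lean document; each statement's English description precedes it below -/
import Mathlib

section
/- Let α = log 2 / log 3 and suppose α is ρ-diophantine for some ρ > 0, i.e. there is c > 0 with ‖nα‖ ≥ c n^{-ρ} for every positive integer n. Let s_1 = 1 < s_2 < ⋯ enumerate the Furstenberg set S in increasing order. Then there are positive constants c', C' such that for all sufficiently large n: c'/(log s_n)^ρ ≤ (s_{n+1} − s_n)/s_n ≤ C'/(log s_n)^{1/(ρ+1)}. -/
open Real Filter Asymptotics

noncomputable def FGBa : ℝ := Real.log 2 / Real.log 3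

lemma FGB_log2_pos : (0:ℝ) < Real.log 2 := Real.log_pos (by norm_num)
lemma FGB_log3_pos : (0:ℝ) < Real.log 3 := Real.log_pos (by norm_num)
lemma FGBa_pos : 0 < FGBa := div_pos FGB_log2_pos FGB_log3_pos
lemma FGBa_lt_one : FGBa < 1 :=
  (div_lt_one FGB_log3_pos).2 (Real.log_lt_log (by norm_num) (by norm_num))

set_option maxHeartbeats 2000000 in
/-- The covering lemma: from a good rational approximation `p/q` of `α`,
every interval `(t, t+η]` with `t` not too large contains `j·α + k`. -/
lemma FGB_hit (q : ℕ) (hq : 0 < q) (p : ℤ) {t η : ℝ}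
    (hθ0 : 0 < |(q:ℝ) * FGBa - p|) (hθη : |(q:ℝ) * FGBa - p| ≤ η)
    (hθ1 : |(q:ℝ) * FGBa - p| ≤ 1)
    (ht : (1 / |(q:ℝ) * FGBa - p| + 1) * q + 2 ≤ t) :
    ∃ j k : ℕ, t < j * FGBa + k ∧ j * FGBa + k ≤ t + η := by
  set θ : ℝ := (q:ℝ) * FGBa - p with hθdef
  have hq1 : (1:ℝ) ≤ q := by exact_mod_cast hq
  have ha0 := FGBa_pos
  have ha1 := FGBa_lt_one
  have hθne : θ ≠ 0 := fun h => by simp [h] at hθ0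
  rcases hθne.lt_or_gt with hneg | hpos
  · -- θ < 0
    set θ' : ℝ := -θ with hθ'
    have hθ'0 : 0 < θ' := by simp [hθ']; linarith
    have habs : |θ| = θ' := abs_of_neg hneg
    rw [habs] at hθη hθ1 ht
    set K : ℤ := ⌈t + θ'⌉ with hK
    set x : ℝ := (K:ℝ) - (t + θ') with hx
    have hx0 : 0 ≤ x := by simp [hx]; exact Int.le_ceil _
    have hx1 : x < 1 := by
      have := Int.ceil_lt_add_one (t + θ')
      simp only [hx]; linarith
    have hm0 : (0:ℤ) ≤ ⌈x / θ'⌉ := Int.ceil_nonneg (div_nonneg hx0 hθ'0.le)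
    set m : ℕ := (⌈x / θ'⌉).toNat with hmdef
    have hmcast : (m:ℝ) = (⌈x / θ'⌉ : ℤ) := by
      have h : (m : ℤ) = ⌈x / θ'⌉ := Int.toNat_of_nonneg hm0
      exact_mod_cast h
    have hm1 : x ≤ m * θ' := by
      rw [hmcast]
      rw [← div_le_iff₀ hθ'0]
      exact Int.le_ceil _
    have hm2 : (m:ℝ) * θ' < x + θ' := by
      rw [hmcast]
      have h1 : ((⌈x / θ'⌉ : ℤ) : ℝ) < x / θ' + 1 := Int.ceil_lt_add_one _
      calc ((⌈x / θ'⌉ : ℤ) : ℝ) * θ' < (x / θ' + 1) * θ' := by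
            exact mul_lt_mul_of_pos_right h1 hθ'0
        _ = x + θ' := by field_simp
    have hmb : (m:ℝ) ≤ 1 / θ' + 1 := by
      rw [hmcast]
      have h1 : ((⌈x / θ'⌉ : ℤ) : ℝ) < x / θ' + 1 := Int.ceil_lt_add_one _
      have h2 : x / θ' ≤ 1 / θ' := by gcongr
      linarith
    set j : ℕ := m * q with hjdef
    have hjcast : (j:ℝ) = (m:ℝ) * q := by rw [hjdef]; push_cast; ring
    have hjb : (j:ℝ) ≤ t - 2 := by
      have h1 : (m:ℝ) * q ≤ (1/θ' + 1) * q :=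
        mul_le_mul_of_nonneg_right hmb (by positivity)
      rw [hjcast]; linarith
    have hmp : (m:ℝ) * p = j * FGBa + m * θ' := by
      have hp : (p:ℝ) = (q:ℝ) * FGBa + θ' := by rw [hθ', hθdef]; ring
      rw [hp, hjcast]; ring
    have hja : (j:ℝ) * FGBa ≤ j := by
      nlinarith [FGBa_lt_one, (Nat.cast_nonneg j : (0:ℝ) ≤ (j:ℝ))]
    have hKt : t + θ' ≤ (K:ℝ) := Int.le_ceil _
    have hkz : (0:ℤ) ≤ K - (m:ℤ) * p := by
      have hr : (m:ℝ) * p < (K:ℝ) := by rw [hmp]; nlinarith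
      have hr' : (m:ℤ) * p < K := by exact_mod_cast hr
      omega
    set k : ℕ := (K - (m:ℤ) * p).toNat with hkdef
    have hkcast : (k:ℝ) = (K:ℝ) - (m:ℝ) * p := by
      have h : (k:ℤ) = K - (m:ℤ) * p := Int.toNat_of_nonneg hkz
      exact_mod_cast h
    clear_value K x m j k
    have hval : (j:ℝ) * FGBa + k = (K:ℝ) - m * θ' := by
      rw [hkcast, hmp]; ring
    have hxK : x = (K:ℝ) - t - θ' := by rw [hx]; ring
    refine ⟨j, k, ?_, ?_⟩
    · rw [hval]; linarith
    · rw [hval]; linarith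
  · -- θ > 0
    have habs : |θ| = θ := abs_of_pos hpos
    rw [habs] at hθη hθ1 ht
    set x : ℝ := Int.fract t with hx
    have hx0 : 0 ≤ x := Int.fract_nonneg t
    have hx1 : x < 1 := Int.fract_lt_one t
    have hm0 : (0:ℤ) ≤ ⌊x / θ⌋ := Int.floor_nonneg.2 (div_nonneg hx0 hpos.le)
    set m : ℕ := (⌊x / θ⌋).toNat + 1 with hmdef
    have hmcast : (m:ℝ) = ((⌊x/θ⌋ : ℤ):ℝ) + 1 := by
      have h : (m:ℤ) = ⌊x/θ⌋ + 1 := by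
        rw [hmdef]; push_cast [Int.toNat_of_nonneg hm0]; ring
      exact_mod_cast h
    have hm1 : x < m * θ := by
      have h1 := Int.lt_floor_add_one (x/θ)
      have h2 : x/θ * θ < (((⌊x/θ⌋ : ℤ):ℝ) + 1) * θ := mul_lt_mul_of_pos_right h1 hpos
      rw [div_mul_cancel₀ _ hpos.ne'] at h2
      rw [hmcast]; exact h2
    have hm2 : (m:ℝ) * θ ≤ x + θ := by
      have h1 := Int.floor_le (x/θ)
      have h2 : (((⌊x/θ⌋ : ℤ):ℝ) + 1) * θ ≤ (x/θ + 1) * θ := by gcongr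
      rw [hmcast]
      calc (((⌊x/θ⌋ : ℤ):ℝ) + 1) * θ ≤ (x/θ + 1) * θ := h2
        _ = x + θ := by field_simp
    have hmb : (m:ℝ) ≤ 1/θ + 1 := by
      have h1 := Int.floor_le (x/θ)
      have h2 : x/θ ≤ 1/θ := by gcongr
      rw [hmcast]; linarith
    set j : ℕ := m * q with hjdef
    have hjcast : (j:ℝ) = (m:ℝ) * q := by rw [hjdef]; push_cast; ring
    have hjb : (j:ℝ) ≤ t - 2 := by
      have h1 : (m:ℝ) * q ≤ (1/θ + 1) * q :=
        mul_le_mul_of_nonneg_right hmb (by positivity)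
      rw [hjcast]; linarith
    have hmp : (m:ℝ) * p = j * FGBa - m * θ := by
      have hp : (p:ℝ) = (q:ℝ) * FGBa - θ := by rw [hθdef]; ring
      rw [hp, hjcast]; ring
    have hja : (j:ℝ) * FGBa ≤ j := by
      nlinarith [FGBa_lt_one, (Nat.cast_nonneg j : (0:ℝ) ≤ (j:ℝ))]
    have hfl : t - 1 < ((⌊t⌋ : ℤ):ℝ) := Int.sub_one_lt_floor t
    have hkz : (0:ℤ) ≤ ⌊t⌋ - (m:ℤ) * p := by
      have hr : (m:ℝ) * p < ((⌊t⌋ : ℤ):ℝ) := by rw [hmp]; nlinarith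
      have hr' : (m:ℤ) * p < ⌊t⌋ := by exact_mod_cast hr
      omega
    set k : ℕ := (⌊t⌋ - (m:ℤ) * p).toNat with hkdef
    have hkcast : (k:ℝ) = ((⌊t⌋ : ℤ):ℝ) - (m:ℝ) * p := by
      have h : (k:ℤ) = ⌊t⌋ - (m:ℤ) * p := Int.toNat_of_nonneg hkz
      exact_mod_cast h
    clear_value x m j k
    have hval : (j:ℝ) * FGBa + k = ((⌊t⌋ : ℤ):ℝ) + m * θ := by
      rw [hkcast, hmp]; ring
    have hfr : t = ((⌊t⌋ : ℤ):ℝ) + x := by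
      have h := Int.floor_add_fract t
      rw [← hx] at h; exact h.symm
    refine ⟨j, k, ?_, ?_⟩
    · rw [hval]; linarith
    · rw [hval]; linarith


def FGBP : ℕ → Prop := fun m => ∃ j k : ℕ, m = 2 ^ j * 3 ^ k

lemma FGBP_inf : (setOf FGBP).Infinite :=
  Set.infinite_of_injective_forall_mem (f := fun j : ℕ => 2 ^ j)
    (Nat.pow_right_injective le_rfl) (fun j => ⟨j, 0, by norm_num⟩)

lemma FGBP_pos {m : ℕ} (h : FGBP m) : 0 < m := by
  obtain ⟨j, k, rfl⟩ := h; positivity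

lemma FGBP_next {n m : ℕ} (hm : FGBP m) (hlt : Nat.nth FGBP n < m) :
    Nat.nth FGBP (n + 1) ≤ m := by
  classical
  have h1 : n < Nat.count FGBP m := (Nat.lt_nth_iff_count_lt FGBP_inf).2 hlt
  have h2 : Nat.nth FGBP (n + 1) ≤ Nat.nth FGBP (Nat.count FGBP m) :=
    (Nat.nth_le_nth FGBP_inf).2 h1
  rwa [Nat.nth_count hm] at h2

lemma FGB_logrep (j k : ℕ) : Real.log ((2 ^ j * 3 ^ k : ℕ) : ℝ)
    = j * Real.log 2 + k * Real.log 3 := by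
  push_cast
  rw [Real.log_mul (by positivity) (by positivity), Real.log_pow, Real.log_pow]

set_option maxHeartbeats 1000000 in
lemma FGB_lower (ρ c : ℝ) (hρ : 0 < ρ) (hc : 0 < c)
    (hdio : ∀ q : ℕ, 0 < q → ∀ p : ℤ, c * (q:ℝ) ^ (-ρ) ≤ |(q:ℝ) * FGBa - p|)
    {N M : ℕ} (hN : FGBP N) (hM : FGBP M) (hNM : N < M) (hM2 : M ≤ 2 * N)
    (hlogN : 1 ≤ Real.log N) :
    c * Real.log 3 * (2 / Real.log 2) ^ (-ρ) * (Real.log N) ^ (-ρ)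
      ≤ ((M:ℝ) - N) / N := by
  have hL2 := FGB_log2_pos
  have hL3 := FGB_log3_pos
  have hL21 : Real.log 2 ≤ 1 := by
    have := Real.log_le_sub_one_of_pos (x := 2) (by norm_num); linarith
  have hL23 : Real.log 2 < Real.log 3 := Real.log_lt_log (by norm_num) (by norm_num)
  obtain ⟨j, k, hNe⟩ := hN
  obtain ⟨j2, k2, hMe⟩ := hM
  have hN0 : (0:ℝ) < N := by exact_mod_cast FGBP_pos ⟨j, k, hNe⟩
  have hM0 : (0:ℝ) < M := by exact_mod_cast FGBP_pos ⟨j2, k2, hMe⟩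
  have hNM' : (N:ℝ) < M := by exact_mod_cast hNM
  have hlogNM : Real.log N < Real.log M := Real.log_lt_log hN0 hNM'
  have hlogM2 : Real.log M ≤ Real.log 2 + Real.log N := by
    have h1 : (M:ℝ) ≤ 2 * N := by exact_mod_cast hM2
    have h2 : Real.log M ≤ Real.log (2 * N) := Real.log_le_log hM0 h1
    rwa [Real.log_mul (by norm_num) hN0.ne'] at h2
  have heq : Real.log M - Real.log N
      = (((j2:ℤ) - j : ℤ):ℝ) * Real.log 2 + (((k2:ℤ) - k : ℤ):ℝ) * Real.log 3 := by
    rw [hNe, hMe, FGB_logrep, FGB_logrep]; push_cast; ring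
  have hd : (j2:ℤ) - j ≠ 0 := by
    intro h0
    rw [h0] at heq
    have he1 : (1:ℝ) ≤ (((k2:ℤ) - k : ℤ):ℝ) := by
      have hpos : 0 < (((k2:ℤ) - k : ℤ):ℝ) * Real.log 3 := by
        rw [Int.cast_zero, zero_mul, zero_add] at heq; linarith
      have h5 : 0 < (((k2:ℤ) - k : ℤ):ℝ) := by
        by_contra hcon; push_neg at hcon; nlinarith
      have h6 : (0:ℤ) < (k2:ℤ) - k := by exact_mod_cast h5
      have h7 : (1:ℤ) ≤ (k2:ℤ) - k := h6
      exact_mod_cast h7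
    rw [Int.cast_zero, zero_mul, zero_add] at heq
    nlinarith
  set q : ℕ := ((j2:ℤ) - j).natAbs with hqdef
  have hq0 : 0 < q := Int.natAbs_pos.2 hd
  -- |d·α+e| = |q·α - p| for a suitable integer p
  have key : ∃ p : ℤ, |(q:ℝ) * FGBa - p|
      = |(((j2:ℤ) - j : ℤ):ℝ) * FGBa + (((k2:ℤ) - k : ℤ):ℝ)| := by
    rcases lt_or_gt_of_ne hd with hneg | hpos
    · refine ⟨(k2:ℤ) - k, ?_⟩
      have hcq : ((q:ℕ):ℝ) = -((((j2:ℤ) - j : ℤ)):ℝ) := by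
        have h : (q:ℤ) = -((j2:ℤ) - j) := by rw [hqdef]; omega
        exact_mod_cast h
      rw [hcq, ← abs_neg]; congr 1; ring
    · refine ⟨-((k2:ℤ) - k), ?_⟩
      have hcq : ((q:ℕ):ℝ) = ((((j2:ℤ) - j : ℤ)):ℝ) := by
        have h : (q:ℤ) = (j2:ℤ) - j := by rw [hqdef]; omega
        exact_mod_cast h
      rw [hcq]; congr 1; push_cast; ring
  obtain ⟨p, hp⟩ := key
  -- the diophantine lower bound
  have hsplit : Real.log M - Real.log N
      = Real.log 3 * ((((j2:ℤ) - j : ℤ):ℝ) * FGBa + (((k2:ℤ) - k : ℤ):ℝ)) := by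
    rw [heq]
    have h : FGBa * Real.log 3 = Real.log 2 := div_mul_cancel₀ _ hL3.ne'
    rw [← h]; ring
  have habs : Real.log M - Real.log N
      = Real.log 3 * |(((j2:ℤ) - j : ℤ):ℝ) * FGBa + (((k2:ℤ) - k : ℤ):ℝ)| := by
    rw [hsplit]
    congr 1
    rw [abs_of_pos]
    nlinarith [hsplit]
  have hdio' : c * (q:ℝ) ^ (-ρ) ≤ |(((j2:ℤ) - j : ℤ):ℝ) * FGBa + (((k2:ℤ) - k : ℤ):ℝ)| := by
    rw [← hp]; exact hdio q hq0 p
  -- bound on q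
  have hjb : (j:ℝ) * Real.log 2 ≤ Real.log N := by
    have h1 : (2:ℕ)^j ≤ N := by
      rw [hNe]; exact Nat.le_mul_of_pos_right _ (by positivity)
    have h2 : ((2:ℝ))^j ≤ (N:ℝ) := by exact_mod_cast h1
    have h3 := Real.log_le_log (by positivity) h2
    rwa [Real.log_pow] at h3
  have hj2b : (j2:ℝ) * Real.log 2 ≤ Real.log 2 + Real.log N := by
    have h1 : (2:ℕ)^j2 ≤ M := by
      rw [hMe]; exact Nat.le_mul_of_pos_right _ (by positivity)
    have h2 : ((2:ℝ))^j2 ≤ (M:ℝ) := by exact_mod_cast h1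
    have h3 := Real.log_le_log (by positivity) h2
    rw [Real.log_pow] at h3
    linarith
  have hqb : (q:ℝ) ≤ 2 / Real.log 2 * Real.log N := by
    have hcq : ((q:ℕ):ℝ) = |(((j2:ℤ) - j : ℤ):ℝ)| := by
      have h : (q:ℤ) = |(j2:ℤ) - j| := by rw [hqdef]; exact (Int.abs_eq_natAbs _).symm
      rw [← Int.cast_abs]
      exact_mod_cast h
    have hj0 : (0:ℝ) ≤ (j:ℝ) := Nat.cast_nonneg j
    have hj20 : (0:ℝ) ≤ (j2:ℝ) := Nat.cast_nonneg j2
    have habs2 : |(((j2:ℤ) - j : ℤ):ℝ)| * Real.log 2 ≤ 2 * Real.log N := by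
      push_cast
      rw [abs_sub_comm, ← abs_of_pos hL2, ← abs_mul]
      rw [abs_le]
      constructor
      · nlinarith
      · nlinarith
    rw [hcq, div_mul_eq_mul_div, le_div_iff₀ hL2]
    linarith [habs2]
  have hq0' : (0:ℝ) < q := by exact_mod_cast hq0
  have hrpow : (2 / Real.log 2 * Real.log N) ^ (-ρ) ≤ (q:ℝ) ^ (-ρ) :=
    Real.rpow_le_rpow_of_nonpos hq0' hqb (neg_nonpos.2 hρ.le)
  have hmulrpow : (2 / Real.log 2 * Real.log N) ^ (-ρ)
      = (2 / Real.log 2) ^ (-ρ) * (Real.log N) ^ (-ρ) :=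
    Real.mul_rpow (by positivity) (by linarith)
  -- assemble
  have hlogle : Real.log M - Real.log N ≤ ((M:ℝ) - N) / N := by
    have h1 : Real.log ((M:ℝ) / N) ≤ (M:ℝ)/N - 1 :=
      Real.log_le_sub_one_of_pos (by positivity)
    rw [Real.log_div hM0.ne' hN0.ne'] at h1
    have h2 : (M:ℝ)/N - 1 = ((M:ℝ) - N)/N := by field_simp
    linarith
  have hchain : c * Real.log 3 * (2 / Real.log 2) ^ (-ρ) * (Real.log N) ^ (-ρ)
      ≤ Real.log M - Real.log N := by
    rw [habs]
    calc c * Real.log 3 * (2 / Real.log 2) ^ (-ρ) * (Real.log N) ^ (-ρ)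
        = Real.log 3 * (c * ((2 / Real.log 2 * Real.log N) ^ (-ρ))) := by
          rw [hmulrpow]; ring
      _ ≤ Real.log 3 * (c * (q:ℝ) ^ (-ρ)) := by
          have := mul_le_mul_of_nonneg_left hrpow hc.le
          exact mul_le_mul_of_nonneg_left this hL3.le
      _ ≤ Real.log 3 * |(((j2:ℤ) - j : ℤ):ℝ) * FGBa + (((k2:ℤ) - k : ℤ):ℝ)| :=
          mul_le_mul_of_nonneg_left hdio' hL3.le
  linarith

set_option maxHeartbeats 2000000 in
lemma FGB_upper (ρ c : ℝ) (hρ : 0 < ρ) (hc : 0 < c)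
    (hdio : ∀ q : ℕ, 0 < q → ∀ p : ℤ, c * (q:ℝ) ^ (-ρ) ≤ |(q:ℝ) * FGBa - p|)
    {N M : ℕ} (hN0 : 0 < N)
    (hnext : ∀ E : ℕ, FGBP E → N < E → M ≤ E)
    (h8 : 8 ≤ Real.log N / Real.log 3)
    (h2 : (2:ℝ) ^ (ρ+1) ≤ c * (Real.log N / Real.log 3) / 4)
    (hcρ : c ≤ ((Real.log N / Real.log 3) / 4) ^ ρ) :
    ((M:ℝ) - N) / N
      ≤ 12 * (4 * Real.log 3 / c) ^ (1/(ρ+1)) / (Real.log N) ^ (1/(ρ+1)) := by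
  have hL2 := FGB_log2_pos
  have hL3 := FGB_log3_pos
  have hL32 : Real.log 3 ≤ 2 := by
    have := Real.log_le_sub_one_of_pos (x := 3) (by norm_num); linarith
  have hρ1 : 0 < ρ + 1 := by linarith
  have hρ1' : (ρ + 1) ≠ 0 := hρ1.ne'
  set t : ℝ := Real.log N / Real.log 3 with htdef
  have ht0 : 0 < t := by linarith
  have hlogN : Real.log N = t * Real.log 3 := by
    rw [htdef]; field_simp
  have hlogN0 : 0 < Real.log N := by rw [hlogN]; positivity
  have hN0' : (0:ℝ) < N := by exact_mod_cast hN0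
  set y : ℝ := (c * t / 4) ^ (1/(ρ+1)) with hydef
  have hct : 0 < c * t / 4 := by positivity
  have hy0 : 0 < y := by rw [hydef]; positivity
  have hy2 : 2 ≤ y := by
    have h1 : ((2:ℝ) ^ (ρ+1)) ^ (1/(ρ+1)) ≤ y := by
      rw [hydef]
      exact Real.rpow_le_rpow (by positivity) h2 (by positivity)
    have h2eq : ((2:ℝ) ^ (ρ+1)) ^ (1/(ρ+1)) = 2 := by
      rw [← Real.rpow_mul (by norm_num : (0:ℝ) ≤ 2), mul_one_div,
        div_self hρ1', Real.rpow_one]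
    linarith [h2eq ▸ h1]
  have hy_pow : y ^ (ρ+1) = c * t / 4 := by
    rw [hydef, ← Real.rpow_mul hct.le, one_div_mul_cancel hρ1', Real.rpow_one]
  have hyt : y ≤ t / 4 := by
    by_contra hcon
    push_neg at hcon
    have h1 : (t/4) ^ (ρ+1) < y ^ (ρ+1) :=
      Real.rpow_lt_rpow (by positivity) hcon hρ1
    rw [hy_pow] at h1
    have h2' : (t/4) ^ (ρ+1) = (t/4) ^ ρ * (t/4) := by
      rw [Real.rpow_add (by positivity), Real.rpow_one]
    have h3 : c * (t/4) ≤ (t/4) ^ ρ * (t/4) := by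
      have := mul_le_mul_of_nonneg_right hcρ (by positivity : (0:ℝ) ≤ t/4)
      linarith
    linarith [h1, h2', h3]
  set Q : ℕ := ⌊y⌋₊ with hQdef
  have hQ2 : 2 ≤ Q := Nat.le_floor (by exact_mod_cast hy2)
  have hQ0 : 0 < Q := by omega
  have hQ0' : (0:ℝ) < Q := by exact_mod_cast hQ0
  have hQy : (Q:ℝ) ≤ y := Nat.floor_le hy0.le
  have hQhalf : y / 2 ≤ (Q:ℝ) := by
    have := Nat.sub_one_lt_floor y
    rw [← hQdef] at this
    linarith
  obtain ⟨pZ, qZ, hqZ0, hqZQ, habs⟩ := Real.exists_int_int_abs_mul_sub_le FGBa hQ0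
  set q : ℕ := qZ.toNat with hqdef
  have hqcast : (q:ℝ) = (qZ:ℝ) := by
    have h : (q:ℤ) = qZ := Int.toNat_of_nonneg hqZ0.le
    exact_mod_cast h
  have hq0 : 0 < q := by
    have : (0:ℤ) < (q:ℤ) := by rw [hqdef]; omega
    exact_mod_cast this
  have hq0' : (0:ℝ) < q := by exact_mod_cast hq0
  have hqQ : (q:ℝ) ≤ Q := by
    rw [hqcast]; exact_mod_cast hqZQ
  have habs' : |(q:ℝ) * FGBa - pZ| ≤ 1 / Q := by
    rw [hqcast]
    calc |(qZ:ℝ) * FGBa - pZ| ≤ 1 / ((Q:ℝ) + 1) := habs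
      _ ≤ 1 / Q := by gcongr <;> linarith
  have hlow : c * (Q:ℝ) ^ (-ρ) ≤ |(q:ℝ) * FGBa - pZ| := by
    have h1 : (Q:ℝ) ^ (-ρ) ≤ (q:ℝ) ^ (-ρ) :=
      Real.rpow_le_rpow_of_nonpos hq0' hqQ (neg_nonpos.2 hρ.le)
    calc c * (Q:ℝ) ^ (-ρ) ≤ c * (q:ℝ) ^ (-ρ) :=
          mul_le_mul_of_nonneg_left h1 hc.le
      _ ≤ _ := hdio q hq0 pZ
  have hcQ : (0:ℝ) < c * (Q:ℝ) ^ (-ρ) := by positivity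
  have hθ0 : 0 < |(q:ℝ) * FGBa - pZ| := lt_of_lt_of_le hcQ hlow
  have hQρ : (Q:ℝ) ^ ρ * (Q:ℝ) = (Q:ℝ) ^ (ρ + 1) := by
    rw [Real.rpow_add hQ0', Real.rpow_one]
  have hQy_pow : (Q:ℝ) ^ (ρ+1) ≤ y ^ (ρ+1) :=
    Real.rpow_le_rpow hQ0'.le hQy hρ1.le
  have hinvθ : 1 / |(q:ℝ) * FGBa - pZ| ≤ (Q:ℝ) ^ ρ / c := by
    rw [div_le_div_iff₀ hθ0 hc]
    calc 1 * c = c * ((Q:ℝ)^(-ρ) * (Q:ℝ)^ρ) := by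
          rw [← Real.rpow_add hQ0', neg_add_cancel, Real.rpow_zero]; ring
      _ = (c * (Q:ℝ)^(-ρ)) * (Q:ℝ)^ρ := by ring
      _ ≤ |(q:ℝ) * FGBa - pZ| * (Q:ℝ)^ρ := by
          have : (0:ℝ) ≤ (Q:ℝ)^ρ := by positivity
          exact mul_le_mul_of_nonneg_right hlow this
      _ = (Q:ℝ)^ρ * |(q:ℝ) * FGBa - pZ| := by ring
  have htcond : (1 / |(q:ℝ) * FGBa - pZ| + 1) * q + 2 ≤ t := by
    have h1 : (1 / |(q:ℝ) * FGBa - pZ| + 1) * q ≤ ((Q:ℝ)^ρ/c + 1) * Q := by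
      have hb : 1 / |(q:ℝ) * FGBa - pZ| + 1 ≤ (Q:ℝ)^ρ/c + 1 := by linarith
      have hbpos : (0:ℝ) ≤ 1 / |(q:ℝ) * FGBa - pZ| + 1 := by positivity
      exact mul_le_mul hb hqQ hq0'.le (by positivity)
    have h2' : ((Q:ℝ)^ρ/c + 1) * Q = (Q:ℝ)^(ρ+1)/c + Q := by
      rw [← hQρ]; ring
    have h3 : (Q:ℝ)^(ρ+1)/c ≤ t/4 := by
      rw [div_le_iff₀ hc]
      calc (Q:ℝ)^(ρ+1) ≤ y^(ρ+1) := hQy_pow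
        _ = c * t / 4 := hy_pow
        _ = t/4 * c := by ring
    have h4 : (Q:ℝ) ≤ t/4 := le_trans hQy hyt
    linarith
  obtain ⟨j, k, hjk1, hjk2⟩ := FGB_hit q hq0 pZ hθ0 habs'
    (le_trans habs' (by rw [div_le_one hQ0']; exact_mod_cast hQ0)) htcond
  set E : ℕ := 2 ^ j * 3 ^ k with hEdef
  have hE : FGBP E := ⟨j, k, rfl⟩
  have hE0 : (0:ℝ) < E := by exact_mod_cast FGBP_pos hE
  have hlogE : Real.log E = ((j:ℝ) * FGBa + k) * Real.log 3 := by
    rw [hEdef, FGB_logrep]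
    have h : FGBa * Real.log 3 = Real.log 2 := div_mul_cancel₀ _ hL3.ne'
    rw [← h]; ring
  have hNE : N < E := by
    have h1 : Real.log N < Real.log E := by
      rw [hlogE, hlogN]
      exact mul_lt_mul_of_pos_right hjk1 hL3
    have h2 : (N:ℝ) < E := (Real.log_lt_log_iff hN0' hE0).1 h1
    exact_mod_cast h2
  have hME : (M:ℝ) ≤ E := by exact_mod_cast hnext E hE hNE
  have hEbound : (E:ℝ) ≤ N * Real.exp (Real.log 3 / Q) := by
    have h1 : Real.log E ≤ t * Real.log 3 + Real.log 3 / Q := by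
      rw [hlogE]
      calc ((j:ℝ) * FGBa + k) * Real.log 3 ≤ (t + 1/Q) * Real.log 3 :=
            mul_le_mul_of_nonneg_right hjk2 hL3.le
        _ = t * Real.log 3 + Real.log 3 / Q := by ring
    calc (E:ℝ) = Real.exp (Real.log E) := (Real.exp_log hE0).symm
      _ ≤ Real.exp (t * Real.log 3 + Real.log 3 / Q) := Real.exp_le_exp.2 h1
      _ = Real.exp (t * Real.log 3) * Real.exp (Real.log 3 / Q) := Real.exp_add _ _
      _ = N * Real.exp (Real.log 3 / Q) := by rw [← hlogN, Real.exp_log hN0']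
  have hgap : ((M:ℝ) - N) / N ≤ Real.exp (Real.log 3 / Q) - 1 := by
    rw [div_le_iff₀ hN0']
    have h := le_trans hME hEbound
    calc (M:ℝ) - N ≤ N * Real.exp (Real.log 3 / Q) - N := by linarith
      _ = (Real.exp (Real.log 3 / Q) - 1) * N := by ring
  have hexp : Real.exp (Real.log 3 / Q) - 1 ≤ 6 / Q := by
    set z : ℝ := Real.log 3 / Q with hzdef
    have hz0 : 0 ≤ z := by positivity
    have hzL3 : z ≤ Real.log 3 := by
      rw [hzdef, div_le_iff₀ hQ0']
      have h1Q : (1:ℝ) ≤ Q := by exact_mod_cast hQ0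
      nlinarith [hL3]
    have hez : Real.exp z ≤ 3 := by
      calc Real.exp z ≤ Real.exp (Real.log 3) := Real.exp_le_exp.2 hzL3
        _ = 3 := Real.exp_log (by norm_num)
    have h1 : 1 - z ≤ Real.exp (-z) := by
      have := Real.add_one_le_exp (-z); linarith
    have h2 : (1 - z) * Real.exp z ≤ 1 := by
      rw [Real.exp_neg] at h1
      calc (1 - z) * Real.exp z ≤ (Real.exp z)⁻¹ * Real.exp z :=
            mul_le_mul_of_nonneg_right h1 (Real.exp_pos z).le
        _ = 1 := inv_mul_cancel₀ (Real.exp_pos z).ne'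
    have h3 : Real.exp z - 1 ≤ z * Real.exp z := by linarith [h2]
    have h4 : z * Real.exp z ≤ z * 3 := mul_le_mul_of_nonneg_left hez hz0
    have h5 : 3 * z ≤ 6 / Q := by
      have heq : 3 * z = (3 * Real.log 3) / Q := by rw [hzdef]; ring
      rw [heq]
      gcongr
      linarith
    linarith
  have h6Q : 6 / (Q:ℝ) ≤ 12 / y := by
    rw [div_le_div_iff₀ hQ0' hy0]
    linarith
  have hyeq : 12 / y = 12 * (4 * Real.log 3 / c) ^ (1/(ρ+1)) / (Real.log N) ^ (1/(ρ+1)) := by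
    have hA0 : (0:ℝ) < c / (4 * Real.log 3) := by positivity
    have hct_eq : c * t / 4 = (c / (4 * Real.log 3)) * Real.log N := by
      rw [hlogN, htdef]; field_simp
    have hy_eq2 : y = (c / (4 * Real.log 3)) ^ (1/(ρ+1)) * (Real.log N) ^ (1/(ρ+1)) := by
      rw [hydef, hct_eq, Real.mul_rpow hA0.le hlogN0.le]
    have hinv : (4 * Real.log 3 / c) ^ (1/(ρ+1))
        = ((c / (4 * Real.log 3)) ^ (1/(ρ+1)))⁻¹ := by
      rw [← Real.inv_rpow hA0.le]
      congr 1
      field_simp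
    rw [hy_eq2, hinv]
    have hp1 : (0:ℝ) < (c / (4 * Real.log 3)) ^ (1/(ρ+1)) := Real.rpow_pos_of_pos hA0 _
    have hp2 : (0:ℝ) < (Real.log N) ^ (1/(ρ+1)) := Real.rpow_pos_of_pos hlogN0 _
    field_simp
  rw [← hyeq]
  linarith


set_option maxHeartbeats 1000000 in
/-- **Gap estimates for the Furstenberg sequence (Tijdeman-type, explicit exponents).**
If `α = log 2 / log 3` is `ρ`-diophantine, and `s_0 < s_1 < ⋯` enumerates the
Furstenberg set `S = {2^j 3^k}` in increasing order, then there are constants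
`c', C' > 0` such that for all sufficiently large `n`:
`c'/(log s_n)^ρ ≤ (s_{n+1} - s_n)/s_n ≤ C'/(log s_n)^{1/(ρ+1)}`. -/
theorem furstenberg_gap_bounds (ρ : ℝ) (hρ : 0 < ρ) (c : ℝ) (hc : 0 < c)
    (hdio : ∀ n : ℕ, 0 < n →
      c * (n : ℝ) ^ (-ρ) ≤
        |(n : ℝ) * (Real.log 2 / Real.log 3) -
          round ((n : ℝ) * (Real.log 2 / Real.log 3))|) :
    ∃ c' > (0 : ℝ), ∃ C' > (0 : ℝ), ∀ᶠ n : ℕ in atTop,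
      c' / (Real.log (Nat.nth (fun m : ℕ => ∃ j k : ℕ, m = 2 ^ j * 3 ^ k) n)) ^ ρ
          ≤ ((Nat.nth (fun m : ℕ => ∃ j k : ℕ, m = 2 ^ j * 3 ^ k) (n + 1) : ℝ)
              - (Nat.nth (fun m : ℕ => ∃ j k : ℕ, m = 2 ^ j * 3 ^ k) n : ℝ))
            / (Nat.nth (fun m : ℕ => ∃ j k : ℕ, m = 2 ^ j * 3 ^ k) n : ℝ)
      ∧ ((Nat.nth (fun m : ℕ => ∃ j k : ℕ, m = 2 ^ j * 3 ^ k) (n + 1) : ℝ)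
              - (Nat.nth (fun m : ℕ => ∃ j k : ℕ, m = 2 ^ j * 3 ^ k) n : ℝ))
            / (Nat.nth (fun m : ℕ => ∃ j k : ℕ, m = 2 ^ j * 3 ^ k) n : ℝ)
          ≤ C' / (Real.log (Nat.nth (fun m : ℕ => ∃ j k : ℕ, m = 2 ^ j * 3 ^ k) n))
              ^ (1 / (ρ + 1)) := by
  have hP : (fun m : ℕ => ∃ j k : ℕ, m = 2 ^ j * 3 ^ k) = FGBP := rfl
  rw [hP]
  have hL2 := FGB_log2_pos
  have hL3 := FGB_log3_pos
  have hdio' : ∀ q : ℕ, 0 < q → ∀ p : ℤ, c * (q:ℝ) ^ (-ρ) ≤ |(q:ℝ) * FGBa - p| := by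
    intro q hq p
    exact le_trans (hdio q hq) (round_le ((q:ℝ) * FGBa) p)
  refine ⟨c * Real.log 3 * (2 / Real.log 2) ^ (-ρ),
    mul_pos (mul_pos hc hL3) (Real.rpow_pos_of_pos (div_pos two_pos hL2) _),
    12 * (4 * Real.log 3 / c) ^ (1/(ρ+1)),
    mul_pos (by norm_num)
      (Real.rpow_pos_of_pos (div_pos (by positivity) hc) _), ?_⟩
  set T : ℝ := max 8 (max (4 * (2:ℝ)^(ρ+1) / c) (4 * (max 1 c) ^ (1/ρ))) with hTdef
  have htendN : Tendsto (Nat.nth FGBP) atTop atTop :=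
    (Nat.nth_strictMono FGBP_inf).tendsto_atTop
  have htend : Tendsto (fun n => Real.log (Nat.nth FGBP n)) atTop atTop :=
    Real.tendsto_log_atTop.comp (tendsto_natCast_atTop_atTop.comp htendN)
  filter_upwards [htend.eventually_ge_atTop (max 1 (Real.log 3 * T))] with n hn
  set N : ℕ := Nat.nth FGBP n with hNdef
  set M : ℕ := Nat.nth FGBP (n+1) with hMdef
  have hN : FGBP N := Nat.nth_mem_of_infinite FGBP_inf n
  have hM : FGBP M := Nat.nth_mem_of_infinite FGBP_inf (n+1)
  have hNM : N < M := (Nat.nth_lt_nth FGBP_inf).2 (Nat.lt_succ_self n)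
  have hN0 : 0 < N := FGBP_pos hN
  have hM2 : M ≤ 2 * N := by
    obtain ⟨j, k, he⟩ := hN
    have h2N : FGBP (2 * N) := ⟨j + 1, k, by rw [he]; ring⟩
    exact FGBP_next h2N (by omega)
  have hlog1 : 1 ≤ Real.log N := le_trans (le_max_left _ _) hn
  have hlogT : Real.log 3 * T ≤ Real.log N := le_trans (le_max_right _ _) hn
  have hlogN0 : 0 < Real.log N := by linarith
  set t : ℝ := Real.log N / Real.log 3 with htdef
  have htT : T ≤ t := (le_div_iff₀ hL3).2 (by linarith)
  have h8 : 8 ≤ t := le_trans (le_max_left _ _) htT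
  have hX : 4 * (2:ℝ)^(ρ+1) / c ≤ t :=
    le_trans (le_trans (le_max_left _ _) (le_max_right _ _)) htT
  have hY : 4 * (max 1 c) ^ (1/ρ) ≤ t :=
    le_trans (le_trans (le_max_right _ _) (le_max_right _ _)) htT
  have h2cond : (2:ℝ)^(ρ+1) ≤ c * t / 4 := by
    have h := (div_le_iff₀ hc).1 hX
    linarith
  have hcρcond : c ≤ (t/4) ^ ρ := by
    have hmax0 : (0:ℝ) < max 1 c := lt_of_lt_of_le one_pos (le_max_left _ _)
    have hb0 : (0:ℝ) < (max 1 c) ^ (1/ρ) := Real.rpow_pos_of_pos hmax0 _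
    have hb : (max 1 c) ^ (1/ρ) ≤ t/4 := by linarith
    have h1 : ((max 1 c) ^ (1/ρ)) ^ ρ ≤ (t/4) ^ ρ :=
      Real.rpow_le_rpow hb0.le hb hρ.le
    rw [← Real.rpow_mul hmax0.le, one_div_mul_cancel hρ.ne', Real.rpow_one] at h1
    exact le_trans (le_max_right 1 c) h1
  constructor
  · -- lower bound
    have hlow := FGB_lower ρ c hρ hc hdio' hN hM hNM hM2 hlog1
    rw [div_eq_mul_inv, ← Real.rpow_neg hlogN0.le]
    exact hlow
  · -- upper bound
    have hup := FGB_upper ρ c hρ hc hdio' hN0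
      (fun E hE hlt => FGBP_next hE hlt) h8 h2cond hcρcond
    exact hup
end

section
/- Let s_1 = 1 < s_2 < ⋯ enumerate the Furstenberg set S in increasing order. Then there are infinitely many indices n such that (s_{n+1} − s_n)/s_n ≤ (2 log 2 · log 3)/log s_n. -/
open Real Filter

private def Pf (m : ℕ) : Prop := ∃ j k : ℕ, m = 2 ^ j * 3 ^ k

lemma Pf_infinite : (setOf Pf).Infinite :=
  Set.infinite_of_injective_forall_mem
    (f := fun j : ℕ => 2 ^ j)
    (fun a b h => Nat.pow_right_injective (by norm_num) h)
    (fun j => ⟨j, 0, by simp⟩)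

lemma irrational_log3_div_log2 : Irrational (Real.log 3 / Real.log 2) := by
  rintro ⟨r, hr⟩
  have h2 : (0:ℝ) < Real.log 2 := Real.log_pos (by norm_num)
  have h3 : (0:ℝ) < Real.log 3 := Real.log_pos (by norm_num)
  have hrpos : (0:ℚ) < r := by
    have : (0:ℝ) < (r:ℝ) := hr ▸ div_pos h3 h2
    exact_mod_cast this
  have hnum : 0 < r.num := Rat.num_pos.mpr hrpos
  set n : ℕ := r.num.toNat with hn
  have hn1 : 1 ≤ n := by omega
  have hrn : (r:ℝ) = (n : ℝ) / (r.den : ℝ) := by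
    rw [Rat.cast_def]; congr 1
    rw [hn]; exact_mod_cast congrArg Int.cast (Int.toNat_of_nonneg hnum.le).symm
  have hden : (0:ℝ) < (r.den : ℝ) := by positivity
  have key : (n : ℝ) * Real.log 2 = (r.den : ℝ) * Real.log 3 := by
    have : (n : ℝ) / (r.den : ℝ) = Real.log 3 / Real.log 2 := by rw [← hrn]; exact hr
    field_simp at this
    linarith [this]
  have hlogs : Real.log ((2:ℝ) ^ n) = Real.log ((3:ℝ) ^ r.den) := by
    rw [Real.log_pow, Real.log_pow]; exact_mod_cast key
  have hpow : (2:ℝ) ^ n = (3:ℝ) ^ r.den := by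
    have e1 : (0:ℝ) < (2:ℝ) ^ n := by positivity
    have e2 : (0:ℝ) < (3:ℝ) ^ r.den := by positivity
    rw [← Real.exp_log e1, ← Real.exp_log e2, hlogs]
  have hnatpow : (2:ℕ) ^ n = 3 ^ r.den := by exact_mod_cast hpow
  have heven : Even ((2:ℕ) ^ n) := (Nat.even_pow).mpr ⟨even_two, by omega⟩
  have hodd : Odd ((3:ℕ) ^ r.den) := Odd.pow (by decide)
  rw [hnatpow] at heven
  simp [Nat.even_iff, Nat.odd_iff] at heven hodd; omega

lemma crux {A B : ℕ} (hA : 2 ≤ A) (hAB : A ≤ B) {k : ℕ} (hk2 : 2 ≤ k)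
    (hlA : Real.log A ≤ (k : ℝ) * Real.log 3)
    (hd : Real.log B - Real.log A < Real.log 2 / k) :
    ((B:ℝ) - A)/A ≤ 2 * Real.log 2 * Real.log 3 / Real.log A := by
  have h2 : (0:ℝ) < Real.log 2 := Real.log_pos (by norm_num)
  have h3 : (0:ℝ) < Real.log 3 := Real.log_pos (by norm_num)
  have hk0 : (0:ℝ) < (k:ℝ) := by positivity
  have hA0 : (0:ℝ) < (A:ℝ) := by exact_mod_cast (by omega : 0 < A)
  have hB0 : (0:ℝ) < (B:ℝ) := lt_of_lt_of_le hA0 (by exact_mod_cast hAB)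
  have hlA0 : (0:ℝ) < Real.log A :=
    Real.log_pos (by exact_mod_cast (by omega : 1 < A))
  set t : ℝ := Real.log B - Real.log A with hts
  have ht0 : 0 ≤ t := by
    have : Real.log A ≤ Real.log B := Real.log_le_log hA0 (by exact_mod_cast hAB)
    simp [hts]; linarith
  have hlog2lt : Real.log 2 < 1 := by
    have := Real.log_two_lt_d9; linarith
  have htk : t < Real.log 2 / k := hd
  have ht2 : t ≤ 1/2 := by
    have hk2' : (2:ℝ) ≤ (k:ℝ) := by exact_mod_cast hk2
    have : Real.log 2 / (k:ℝ) ≤ Real.log 2 / 2 := by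
      apply div_le_div_of_nonneg_left h2.le (by norm_num) hk2'
    nlinarith
  have hexp : Real.exp t ≤ 1 + 2*t := by
    have e1 := Real.add_one_le_exp (-t)
    rw [Real.exp_neg] at e1
    have e2 : (1 - t) * Real.exp t ≤ 1 := by
      have := mul_le_mul_of_nonneg_right e1 (Real.exp_pos t).le
      rwa [inv_mul_cancel₀ (Real.exp_pos t).ne', show -t + 1 = 1 - t by ring] at this
    nlinarith [Real.exp_pos t]
  have hBA : (B:ℝ) = A * Real.exp t := by
    rw [hts, Real.exp_sub, Real.exp_log hB0, Real.exp_log hA0]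
    field_simp
  have step1 : ((B:ℝ) - A)/A ≤ 2*t := by
    rw [div_le_iff₀ hA0]
    nlinarith
  have step2 : (2:ℝ)*t ≤ 2*Real.log 2/k := by
    rw [mul_div_assoc]; linarith
  have step3 : (2:ℝ)*Real.log 2/k = 2*Real.log 2*Real.log 3/((k:ℝ)*Real.log 3) := by
    field_simp
  have step4 : 2*Real.log 2*Real.log 3/((k:ℝ)*Real.log 3)
      ≤ 2*Real.log 2*Real.log 3/Real.log A := by
    apply div_le_div_of_nonneg_left (by positivity) hlA0 hlA
  linarith

lemma finite_bounded_rats (K : ℕ) : {q : ℚ | q.den ≤ K ∧ |q| ≤ 3}.Finite := by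
  have hfin : (Set.Icc (-(3*(K:ℤ))) (3*(K:ℤ)) ×ˢ Set.Iic K).Finite :=
    (Set.finite_Icc _ _).prod (Set.finite_Iic _)
  apply Set.Finite.of_finite_image (f := fun q : ℚ => (q.num, q.den)) ?_ ?_
  · apply hfin.subset
    rintro ⟨nn, dd⟩ ⟨q, ⟨hd, hq⟩, h⟩
    obtain ⟨rfl, rfl⟩ : q.num = nn ∧ q.den = dd := by
      simpa [Prod.ext_iff] using h
    refine ⟨?_, hd⟩
    have hq0 : (0:ℚ) < (q.den : ℚ) := by exact_mod_cast q.pos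
    have h1 : (q.num : ℚ) = q * q.den := by
      have e := Rat.num_div_den q
      rw [div_eq_iff (ne_of_gt hq0)] at e
      exact e
    have h2 : |(q.num : ℚ)| ≤ 3 * K := by
      rw [h1, abs_mul, abs_of_pos hq0]
      calc |q| * (q.den : ℚ) ≤ 3 * (q.den : ℚ) := by
            apply mul_le_mul_of_nonneg_right hq hq0.le
        _ ≤ 3 * K := by
            have : (q.den : ℚ) ≤ (K : ℚ) := by exact_mod_cast hd
            linarith
    have h3 : |q.num| ≤ 3 * (K : ℤ) := by exact_mod_cast h2
    simpa [Set.mem_Icc] using abs_le.mp h3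
  · intro q _ q' _ h
    simp only [Prod.ext_iff] at h
    exact Rat.ext h.1 h.2

lemma exists_good_rat (K : ℕ) :
    ∃ q : ℚ, |Real.log 3 / Real.log 2 - (q:ℝ)| < 1/((q.den:ℝ))^2 ∧ K < q.den := by
  set α := Real.log 3 / Real.log 2 with hα
  have hT := Real.infinite_rat_abs_sub_lt_one_div_den_sq_of_irrational irrational_log3_div_log2
  by_contra hcon
  push_neg at hcon
  apply hT
  apply (finite_bounded_rats K).subset
  intro q hq
  have hden := hcon q hq
  refine ⟨hden, ?_⟩
  -- |q| ≤ 3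
  have h2 : (0:ℝ) < Real.log 2 := Real.log_pos (by norm_num)
  have hα2 : α < 2 := by
    rw [hα, div_lt_iff₀ h2]
    have : Real.log 3 < Real.log 4 := Real.log_lt_log (by norm_num) (by norm_num)
    have h4 : Real.log 4 = 2 * Real.log 2 := by
      rw [show (4:ℝ) = 2^2 by norm_num, Real.log_pow]; push_cast; ring
    linarith
  have hα0 : 0 < α := by
    have h3 : (0:ℝ) < Real.log 3 := Real.log_pos (by norm_num)
    exact div_pos h3 h2
  have hd1 : (1:ℝ) ≤ (q.den : ℝ) := by exact_mod_cast q.pos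
  have hqr : |α - (q:ℝ)| < 1 := by
    refine lt_of_lt_of_le hq ?_
    rw [div_le_one (by positivity)]
    nlinarith
  have : |(q:ℝ)| ≤ 3 := by
    have := abs_sub_abs_le_abs_sub (q:ℝ) α
    rw [abs_sub_comm] at hqr
    have hαabs : |α| < 2 := abs_lt.mpr ⟨by linarith, hα2⟩
    linarith
  exact_mod_cast this

lemma exists_pair (M : ℕ) : ∃ a b : ℕ, Pf a ∧ Pf b ∧ M ≤ a ∧ a < b ∧
    ((b:ℝ) - a)/a ≤ 2 * Real.log 2 * Real.log 3 / Real.log a := by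
  obtain ⟨q, hq, hden⟩ := exists_good_rat (max M 2)
  have h2 : (0:ℝ) < Real.log 2 := Real.log_pos (by norm_num)
  have h3 : (0:ℝ) < Real.log 3 := Real.log_pos (by norm_num)
  set α := Real.log 3 / Real.log 2 with hαdef
  set k := q.den with hkdef
  have hk2 : 2 ≤ k := le_trans (le_max_right M 2) hden.le
  have hkM : M < k := lt_of_le_of_lt (le_max_left M 2) hden
  have hk0 : (0:ℝ) < (k:ℝ) := by positivity
  have hk2r : (2:ℝ) ≤ (k:ℝ) := by exact_mod_cast hk2
  have hα32 : (3:ℝ)/2 ≤ α := by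
    rw [hαdef, le_div_iff₀ h2]
    have h89 : Real.log 8 ≤ Real.log 9 := Real.log_le_log (by norm_num) (by norm_num)
    have e8 : Real.log 8 = 3 * Real.log 2 := by
      rw [show (8:ℝ) = 2^3 by norm_num, Real.log_pow]; push_cast; ring
    have e9 : Real.log 9 = 2 * Real.log 3 := by
      rw [show (9:ℝ) = 3^2 by norm_num, Real.log_pow]; push_cast; ring
    nlinarith
  have hq' := abs_lt.mp hq
  have hk2inv : 1/((k:ℝ))^2 ≤ 1/2 := by
    rw [div_le_div_iff₀ (by positivity) (by norm_num)]
    nlinarith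
  have hqpos : 0 < q := by
    have : (0:ℝ) < (q:ℝ) := by nlinarith [hq'.2]
    exact_mod_cast this
  set J : ℕ := q.num.toNat with hJdef
  have hJnum : (J:ℤ) = q.num := Int.toNat_of_nonneg (Rat.num_pos.mpr hqpos).le
  have hqJk : (q:ℝ) = (J:ℝ)/(k:ℝ) := by
    have hc : ((q.num:ℤ):ℝ) = (J:ℝ) := by exact_mod_cast hJnum.symm
    rw [Rat.cast_def, ← hc]
  have hJk : k ≤ J := by
    have hJr : (k:ℝ) ≤ (J:ℝ) := by
      have hqk : (J:ℝ) = (q:ℝ) * k := by rw [hqJk]; field_simp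
      nlinarith [hq'.2]
    exact_mod_cast hJr
  have habs : |(k:ℝ) * Real.log 3 - (J:ℝ) * Real.log 2| < Real.log 2 / k := by
    have hmul := mul_lt_mul_of_pos_left hq (show (0:ℝ) < (k:ℝ) * Real.log 2 by positivity)
    have lhs_eq : (k:ℝ) * Real.log 2 * |α - (q:ℝ)|
        = |(k:ℝ) * Real.log 3 - (J:ℝ) * Real.log 2| := by
      rw [← abs_of_pos (show (0:ℝ) < (k:ℝ) * Real.log 2 by positivity), ← abs_mul]
      congr 1
      rw [hqJk, hαdef]
      field_simp
    have rhs_eq : (k:ℝ) * Real.log 2 * (1/((k:ℝ))^2) = Real.log 2 / (k:ℝ) := by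
      field_simp
    rw [lhs_eq, rhs_eq] at hmul
    exact hmul
  set A : ℕ := 2 ^ J with hAdef
  set B : ℕ := 3 ^ k with hBdef
  have lA : Real.log (A:ℝ) = (J:ℝ) * Real.log 2 := by
    rw [show ((A:ℕ):ℝ) = (2:ℝ)^J by rw [hAdef]; push_cast; ring, Real.log_pow]
  have lB : Real.log (B:ℝ) = (k:ℝ) * Real.log 3 := by
    rw [show ((B:ℕ):ℝ) = (3:ℝ)^k by rw [hBdef]; push_cast; ring, Real.log_pow]
  have hPA : Pf A := ⟨J, 0, by simp [hAdef]⟩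
  have hPB : Pf B := ⟨0, k, by simp [hBdef]⟩
  have hne : A ≠ B := by
    intro h
    have heven : Even A := by
      rw [hAdef]; exact (Nat.even_pow).mpr ⟨even_two, by omega⟩
    have hodd : Odd B := by
      rw [hBdef]; exact Odd.pow (by decide)
    rw [h] at heven
    simp [Nat.even_iff, Nat.odd_iff] at heven hodd
    omega
  have hMk : M < 2^k := lt_trans hkM (Nat.lt_two_pow_self (n := k))
  rcases le_total A B with hAB | hBA
  · refine ⟨A, B, hPA, hPB, ?_, lt_of_le_of_ne hAB hne, ?_⟩
    · have : 2^k ≤ A := by rw [hAdef]; exact Nat.pow_le_pow_right (by norm_num) hJk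
      omega
    · apply crux (by rw [hAdef]; calc 2 = 2^1 := rfl
          _ ≤ 2^J := Nat.pow_le_pow_right (by norm_num) (by omega)) hAB hk2
      · rw [← lB]
        exact Real.log_le_log (by positivity) (by exact_mod_cast hAB)
      · rw [lA, lB]
        calc (k:ℝ) * Real.log 3 - (J:ℝ) * Real.log 2
            ≤ |(k:ℝ) * Real.log 3 - (J:ℝ) * Real.log 2| := le_abs_self _
          _ < Real.log 2 / k := habs
  · refine ⟨B, A, hPB, hPA, ?_, lt_of_le_of_ne hBA (Ne.symm hne), ?_⟩
    · have : 2^k ≤ B := by rw [hBdef]; exact Nat.pow_le_pow_left (by norm_num) k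
      omega
    · apply crux (by rw [hBdef]; calc 2 = 2^1 := rfl
          _ ≤ 3^k := le_trans (Nat.pow_le_pow_right (by norm_num) (by omega))
              (Nat.pow_le_pow_left (by norm_num) k)) hBA hk2
      · rw [lB]
      · rw [lA, lB]
        calc (J:ℝ) * Real.log 2 - (k:ℝ) * Real.log 3
            ≤ |(k:ℝ) * Real.log 3 - (J:ℝ) * Real.log 2| := by
              rw [abs_sub_comm]; exact le_abs_self _
          _ < Real.log 2 / k := habs

/-- **Small gaps in the Furstenberg sequence.**
If `s_0 < s_1 < ⋯` enumerates the Furstenberg set `S = {2^j 3^k}` in increasing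
order, then for infinitely many indices `n` one has
`(s_{n+1} - s_n)/s_n ≤ (2 log 2 · log 3)/log s_n`. -/
theorem furstenberg_small_gaps :
    ∀ N : ℕ, ∃ n : ℕ, N ≤ n ∧
      ((Nat.nth (fun m : ℕ => ∃ j k : ℕ, m = 2 ^ j * 3 ^ k) (n + 1) : ℝ)
          - (Nat.nth (fun m : ℕ => ∃ j k : ℕ, m = 2 ^ j * 3 ^ k) n : ℝ))
        / (Nat.nth (fun m : ℕ => ∃ j k : ℕ, m = 2 ^ j * 3 ^ k) n : ℝ)
      ≤ 2 * Real.log 2 * Real.log 3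
        / Real.log (Nat.nth (fun m : ℕ => ∃ j k : ℕ, m = 2 ^ j * 3 ^ k) n) := by
  intro N
  classical
  obtain ⟨a, b, ha, hb, haM, hab, hineq⟩ := exists_pair (Nat.nth Pf N)
  set n := Nat.count Pf a with hndef
  have hna : Nat.nth Pf n = a := Nat.nth_count ha
  have hn : N ≤ n := by
    refine (Nat.nth_le_nth Pf_infinite).mp ?_
    rw [hna]; exact haM
  have hb' : Nat.nth Pf (n+1) ≤ b := by
    have h1 : Nat.count Pf (a+1) ≤ Nat.count Pf b := Nat.count_monotone Pf (by omega)
    have h2 : Nat.count Pf (a+1) = n + 1 := by rw [Nat.count_succ, if_pos ha]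
    calc Nat.nth Pf (n+1) ≤ Nat.nth Pf (Nat.count Pf b) :=
          (Nat.nth_le_nth Pf_infinite).mpr (by omega)
      _ = b := Nat.nth_count hb
  have ha0 : (0:ℝ) < (a:ℝ) := by
    obtain ⟨j, k', rfl⟩ := ha
    positivity
  refine ⟨n, hn, ?_⟩
  show ((Nat.nth Pf (n+1) : ℝ) - (Nat.nth Pf n : ℝ)) / (Nat.nth Pf n : ℝ)
      ≤ 2 * Real.log 2 * Real.log 3 / Real.log (Nat.nth Pf n)
  rw [hna]
  refine le_trans ?_ hineq
  gcongr
end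

section
/- (Davenport–Erdős–LeVêque criterion.) Let (Ω, 𝒜, μ) be a probability space, and let (X_n) be a sequence of complex-valued random variables with |X_n| ≤ 1 for all n. Let A_n = (1/n) ∑_{j=1}^n X_j. If ∑_{n=1}^∞ (1/n) ∫_Ω |A_n|² dμ < ∞, then A_n → 0 μ-almost everywhere. -/
open Real Filter MeasureTheory

lemma det_lemma (a : ℕ → ℝ) (ha0 : ∀ n, 0 ≤ a n) (ha1 : ∀ n, a n ≤ 1)
    (hlip : ∀ m n : ℕ, 1 ≤ m → m ≤ n → a m ≤ a n + 2 * ((n : ℝ) - m) / n)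
    (hs : Summable (fun n : ℕ => a n ^ 2 / n)) :
    Tendsto a atTop (nhds 0) := by
  have key : ∀ ε : ℝ, 0 < ε → ε ≤ 1 → ∀ᶠ n in atTop, a n < ε := by
    intro ε hε hε1
    by_contra hcon
    rw [Filter.not_eventually] at hcon
    have hcon' : ∃ᶠ n in atTop, ε ≤ a n := hcon.mono (fun n hn => le_of_not_gt hn)
    set δ : ℝ := ε ^ 3 / 64 with hδdef
    have hδ : 0 < δ := by positivity
    obtain ⟨s, hs'⟩ := summable_iff_vanishing.mp hs (Set.Iio δ)
      (Iio_mem_nhds hδ)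
    set N0 : ℕ := max (s.sup id + 1) ⌈8 / ε⌉₊ with hN0
    obtain ⟨N, hNa, hNN0⟩ := (hcon'.and_eventually (eventually_ge_atTop N0)).exists
    -- basic facts about N
    have hN8 : (8 : ℝ) / ε ≤ N := le_trans (Nat.le_ceil _)
      (by exact_mod_cast le_trans (le_max_right _ _) hNN0)
    have hNs : s.sup id + 1 ≤ N := le_trans (le_max_left _ _) hNN0
    have hN1 : 1 ≤ N := le_trans (Nat.le_add_left 1 _) hNs
    have hNpos : (0 : ℝ) < N := by exact_mod_cast hN1
    have hεN : 8 ≤ ε * N := by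
      rw [div_le_iff₀ hε] at hN8; linarith [hN8]
    set K : ℕ := ⌊ε * N / 4⌋₊ with hK
    have hK2 : (2 : ℝ) ≤ ε * N / 4 := by linarith
    have hKge : ε * N / 8 ≤ K := by
      have := Nat.sub_one_lt_floor (ε * N / 4)
      have h2 : ε * N / 4 - 1 ≤ (K : ℝ) := le_of_lt this
      linarith
    have hKle : (K : ℝ) ≤ ε * N / 4 := Nat.floor_le (by linarith)
    have hKleN : (K : ℝ) ≤ N := by nlinarith
    have hKpos : (0 : ℝ) < K := by linarith
    -- the finset t
    set t : Finset ℕ := Finset.Ico N (N + K) with ht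
    have hdisj : Disjoint t s := by
      rw [Finset.disjoint_left]
      intro n hn hns
      have h1 : N ≤ n := (Finset.mem_Ico.mp hn).1
      have h2 : n ≤ s.sup id := Finset.le_sup (f := id) hns
      omega
    have hsmall := hs' t hdisj
    -- lower bound for each term
    have hterm : ∀ n ∈ t, ε ^ 2 / 4 / (2 * N) ≤ a n ^ 2 / n := by
      intro n hn
      obtain ⟨hn1, hn2⟩ := Finset.mem_Ico.mp hn
      have hnN : (N : ℝ) ≤ n := by exact_mod_cast hn1
      have hnpos : (0 : ℝ) < n := lt_of_lt_of_le hNpos hnN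
      have hnK : (n : ℝ) < N + K := by exact_mod_cast hn2
      have hlipn := hlip N n hN1 hn1
      have hgap : 2 * ((n : ℝ) - N) / n ≤ ε / 2 := by
        rw [div_le_iff₀ hnpos]
        have : (n : ℝ) - N ≤ K := by linarith
        nlinarith
      have han : ε / 2 ≤ a n := by linarith [hNa]
      have h1 : ε ^ 2 / 4 ≤ a n ^ 2 := by nlinarith
      have h2 : (n : ℝ) ≤ 2 * N := by linarith
      rw [div_le_div_iff₀ (by linarith) hnpos]
      nlinarith [ha0 n]
    have hsum_lb : (K : ℝ) * (ε ^ 2 / 4 / (2 * N)) ≤ ∑ n ∈ t, a n ^ 2 / n := by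
      have := Finset.card_nsmul_le_sum t (fun n => a n ^ 2 / n) (ε ^ 2 / 4 / (2 * N)) hterm
      rwa [Nat.card_Ico, nsmul_eq_mul, Nat.add_sub_cancel_left] at this
    have hlt : ∑ n ∈ t, a n ^ 2 / n < δ := hsmall
    have hfinal : δ ≤ (K : ℝ) * (ε ^ 2 / 4 / (2 * N)) := by
      rw [hδdef]
      have : ε * N / 8 * (ε ^ 2 / 4 / (2 * N)) ≤ (K : ℝ) * (ε ^ 2 / 4 / (2 * N)) := by
        apply mul_le_mul_of_nonneg_right hKge; positivity
      calc ε ^ 3 / 64 = ε * N / 8 * (ε ^ 2 / 4 / (2 * N)) := by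
            field_simp; ring
        _ ≤ _ := this
    linarith
  rw [Metric.tendsto_atTop]
  intro ε hε
  have h := key (min ε 1) (lt_min hε one_pos) (min_le_right _ _)
  rw [eventually_atTop] at h
  obtain ⟨N, hN⟩ := h
  exact ⟨N, fun n hn => by
    rw [Real.dist_eq, sub_zero, abs_of_nonneg (ha0 n)]
    exact lt_of_lt_of_le (hN n hn) (min_le_left _ _)⟩

lemma avg_lip {Ω : Type*} (X : ℕ → Ω → ℂ) (hbd : ∀ n ω, ‖X n ω‖ ≤ 1) (ω : Ω)
    {m n : ℕ} (hm : 1 ≤ m) (hmn : m ≤ n) :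
    ‖(m : ℂ)⁻¹ * ∑ j ∈ Finset.range m, X j ω‖ ≤
      ‖(n : ℂ)⁻¹ * ∑ j ∈ Finset.range n, X j ω‖ + 2 * ((n : ℝ) - m) / n := by
  have hn1 : 1 ≤ n := le_trans hm hmn
  have hmR : (0 : ℝ) < m := by exact_mod_cast hm
  have hnR : (0 : ℝ) < n := by exact_mod_cast hn1
  set S : ℕ → ℂ := fun k => ∑ j ∈ Finset.range k, X j ω with hS
  have hSm : ‖S m‖ ≤ m := by
    calc ‖S m‖ ≤ ∑ j ∈ Finset.range m, ‖X j ω‖ := norm_sum_le _ _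
      _ ≤ ∑ j ∈ Finset.range m, 1 := Finset.sum_le_sum (fun j _ => hbd j ω)
      _ = m := by simp
  have hSnm : ‖S n - S m‖ ≤ (n : ℝ) - m := by
    have : S n - S m = ∑ j ∈ Finset.Ico m n, X j ω := by
      rw [hS]
      rw [Finset.sum_Ico_eq_sub _ hmn]
    rw [this]
    calc ‖∑ j ∈ Finset.Ico m n, X j ω‖ ≤ ∑ j ∈ Finset.Ico m n, ‖X j ω‖ := norm_sum_le _ _
      _ ≤ ∑ j ∈ Finset.Ico m n, 1 := Finset.sum_le_sum (fun j _ => hbd j ω)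
      _ = (n : ℝ) - m := by
          rw [Finset.sum_const, Nat.card_Ico, nsmul_eq_mul, mul_one]
          rw [Nat.cast_sub hmn]
  have hdec : (m : ℂ)⁻¹ * S m =
      (n : ℂ)⁻¹ * S n + ((m : ℂ)⁻¹ - (n : ℂ)⁻¹) * S m - (n : ℂ)⁻¹ * (S n - S m) := by
    ring
  have hcoef : ‖((m : ℂ)⁻¹ - (n : ℂ)⁻¹)‖ = (m : ℝ)⁻¹ - (n : ℝ)⁻¹ := by
    have : ((m : ℂ)⁻¹ - (n : ℂ)⁻¹) = (((m : ℝ)⁻¹ - (n : ℝ)⁻¹ : ℝ) : ℂ) := by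
      push_cast; ring
    have h2 : (n : ℝ)⁻¹ ≤ (m : ℝ)⁻¹ := by
      apply inv_anti₀ hmR; exact_mod_cast hmn
    rw [this, Complex.norm_real, Real.norm_of_nonneg (by linarith)]
  have hninv : ‖((n : ℂ)⁻¹)‖ = (n : ℝ)⁻¹ := by
    rw [norm_inv]
    simp
  calc ‖(m : ℂ)⁻¹ * S m‖
      ≤ ‖(n : ℂ)⁻¹ * S n‖ + ‖((m : ℂ)⁻¹ - (n : ℂ)⁻¹) * S m‖ + ‖(n : ℂ)⁻¹ * (S n - S m)‖ := by
        rw [hdec]; exact norm_sub_le_of_le (norm_add_le _ _) le_rfl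
    _ ≤ ‖(n : ℂ)⁻¹ * S n‖ + ((m : ℝ)⁻¹ - (n : ℝ)⁻¹) * m + (n : ℝ)⁻¹ * ((n : ℝ) - m) := by
        gcongr ?_ + ?_ + ?_
        · exact le_rfl
        · rw [norm_mul, hcoef]
          apply mul_le_mul_of_nonneg_left hSm
          have : (n : ℝ)⁻¹ ≤ (m : ℝ)⁻¹ := by
            apply inv_anti₀ hmR; exact_mod_cast hmn
          linarith
        · rw [norm_mul, hninv]
          apply mul_le_mul_of_nonneg_left hSnm (by positivity)
    _ = ‖(n : ℂ)⁻¹ * S n‖ + 2 * ((n : ℝ) - m) / n := by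
        field_simp; ring

/-- **Davenport–Erdős–LeVêque criterion.**
Let `(Ω, 𝒜, μ)` be a probability space and `(X_n)` complex random variables with
`|X_n| ≤ 1`. If the Cesàro averages `A_n = (1/n) ∑_{j<n} X_j` satisfy
`∑_n (1/n) ∫ |A_n|² dμ < ∞`, then `A_n → 0` `μ`-almost everywhere. -/
theorem davenport_erdos_leveque {Ω : Type*} [MeasurableSpace Ω]
    (μ : Measure Ω) [IsProbabilityMeasure μ] (X : ℕ → Ω → ℂ)
    (hmeas : ∀ n, AEStronglyMeasurable (X n) μ)
    (hbd : ∀ n ω, ‖X n ω‖ ≤ 1)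
    (hsum : Summable (fun n : ℕ =>
      (n : ℝ)⁻¹ * ∫ ω, ‖(n : ℂ)⁻¹ * ∑ j ∈ Finset.range n, X j ω‖ ^ 2 ∂μ)) :
    ∀ᵐ ω ∂μ, Tendsto (fun n : ℕ => (n : ℂ)⁻¹ * ∑ j ∈ Finset.range n, X j ω)
      atTop (nhds 0) := by
  set A : ℕ → Ω → ℂ := fun n ω => (n : ℂ)⁻¹ * ∑ j ∈ Finset.range n, X j ω with hA
  -- bound ‖A n ω‖ ≤ 1
  have hA1 : ∀ n ω, ‖A n ω‖ ≤ 1 := by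
    intro n ω
    rcases Nat.eq_zero_or_pos n with h0 | h1
    · simp [hA, h0]
    · have hn : (0 : ℝ) < n := by exact_mod_cast h1
      have : ‖∑ j ∈ Finset.range n, X j ω‖ ≤ n := by
        calc ‖∑ j ∈ Finset.range n, X j ω‖ ≤ ∑ j ∈ Finset.range n, ‖X j ω‖ :=
              norm_sum_le _ _
          _ ≤ ∑ j ∈ Finset.range n, 1 := Finset.sum_le_sum (fun j _ => hbd j ω)
          _ = n := by simp
      rw [hA, norm_mul, norm_inv]
      simp only [Complex.norm_natCast]
      rw [inv_mul_le_iff₀ hn, mul_one]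
      exact this
  -- measurability of A n
  have hAmeas : ∀ n, AEStronglyMeasurable (A n) μ := by
    intro n
    exact (Finset.aestronglyMeasurable_fun_sum _ (fun j _ => hmeas j)).const_mul _
  set f : ℕ → Ω → ℝ := fun n ω => (n : ℝ)⁻¹ * ‖A n ω‖ ^ 2 with hf
  have hfnn : ∀ n ω, 0 ≤ f n ω := fun n ω => by positivity
  have hfmeas : ∀ n, AEStronglyMeasurable (f n) μ := fun n =>
    (((hAmeas n).norm.pow 2).const_mul _)
  have hfint : ∀ n, Integrable (f n) μ := by
    intro n
    apply Integrable.mono' (integrable_const ((n : ℝ)⁻¹)) (hfmeas n)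
    filter_upwards with ω
    rw [Real.norm_of_nonneg (hfnn n ω), hf]
    have := hA1 n ω
    have h2 : ‖A n ω‖ ^ 2 ≤ 1 := by nlinarith [norm_nonneg (A n ω)]
    have h3 : (0:ℝ) ≤ (n:ℝ)⁻¹ := by positivity
    nlinarith
  have hfint_eq : ∀ n, ∫ ω, f n ω ∂μ =
      (n : ℝ)⁻¹ * ∫ ω, ‖A n ω‖ ^ 2 ∂μ := fun n => integral_const_mul _ _
  -- a.e. summability
  have hae : ∀ᵐ ω ∂μ, Summable (fun n => f n ω) := by
    have hmeas' : ∀ n, AEMeasurable (fun ω => ENNReal.ofReal (f n ω)) μ := fun n =>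
      ENNReal.measurable_ofReal.comp_aemeasurable (hfmeas n).aemeasurable
    have hlint : ∀ n, ∫⁻ ω, ENNReal.ofReal (f n ω) ∂μ =
        ENNReal.ofReal (∫ ω, f n ω ∂μ) := fun n =>
      (ofReal_integral_eq_lintegral_ofReal (hfint n)
        (Filter.Eventually.of_forall (hfnn n))).symm
    have hsum' : Summable (fun n => ∫ ω, f n ω ∂μ) := by
      apply hsum.congr
      intro n
      rw [hfint_eq n]
    have htop : ∫⁻ ω, ∑' n, ENNReal.ofReal (f n ω) ∂μ ≠ ⊤ := by
      rw [lintegral_tsum hmeas']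
      have : ∑' n, ∫⁻ ω, ENNReal.ofReal (f n ω) ∂μ
          = ENNReal.ofReal (∑' n, ∫ ω, f n ω ∂μ) := by
        rw [ENNReal.ofReal_tsum_of_nonneg
          (fun n => integral_nonneg (hfnn n)) hsum']
        exact tsum_congr hlint
      rw [this]
      exact ENNReal.ofReal_ne_top
    have := ae_lt_top' (AEMeasurable.ennreal_tsum hmeas') htop
    filter_upwards [this] with ω hω
    have hne : ∑' n, ENNReal.ofReal (f n ω) ≠ ⊤ := hω.ne
    have := ENNReal.summable_toReal hne
    apply this.congr
    intro n
    rw [ENNReal.toReal_ofReal (hfnn n ω)]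
  filter_upwards [hae] with ω hω
  rw [tendsto_zero_iff_norm_tendsto_zero]
  apply det_lemma (fun n => ‖A n ω‖) (fun n => norm_nonneg _) (fun n => hA1 n ω)
    (fun m n hm hmn => avg_lip X hbd ω hm hmn)
  apply hω.congr
  intro n
  rw [hf]
  ring
end

section
/- Suppose the Furstenberg sequence (s_n) is Hartman uniformly distributed, i.e. (1/N) ∑_{n=1}^N exp(2πi s_n x) → 0 for every x ∈ 𝕋 \ {0}. Then every atomless probability measure μ on 𝕋 = ℝ/ℤ that is invariant under both x ↦ 2x mod 1 and x ↦ 3x mod 1 is equal to the Haar (Lebesgue) measure on 𝕋. (In other words, Hartman uniform distribution of S would imply the Furstenberg ×2×3 conjecture.) -/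
open Real Filter MeasureTheory
open scoped NNReal ENNReal

section Aux

/-- Norm of a Fourier monomial value is one. -/
private lemma fourier_norm_one (k : ℤ) (x : AddCircle (1 : ℝ)) : ‖fourier k x‖ = 1 := by
  rw [fourier_apply]; exact Circle.norm_coe _

/-- Every continuous map on the circle is integrable w.r.t. a finite measure. -/
private lemma cm_integrable (ν : Measure (AddCircle (1 : ℝ))) [IsFiniteMeasure ν]
    (f : C(AddCircle (1 : ℝ), ℂ)) : Integrable f ν := by
  haveI : Fact ((0:ℝ) < 1) := ⟨one_pos⟩
  exact f.continuous.integrable_of_hasCompactSupport (HasCompactSupport.of_compactSpace _)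

/-- Pulling an `ℕ`-dilation inside a Fourier monomial. -/
private lemma fourier_nsmul_eq (q : ℕ) (m : ℤ) (x : AddCircle (1 : ℝ)) :
    fourier m (q • x) = fourier ((q : ℤ) * m) x := by
  rw [fourier_apply, fourier_apply, mul_comm, mul_smul, natCast_zsmul]

/-- Invariance of Fourier coefficients under an invariant dilation. -/
private lemma coeff_dilate (μ : Measure (AddCircle (1 : ℝ))) [IsProbabilityMeasure μ]
    (q : ℕ) (hq : μ.map (fun x : AddCircle (1 : ℝ) => q • x) = μ) (m : ℤ) :
    ∫ x, fourier ((q : ℤ) * m) x ∂μ = ∫ x, fourier m x ∂μ := by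
  haveI : Fact ((0:ℝ) < 1) := ⟨one_pos⟩
  conv_rhs => rw [← hq]
  have hg : Continuous (fun x : AddCircle (1 : ℝ) => q • x) := continuous_id.nsmul q
  rw [integral_map hg.aemeasurable (map_continuous (fourier m)).aestronglyMeasurable]
  exact integral_congr_ae (Filter.Eventually.of_forall fun x => (fourier_nsmul_eq q m x).symm)

/-- Invariance of Fourier coefficients under multiplication by `2^j * 3^k`. -/
private lemma coeff_pow (μ : Measure (AddCircle (1 : ℝ))) [IsProbabilityMeasure μ]
    (h2 : μ.map (fun x : AddCircle (1 : ℝ) => (2 : ℕ) • x) = μ)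
    (h3 : μ.map (fun x : AddCircle (1 : ℝ) => (3 : ℕ) • x) = μ)
    (j k : ℕ) (m : ℤ) :
    ∫ x, fourier (((2 ^ j * 3 ^ k : ℕ) : ℤ) * m) x ∂μ = ∫ x, fourier m x ∂μ := by
  induction j generalizing m with
  | zero =>
    induction k generalizing m with
    | zero => simp
    | succ k ih =>
      have h1 : ((2 ^ 0 * 3 ^ (k + 1) : ℕ) : ℤ) * m
          = ((3:ℕ) : ℤ) * (((2 ^ 0 * 3 ^ k : ℕ) : ℤ) * m) := by push_cast; ring
      rw [h1, coeff_dilate μ 3 h3, ih]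
  | succ j ih =>
    have h1 : ((2 ^ (j + 1) * 3 ^ k : ℕ) : ℤ) * m
        = ((2:ℕ) : ℤ) * (((2 ^ j * 3 ^ k : ℕ) : ℤ) * m) := by push_cast; ring
    rw [h1, coeff_dilate μ 2 h2, ih]

/-- The set of torsion points of a fixed nonzero order divisor is finite. -/
private lemma torsion_finite (m : ℤ) (hm : m ≠ 0) :
    {x : AddCircle (1 : ℝ) | m • x = 0}.Finite := by
  haveI : Fact ((0:ℝ) < 1) := ⟨one_pos⟩
  have hsub : {x : AddCircle (1 : ℝ) | m • x = 0}
      ⊆ ⋃ d ∈ (m.natAbs.divisors : Set ℕ), {x : AddCircle (1 : ℝ) | addOrderOf x = d} := by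
    intro x hx
    have hdvd : addOrderOf x ∣ m.natAbs :=
      Int.natCast_dvd_natCast.mp (Int.dvd_natAbs.mpr (addOrderOf_dvd_iff_zsmul_eq_zero.mpr hx))
    simp only [Set.mem_iUnion, Set.mem_setOf_eq]
    exact ⟨addOrderOf x, Nat.mem_divisors.mpr ⟨hdvd, Int.natAbs_ne_zero.mpr hm⟩, rfl⟩
  exact Set.Finite.subset
    (Set.Finite.biUnion (Finset.finite_toSet _) fun d hd =>
      AddCircle.finite_setOf_addOrderOf_eq (p := (1:ℝ)) (Nat.pos_of_mem_divisors (Finset.mem_coe.mp hd)))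
    hsub

/-- Integration against a probability measure is continuous on `C(𝕋, ℂ)`. -/
private lemma integral_cm_continuous (ν : Measure (AddCircle (1 : ℝ))) [IsProbabilityMeasure ν] :
    Continuous fun f : C(AddCircle (1 : ℝ), ℂ) => ∫ x, f x ∂ν := by
  haveI : Fact ((0:ℝ) < 1) := ⟨one_pos⟩
  refine (LipschitzWith.of_dist_le_mul (K := 1) fun f g => ?_).continuous
  rw [dist_eq_norm, ← integral_sub (cm_integrable ν f) (cm_integrable ν g)]
  have hb : ∀ x, ‖f x - g x‖ ≤ dist f g := fun x => by
    rw [← dist_eq_norm]; exact ContinuousMap.dist_apply_le_dist x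
  calc ‖∫ x, (f x - g x) ∂ν‖ ≤ dist f g * (ν Set.univ).toReal :=
        norm_integral_le_of_norm_le_const (Filter.Eventually.of_forall hb)
    _ = 1 * dist f g := by simp [measure_univ, mul_comm]

end Aux

/-- **Hartman uniform distribution of `S` would imply the Furstenberg ×2×3 conjecture.**
If the Furstenberg sequence `(s_n)` satisfies `(1/N) ∑_{n<N} e(s_n x) → 0` for every
`x ≠ 0` in `𝕋 = ℝ/ℤ`, then every atomless probability measure on `𝕋` invariant under
`x ↦ 2x` and `x ↦ 3x` equals the Haar (Lebesgue) measure. -/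
theorem hartman_implies_furstenberg_conjecture
    (hH : ∀ x : AddCircle (1 : ℝ), x ≠ 0 →
      Tendsto (fun N : ℕ => (N : ℂ)⁻¹ *
          ∑ n ∈ Finset.range N,
            fourier ((Nat.nth (fun m : ℕ => ∃ j k : ℕ, m = 2 ^ j * 3 ^ k) n : ℕ) : ℤ) x)
        atTop (nhds 0))
    (μ : Measure (AddCircle (1 : ℝ))) [IsProbabilityMeasure μ]
    (hcont : ∀ x : AddCircle (1 : ℝ), μ {x} = 0)
    (h2 : μ.map (fun x : AddCircle (1 : ℝ) => (2 : ℕ) • x) = μ)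
    (h3 : μ.map (fun x : AddCircle (1 : ℝ) => (3 : ℕ) • x) = μ) :
    μ = volume := by
  haveI : Fact ((0:ℝ) < 1) := ⟨one_pos⟩
  haveI : IsProbabilityMeasure (volume : Measure (AddCircle (1 : ℝ))) :=
    ⟨by simp [AddCircle.measure_univ]⟩
  set p : ℕ → Prop := fun m : ℕ => ∃ j k : ℕ, m = 2 ^ j * 3 ^ k with hp
  have hpinf : (setOf p).Infinite :=
    Set.infinite_of_injective_forall_mem (f := fun j : ℕ => 2 ^ j)
      (fun a b h => Nat.pow_right_injective (by norm_num) h) (fun j => ⟨j, 0, by simp⟩)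
  -- the n-th term of the sequence lies in S
  have hmem : ∀ n : ℕ, ∃ j k : ℕ, Nat.nth p n = 2 ^ j * 3 ^ k := fun n =>
    Nat.nth_mem_of_infinite hpinf n
  -- Fourier coefficients of μ are invariant under multiplication by elements of S
  have hcS : ∀ n : ℕ, ∀ m : ℤ,
      ∫ x, fourier ((Nat.nth p n : ℤ) * m) x ∂μ = ∫ x, fourier m x ∂μ := by
    intro n m
    obtain ⟨j, k, hjk⟩ := hmem n
    rw [hjk]
    exact coeff_pow μ h2 h3 j k m
  -- nonzero Fourier coefficients of μ vanish
  have hzero : ∀ m : ℤ, m ≠ 0 → ∫ x, fourier m x ∂μ = 0 := by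
    intro m hm
    set F : ℕ → AddCircle (1 : ℝ) → ℂ := fun N x =>
      (N : ℂ)⁻¹ * ∑ n ∈ Finset.range N, fourier ((Nat.nth p n : ℤ) * m) x with hF
    -- a.e. pointwise convergence to 0
    have hnull : μ {x : AddCircle (1 : ℝ) | m • x = 0} = 0 := by
      haveI : NullSingletonClass μ := ⟨hcont⟩
      exact ((torsion_finite m hm).countable).measure_zero μ
    have hae : ∀ᵐ x ∂μ, m • x ≠ 0 := by
      rw [ae_iff]
      simpa using hnull
    have hlim : ∀ᵐ x ∂μ, Tendsto (fun N => F N x) atTop (nhds 0) := by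
      filter_upwards [hae] with x hx
      have := hH (m • x) hx
      refine this.congr fun N => ?_
      congr 1
      refine Finset.sum_congr rfl fun n _ => ?_
      rw [fourier_apply, fourier_apply, mul_smul]
    -- uniform bound
    have hbound : ∀ N : ℕ, ∀ x, ‖F N x‖ ≤ 1 := by
      intro N x
      rcases Nat.eq_zero_or_pos N with h | h
      · simp [hF, h]
      · have hsum : ‖∑ n ∈ Finset.range N, fourier ((Nat.nth p n : ℤ) * m) x‖ ≤ N := by
          calc ‖∑ n ∈ Finset.range N, fourier ((Nat.nth p n : ℤ) * m) x‖
              ≤ ∑ n ∈ Finset.range N, ‖fourier ((Nat.nth p n : ℤ) * m) x‖ :=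
                norm_sum_le _ _
            _ = N := by simp only [fourier_norm_one, Finset.sum_const, Finset.card_range, nsmul_eq_mul, mul_one]
        calc ‖F N x‖ = (N : ℝ)⁻¹ * ‖∑ n ∈ Finset.range N, fourier ((Nat.nth p n : ℤ) * m) x‖ := by
              rw [hF, norm_mul, norm_inv, Complex.norm_natCast]
          _ ≤ (N : ℝ)⁻¹ * N := by
              exact mul_le_mul_of_nonneg_left hsum (by positivity)
          _ = 1 := inv_mul_cancel₀ (Nat.cast_ne_zero.mpr h.ne')
    -- dominated convergence
    have htend : Tendsto (fun N => ∫ x, F N x ∂μ) atTop (nhds 0) := by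
      have h0 : (0 : ℂ) = ∫ x, (0 : ℂ) ∂μ := by simp
      rw [h0]
      refine tendsto_integral_of_dominated_convergence (bound := fun _ => 1)
        (fun N => ?_) (integrable_const 1) (fun N => Filter.Eventually.of_forall (hbound N)) hlim
      exact (continuous_const.mul
        (continuous_finset_sum _ fun n _ => map_continuous (fourier _))).aestronglyMeasurable
    -- the integrals are eventually constant, equal to the m-th coefficient
    have hev : (fun N => ∫ x, F N x ∂μ) =ᶠ[atTop] fun _ => ∫ x, fourier m x ∂μ := by
      filter_upwards [eventually_ge_atTop 1] with N hN
      have hNne : (N : ℂ) ≠ 0 := Nat.cast_ne_zero.mpr (by omega)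
      calc ∫ x, F N x ∂μ
          = (N : ℂ)⁻¹ * ∫ x, ∑ n ∈ Finset.range N, fourier ((Nat.nth p n : ℤ) * m) x ∂μ := by
            rw [hF]; exact integral_const_mul _ _
        _ = (N : ℂ)⁻¹ * ∑ n ∈ Finset.range N, ∫ x, fourier ((Nat.nth p n : ℤ) * m) x ∂μ := by
            rw [integral_finset_sum _ fun n _ => cm_integrable μ (fourier _)]
        _ = (N : ℂ)⁻¹ * ∑ n ∈ Finset.range N, ∫ x, fourier m x ∂μ := by
            rw [Finset.sum_congr rfl fun n _ => hcS n m]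
        _ = (N : ℂ)⁻¹ * (N * ∫ x, fourier m x ∂μ) := by
            rw [Finset.sum_const, Finset.card_range, nsmul_eq_mul]
        _ = ∫ x, fourier m x ∂μ := by
            rw [← mul_assoc, inv_mul_cancel₀ hNne, one_mul]
    exact tendsto_nhds_unique (tendsto_const_nhds.congr' hev.symm) htend
  -- nonzero Fourier coefficients of Lebesgue measure vanish
  have hveq : (volume : Measure (AddCircle (1 : ℝ))) = AddCircle.haarAddCircle := by
    rw [AddCircle.volume_eq_smul_haarAddCircle]; simp
  have hvol : ∀ m : ℤ, m ≠ 0 → ∫ x, fourier m x ∂(volume : Measure (AddCircle (1 : ℝ))) = 0 := by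
    intro m hm
    rw [hveq]
    exact integral_eq_zero_of_add_right_eq_neg (fourier_add_half_inv_index hm one_pos)
  -- integrals of all continuous functions agree
  have key : ∀ f : C(AddCircle (1 : ℝ), ℂ), ∫ x, f x ∂μ = ∫ x, f x ∂volume := by
    have hsub : (Submodule.span ℂ (Set.range (@fourier 1)) : Set C(AddCircle (1 : ℝ), ℂ))
        ⊆ {f : C(AddCircle (1 : ℝ), ℂ) | ∫ x, f x ∂μ = ∫ x, f x ∂volume} := by
      intro f hf
      induction hf using Submodule.span_induction with
      | mem g hg =>
        obtain ⟨n, rfl⟩ := hg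
        rcases eq_or_ne n 0 with rfl | hn
        · have h1 : ⇑(@fourier 1 0) = fun _ => (1 : ℂ) := funext fun x => fourier_zero
          simp only [Set.mem_setOf_eq, h1]
          simp [measure_univ]
        · simp only [Set.mem_setOf_eq]
          rw [hzero n hn, hvol n hn]
      | zero => simp
      | add g h hg hh ihg ihh =>
        simp only [Set.mem_setOf_eq] at ihg ihh ⊢
        rw [show ⇑(g + h) = fun x => g x + h x from rfl,
          integral_add (cm_integrable μ g) (cm_integrable μ h),
          integral_add (cm_integrable volume g) (cm_integrable volume h), ihg, ihh]
      | smul a g hg ih =>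
        simp only [Set.mem_setOf_eq] at ih ⊢
        rw [show ⇑(a • g) = fun x => a • g x from rfl, integral_smul, integral_smul, ih]
    intro f
    have hcl : IsClosed {f : C(AddCircle (1 : ℝ), ℂ) | ∫ x, f x ∂μ = ∫ x, f x ∂volume} :=
      isClosed_eq (integral_cm_continuous μ) (integral_cm_continuous volume)
    have hf : f ∈ closure (Submodule.span ℂ (Set.range (@fourier 1))
        : Set C(AddCircle (1 : ℝ), ℂ)) := by
      have := span_fourier_closure_eq_top (T := 1)
      have hmem' : f ∈ (Submodule.span ℂ (Set.range (@fourier 1))).topologicalClosure := by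
        rw [this]; trivial
      exact hmem'
    exact closure_minimal hsub hcl hf
  -- conclude: equal lintegrals of bounded continuous ℝ≥0-valued functions
  refine ext_of_forall_lintegral_eq_of_IsFiniteMeasure fun f => ?_
  have hfc : Continuous fun x => (f x : ℝ) := NNReal.continuous_coe.comp f.continuous
  have hint1 : Integrable (fun x => (f x : ℝ)) μ :=
    hfc.integrable_of_hasCompactSupport (HasCompactSupport.of_compactSpace _)
  have hint2 : Integrable (fun x => (f x : ℝ)) (volume : Measure (AddCircle (1 : ℝ))) :=
    hfc.integrable_of_hasCompactSupport (HasCompactSupport.of_compactSpace _)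
  have h := key ⟨fun x => ((f x : ℝ) : ℂ), Complex.continuous_ofReal.comp hfc⟩
  simp only [ContinuousMap.coe_mk] at h
  have hμ : ∫ x, ((f x : ℝ) : ℂ) ∂μ = ((∫ x, (f x : ℝ) ∂μ : ℝ) : ℂ) := integral_ofReal
  have hv : ∫ x, ((f x : ℝ) : ℂ) ∂(volume : Measure (AddCircle (1 : ℝ)))
      = ((∫ x, (f x : ℝ) ∂volume : ℝ) : ℂ) := integral_ofReal
  rw [hμ, hv] at h
  have hr : ∫ x, (f x : ℝ) ∂μ = ∫ x, (f x : ℝ) ∂volume := Complex.ofReal_inj.mp h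
  rw [lintegral_coe_eq_integral _ hint1, lintegral_coe_eq_integral _ hint2, hr]
end

section
/- Let T be a measure-preserving transformation on a probability space (X, ℬ, μ) and let (G_n) ⊂ L¹(μ). Suppose G_n → G μ-a.e. and that G* := sup_n |G_n| ∈ L¹(μ). Then (1/n) ∑_{k=0}^{n−1} |G_{n−k} − G| ∘ T^k → 0 μ-a.e.; in particular, (1/n) ∑_{k=0}^{n−1} G_{n−k} ∘ T^k → 𝔼(G | ℐ) μ-a.e., where ℐ is the σ-field of T-invariant sets. -/
set_option linter.unusedSectionVars false
set_option linter.unnecessarySimpa false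
set_option linter.unusedVariables false
set_option maxHeartbeats 1000000

open Real Filter MeasureTheory

/-- The σ-field of `T`-invariant (measurable) sets. -/
def invariantSigma {X : Type*} [m : MeasurableSpace X] (T : X → X) :
    MeasurableSpace X where
  MeasurableSet' s := MeasurableSet s ∧ T ⁻¹' s = s
  measurableSet_empty := ⟨MeasurableSet.empty, by simp⟩
  measurableSet_compl s hs :=
    ⟨hs.1.compl, by rw [Set.preimage_compl, hs.2]⟩
  measurableSet_iUnion f hf :=
    ⟨MeasurableSet.iUnion fun i => (hf i).1, by
      simp only [Set.preimage_iUnion]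
      exact Set.iUnion_congr fun i => (hf i).2⟩

open Function
open scoped ENNReal NNReal Topology

section MaxErgodic

variable {X : Type*} [MeasurableSpace X] {μ : Measure X} {T : X → X}

/-- running maximum of Birkhoff sums `S_1, ..., S_n` together with `0`. -/
noncomputable def maxS (T : X → X) (f : X → ℝ) : ℕ → X → ℝ
  | 0 => fun _ => 0
  | n+1 => fun x => max (maxS T f n x) (birkhoffSum T f (n+1) x)

lemma maxS_nonneg (f : X → ℝ) : ∀ n x, 0 ≤ maxS T f n x := by
  intro n
  induction n with
  | zero => intro x; simp [maxS]
  | succ n ih => intro x; exact le_trans (ih x) (le_max_left _ _) 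

lemma maxS_mono (f : X → ℝ) {m n : ℕ} (h : m ≤ n) (x : X) : maxS T f m x ≤ maxS T f n x := by
  induction n with
  | zero => simpa [Nat.le_zero.1 h] using le_refl _
  | succ n ih =>
    rcases Nat.lt_or_ge m (n+1) with h' | h'
    · exact le_trans (ih (Nat.lt_succ_iff.1 h')) (le_max_left _ _)
    · have : m = n+1 := le_antisymm h h'
      simp [this]

lemma birkhoffSum_le_maxS (f : X → ℝ) {n : ℕ} (hn : 1 ≤ n) (x : X) :
    birkhoffSum T f n x ≤ maxS T f n x := by
  cases n with
  | zero => omega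
  | succ m => exact le_max_right _ _

lemma maxS_succ_eq (f : X → ℝ) (n : ℕ) (x : X) :
    maxS T f (n+1) x = max (maxS T f n (T x) + f x) 0 := by
  induction n generalizing x with
  | zero => simp [maxS, birkhoffSum_one', max_comm]
  | succ n ih =>
    have h1 : maxS T f (n+2) x = max (maxS T f (n+1) x) (birkhoffSum T f (n+2) x) := rfl
    rw [h1, ih, birkhoffSum_succ']
    have h2 : maxS T f (n+1) (T x) = max (maxS T f n (T x)) (birkhoffSum T f (n+1) (T x)) := rfl
    rw [h2, ← max_add_add_right, add_comm (f x)]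
    exact sup_right_comm _ _ _

end MaxErgodic

section MET

variable {X : Type*} [MeasurableSpace X] {μ : Measure X} {T : X → X} {f : X → ℝ}

lemma birkhoffSum_measurable (hTm : Measurable T) (hm : Measurable f) (n : ℕ) :
    Measurable (birkhoffSum T f n) :=
  Finset.measurable_sum _ fun k _ => hm.comp (hTm.iterate k)

lemma birkhoffSum_integrable (hT : MeasurePreserving T μ μ) (hf : Integrable f μ) (n : ℕ) :
    Integrable (birkhoffSum T f n) μ :=
  MeasureTheory.integrable_finset_sum _ fun k _ => (((hT.iterate k)).integrable_comp hf.aestronglyMeasurable).2 hf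

lemma maxS_measurable (hTm : Measurable T) (hm : Measurable f) (n : ℕ) :
    Measurable (maxS T f n) := by
  induction n with
  | zero => exact measurable_const
  | succ n ih => exact ih.max (birkhoffSum_measurable hTm hm (n+1))

lemma maxS_integrable (hT : MeasurePreserving T μ μ) (hf : Integrable f μ) (n : ℕ) :
    Integrable (maxS T f n) μ := by
  induction n with
  | zero => exact integrable_zero _ _ _
  | succ n ih => exact ih.sup (birkhoffSum_integrable hT hf (n+1))

/-- **Maximal ergodic theorem** (finite level), Garsia's proof. -/
theorem maxErgodic (hT : MeasurePreserving T μ μ) (hm : Measurable f) (hf : Integrable f μ)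
    (n : ℕ) : 0 ≤ ∫ x in {x | 0 < maxS T f n x}, f x ∂μ := by
  cases n with
  | zero =>
    have : {x : X | 0 < maxS T f 0 x} = ∅ := by ext x; simp [maxS]
    simp [this]
  | succ n =>
    set φ : X → ℝ := maxS T f n with hφ
    set E := {x | 0 < maxS T f (n+1) x} with hEdef
    have hE : MeasurableSet E :=
      measurableSet_lt measurable_const (maxS_measurable hT.measurable hm (n+1))
    have hφm : Measurable φ := maxS_measurable hT.measurable hm n
    have hφi : Integrable φ μ := maxS_integrable hT hf n
    have hφTi : Integrable (fun x => φ (T x)) μ := (hT.integrable_comp hφi.aestronglyMeasurable).2 hφi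
    have h1 : ∀ x ∈ E, φ x - φ (T x) ≤ f x := by
      intro x hx
      have hx' : 0 < maxS T f (n+1) x := hx
      rw [maxS_succ_eq] at hx'
      have h0 : 0 < φ (T x) + f x := by
        by_contra h
        push_neg at h
        rw [max_eq_right h] at hx'
        exact lt_irrefl _ hx'
      have heq : maxS T f (n+1) x = φ (T x) + f x := by
        rw [maxS_succ_eq, max_eq_left h0.le]
      have hle : φ x ≤ maxS T f (n+1) x := maxS_mono f (Nat.le_succ n) x
      linarith [heq ▸ hle]
    have h2 : ∀ x ∈ Eᶜ, φ x - φ (T x) ≤ 0 := by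
      intro x hx
      have hx' : ¬ 0 < maxS T f (n+1) x := hx
      have h0 : maxS T f (n+1) x = 0 :=
        le_antisymm (not_lt.1 hx') (maxS_nonneg f (n+1) x)
      have : φ x = 0 :=
        le_antisymm (h0 ▸ maxS_mono f (Nat.le_succ n) x) (maxS_nonneg f n x)
      have := maxS_nonneg (T := T) f n (T x)
      linarith
    have key : ∫ x, (φ x - φ (T x)) ∂μ ≤ ∫ x in E, f x ∂μ := by
      have hsub : Integrable (fun x => φ x - φ (T x)) μ := hφi.sub hφTi
      have step1 : ∫ x in E, (φ x - φ (T x)) ∂μ ≤ ∫ x in E, f x ∂μ :=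
        setIntegral_mono_on hsub.integrableOn hf.integrableOn hE h1
      have step2 : ∫ x in Eᶜ, (φ x - φ (T x)) ∂μ ≤ 0 :=
        setIntegral_nonpos hE.compl h2
      have := integral_add_compl hE hsub (f := fun x => φ x - φ (T x))
      linarith
    have hzero : ∫ x, (φ x - φ (T x)) ∂μ = 0 := by
      rw [integral_sub hφi hφTi]
      have : ∫ x, φ (T x) ∂μ = ∫ x, φ x ∂μ := by
        calc ∫ x, φ (T x) ∂μ
            = ∫ y, φ y ∂(Measure.map T μ) :=
              (integral_map hT.measurable.aemeasurable
                (hT.map_eq.symm ▸ hφm.aestronglyMeasurable)).symm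
          _ = ∫ x, φ x ∂μ := by rw [hT.map_eq]
      rw [this, sub_self]
    linarith

/-- **Maximal ergodic theorem** over the full maximal set. -/
theorem maxErgodic' (hT : MeasurePreserving T μ μ) (hm : Measurable f) (hf : Integrable f μ) :
    0 ≤ ∫ x in {x | ∃ n, 0 < maxS T f n x}, f x ∂μ := by
  have hset : {x | ∃ n, 0 < maxS T f n x} = ⋃ n, {x | 0 < maxS T f n x} := by
    ext x; simp
  have hmeas : ∀ n : ℕ, MeasurableSet {x | 0 < maxS T f n x} := fun n =>
    measurableSet_lt measurable_const (maxS_measurable hT.measurable hm n)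
  have hmono : Monotone fun n : ℕ => {x | 0 < maxS T f n x} := by
    intro m n hmn x hx
    exact lt_of_lt_of_le hx (maxS_mono f hmn x)
  rw [hset]
  refine ge_of_tendsto (tendsto_setIntegral_of_monotone hmeas hmono hf.integrableOn) ?_
  exact Eventually.of_forall fun n => maxErgodic hT hm hf n

end MET

section LimsupTools

variable {X : Type*} [MeasurableSpace X] {T : X → X} {f : X → ℝ}

/-- limsup of the Birkhoff averages, in `EReal`. -/
noncomputable def lsAvg (T : X → X) (f : X → ℝ) (x : X) : EReal :=
  Filter.limsup (fun n : ℕ => (((n : ℝ)⁻¹ * birkhoffSum T f n x : ℝ) : EReal)) atTop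

omit [MeasurableSpace X] in
lemma lsAvg_def (x : X) : lsAvg T f x =
    Filter.limsup (fun n : ℕ => (((n : ℝ)⁻¹ * birkhoffSum T f n x : ℝ) : EReal)) atTop := rfl

/-- Asymmetric comparison principle for `EReal`-limsups of real sequences. -/
lemma limsup_coe_le_of_cmp {u v : ℕ → ℝ}
    (h : ∀ c c' : ℝ, c < c' → (∀ᶠ n in atTop, u n ≤ c) → (∀ᶠ n in atTop, v n ≤ c')) :
    Filter.limsup (fun n => (v n : EReal)) atTop ≤
      Filter.limsup (fun n => (u n : EReal)) atTop := by
  refine le_of_forall_gt_imp_ge_of_dense fun C hC => ?_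
  obtain ⟨q, hLq, hqC⟩ := EReal.exists_rat_btwn_of_lt hC
  obtain ⟨q', hqq', hq'C⟩ := EReal.exists_rat_btwn_of_lt hqC
  have hev : ∀ᶠ n in atTop, u n ≤ (q : ℝ) := by
    have h1 : ∀ᶠ n in atTop, ((u n : ℝ) : EReal) < ((q : ℝ) : EReal) :=
      Filter.eventually_lt_of_limsup_lt hLq
    exact h1.mono fun n hn => by exact_mod_cast hn.le
  have h2 := h q q' (by exact_mod_cast hqq') hev
  have h3 : Filter.limsup (fun n => (v n : EReal)) atTop ≤ (((q' : ℝ) : ℝ) : EReal) :=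
    Filter.limsup_le_of_le (by isBoundedDefault)
      (h2.mono fun n hn => by exact_mod_cast hn)
  exact h3.trans hq'C.le

/-- Comparison with a `(K + |c|) * e n`-type error, `e n → 0`. -/
lemma limsup_coe_le_of_err {u v : ℕ → ℝ} {K : ℝ} {e : ℕ → ℝ}
    (he : Tendsto e atTop (nhds 0))
    (h : ∀ c : ℝ, (∀ᶠ n in atTop, u n ≤ c) →
      (∀ᶠ n in atTop, v n ≤ c + (K + |c|) * e n)) :
    Filter.limsup (fun n => (v n : EReal)) atTop ≤
      Filter.limsup (fun n => (u n : EReal)) atTop := by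
  refine limsup_coe_le_of_cmp fun c c' hcc' hu => ?_
  have h1 := h c hu
  have h2 : ∀ᶠ n : ℕ in atTop, (K + |c|) * e n ≤ c' - c := by
    have h3 : Tendsto (fun n : ℕ => (K + |c|) * e n) atTop (nhds 0) := by
      simpa using he.const_mul (K + |c|)
    exact h3.eventually_le_const (by linarith)
  filter_upwards [h1, h2] with n hn1 hn2
  linarith

omit [MeasurableSpace X] in
/-- The `EReal` limsup of Birkhoff averages is exactly invariant under `T`. -/
lemma lsAvg_comp_eq (T : X → X) (f : X → ℝ) (x : X) : lsAvg T f (T x) = lsAvg T f x := by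
  have hsucc : ∀ n : ℕ, birkhoffSum T f (n+1) x = f x + birkhoffSum T f n (T x) :=
    fun n => birkhoffSum_succ' T f n x
  set u : ℕ → ℝ := fun n => (n : ℝ)⁻¹ * birkhoffSum T f n (T x) with hu
  set w : ℕ → ℝ := fun n => ((n : ℝ) + 1)⁻¹ * birkhoffSum T f (n+1) x with hw
  have hinv : Tendsto (fun n : ℕ => ((n : ℝ) + 1)⁻¹) atTop (nhds 0) :=
    tendsto_one_div_add_atTop_nhds_zero_nat.congr (by intro n; rw [one_div])
  have hinv' : Tendsto (fun n : ℕ => (n : ℝ)⁻¹) atTop (nhds 0) :=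
    tendsto_inv_atTop_nhds_zero_nat
  have hwls : Filter.limsup (fun n => (w n : EReal)) atTop = lsAvg T f x := by
    have h := Filter.limsup_nat_add
      (fun n : ℕ => (((n : ℝ)⁻¹ * birkhoffSum T f n x : ℝ) : EReal)) 1
    rw [lsAvg_def, ← h]
    apply Filter.limsup_congr
    refine Eventually.of_forall fun n => ?_
    have : ((n + 1 : ℕ) : ℝ) = (n : ℝ) + 1 := by push_cast; ring
    rw [hw]; norm_num [this]
  have hules : Filter.limsup (fun n => (u n : EReal)) atTop = lsAvg T f (T x) := rfl
  rw [← hules, ← hwls]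
  have hrel : ∀ n : ℕ, 1 ≤ n → (w n * ((n : ℝ) + 1) = f x + (n : ℝ) * u n ∧
      u n * (n : ℝ) = ((n : ℝ) + 1) * w n - f x) := by
    intro n hn
    have hn0 : (0 : ℝ) < n := by exact_mod_cast hn
    have hn1 : ((n : ℝ) + 1) ≠ 0 := by positivity
    have e1 : (n : ℝ) * u n = birkhoffSum T f n (T x) := by
      rw [hu]; field_simp
    have e2 : w n * ((n : ℝ) + 1) = birkhoffSum T f (n+1) x := by
      rw [hw]; field_simp
    constructor
    · rw [e2, hsucc n, e1]
    · have : u n * (n : ℝ) = birkhoffSum T f n (T x) := by rw [hu]; field_simp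
      rw [this]
      have e2' : ((n : ℝ) + 1) * w n = birkhoffSum T f (n+1) x := by
        rw [mul_comm]; exact e2
      linarith [hsucc n, e2']
  apply le_antisymm
  · -- limsup u ≤ limsup w
    refine limsup_coe_le_of_err (K := |f x|) hinv' fun c hc => ?_
    filter_upwards [eventually_ge_atTop 1, hc] with n hn hwn
    have hn0 : (0 : ℝ) < n := by exact_mod_cast hn
    obtain ⟨-, e2⟩ := hrel n hn
    have h3 : ((n : ℝ) + 1) * w n ≤ ((n : ℝ) + 1) * c :=
      mul_le_mul_of_nonneg_left hwn (by positivity)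
    have h4 : u n * (n : ℝ) ≤ c * n + (|f x| + |c|) := by
      have := le_abs_self c
      have := neg_abs_le (f x)
      linarith
    calc u n = (u n * n) * (n : ℝ)⁻¹ := by field_simp
      _ ≤ (c * n + (|f x| + |c|)) * (n : ℝ)⁻¹ :=
          mul_le_mul_of_nonneg_right h4 (by positivity)
      _ = c + (|f x| + |c|) * (n : ℝ)⁻¹ := by field_simp
  · -- limsup w ≤ limsup u
    refine limsup_coe_le_of_err (K := |f x|) hinv fun c hc => ?_
    filter_upwards [eventually_ge_atTop 1, hc] with n hn hun
    have hn0 : (0 : ℝ) < n := by exact_mod_cast hn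
    obtain ⟨e1, -⟩ := hrel n hn
    have h3 : (n : ℝ) * u n ≤ (n : ℝ) * c :=
      mul_le_mul_of_nonneg_left hun (by positivity)
    have h4 : w n * ((n : ℝ) + 1) ≤ c * ((n : ℝ) + 1) + (|f x| + |c|) := by
      have := le_abs_self c
      have := le_abs_self (f x)
      have := neg_abs_le c
      linarith
    calc w n = (w n * ((n : ℝ) + 1)) * ((n : ℝ) + 1)⁻¹ := by field_simp
      _ ≤ (c * ((n : ℝ) + 1) + (|f x| + |c|)) * ((n : ℝ) + 1)⁻¹ :=
          mul_le_mul_of_nonneg_right h4 (by positivity)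
      _ = c + (|f x| + |c|) * ((n : ℝ) + 1)⁻¹ := by field_simp

omit [MeasurableSpace X] in
lemma lsAvg_comp_iterate (T : X → X) (f : X → ℝ) (k : ℕ) (x : X) :
    lsAvg T f (T^[k] x) = lsAvg T f x := by
  induction k generalizing x with
  | zero => rfl
  | succ k ih =>
    rw [Function.iterate_succ_apply, ih (T x), lsAvg_comp_eq]

end LimsupTools

section BirkhoffCore

variable {X : Type*} [MeasurableSpace X] {μ : Measure X} [IsProbabilityMeasure μ]
  {T : X → X} {f : X → ℝ}

lemma lsAvg_measurable (hTm : Measurable T) (hm : Measurable f) :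
    Measurable (lsAvg T f) :=
  Measurable.limsup fun n =>
    (measurable_const.mul (birkhoffSum_measurable hTm hm n)).coe_real_ereal

lemma exists_birkhoffSum_gt {b : ℝ} {x : X}
    (hx : (b : EReal) < lsAvg T f x) :
    ∃ n : ℕ, 1 ≤ n ∧ (n : ℝ) * b < birkhoffSum T f n x := by
  have hfreq : ∃ᶠ n : ℕ in atTop,
      (b : EReal) < (((n : ℝ)⁻¹ * birkhoffSum T f n x : ℝ) : EReal) :=
    Filter.frequently_lt_of_lt_limsup (by isBoundedDefault) hx
  obtain ⟨n, hn1, hn2⟩ := (hfreq.and_eventually (eventually_ge_atTop 1)).exists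
  refine ⟨n, hn2, ?_⟩
  have hn0 : (0 : ℝ) < n := by exact_mod_cast hn2
  have : b < (n : ℝ)⁻¹ * birkhoffSum T f n x := by exact_mod_cast hn1
  calc (n : ℝ) * b < (n : ℝ) * ((n : ℝ)⁻¹ * birkhoffSum T f n x) :=
        mul_lt_mul_of_pos_left this hn0
    _ = birkhoffSum T f n x := by field_simp

/-- Key estimate from the maximal ergodic theorem on an exactly invariant set. -/
lemma setIntegral_ge_of_maximal (hT : MeasurePreserving T μ μ) (hm : Measurable f)
    (hf : Integrable f μ) {b : ℝ} {E : Set X} (hE : MeasurableSet E)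
    (hEinv : ∀ (k : ℕ) (x : X), T^[k] x ∈ E ↔ x ∈ E)
    (hEb : ∀ x ∈ E, ∃ n : ℕ, 1 ≤ n ∧ (n : ℝ) * b < birkhoffSum T f n x) :
    b * (μ E).toReal ≤ ∫ x in E, f x ∂μ := by
  set g : X → ℝ := E.indicator (fun x => f x - b) with hg
  have hgm : Measurable g := (hm.sub measurable_const).indicator hE
  have hgi : Integrable g μ := ((hf.sub (integrable_const b)).indicator hE)
  have hSg : ∀ (n : ℕ) (x : X), x ∈ E →
      birkhoffSum T g n x = birkhoffSum T f n x - n * b := by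
    intro n x hx
    have hgk : ∀ k : ℕ, g (T^[k] x) = f (T^[k] x) - b := fun k =>
      Set.indicator_of_mem ((hEinv k x).2 hx) _
    unfold birkhoffSum
    rw [Finset.sum_congr rfl fun k _ => hgk k, Finset.sum_sub_distrib,
      Finset.sum_const, Finset.card_range, nsmul_eq_mul]
  have hSg0 : ∀ (n : ℕ) (x : X), x ∉ E → birkhoffSum T g n x = 0 := by
    intro n x hx
    unfold birkhoffSum
    refine Finset.sum_eq_zero fun k _ => ?_
    show g (T^[k] x) = 0
    rw [hg, Set.indicator_of_notMem (fun h => hx ((hEinv k x).1 h))]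
  have hmaxS0 : ∀ (n : ℕ) (x : X), x ∉ E → maxS T g n x = 0 := by
    intro n x hx
    induction n with
    | zero => rfl
    | succ n ih => show max (maxS T g n x) _ = 0; rw [ih, hSg0 (n+1) x hx, max_self]
  have hEq : {x | ∃ n, 0 < maxS T g n x} = E := by
    ext x
    constructor
    · rintro ⟨n, hn⟩
      by_contra hx
      rw [hmaxS0 n x hx] at hn
      exact lt_irrefl _ hn
    · intro hx
      obtain ⟨n, hn1, hn2⟩ := hEb x hx
      refine ⟨n, lt_of_lt_of_le ?_ (birkhoffSum_le_maxS g hn1 x)⟩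
      rw [hSg n x hx]
      linarith
  have h0 := maxErgodic' hT hgm hgi
  rw [hEq] at h0
  have h1 : ∫ x in E, g x ∂μ = ∫ x in E, (f x - b) ∂μ :=
    setIntegral_congr_fun hE fun x hx => Set.indicator_of_mem hx _
  rw [h1, integral_sub hf.integrableOn (integrableOn_const (measure_ne_top μ E)),
    setIntegral_const, measureReal_def, smul_eq_mul, mul_comm] at h0
  linarith

omit [IsProbabilityMeasure μ] in
lemma birkhoffSum_neg' (T : X → X) (f : X → ℝ) (n : ℕ) (x : X) :
    birkhoffSum T (fun y => -f y) n x = -birkhoffSum T f n x := by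
  unfold birkhoffSum
  rw [← Finset.sum_neg_distrib]

/-- The crossing set `E_{a,b}` has measure zero. -/
lemma measure_cross_zero (hT : MeasurePreserving T μ μ) (hm : Measurable f)
    (hf : Integrable f μ) {a b : ℝ} (hab : a < b) :
    μ ({x | (b : EReal) < lsAvg T f x} ∩
       {x | ((-a : ℝ) : EReal) < lsAvg T (fun y => -f y) x}) = 0 := by
  set E := {x | (b : EReal) < lsAvg T f x} ∩
      {x | ((-a : ℝ) : EReal) < lsAvg T (fun y => -f y) x} with hEdef
  have hE : MeasurableSet E :=
    (measurableSet_lt measurable_const (lsAvg_measurable hT.measurable hm)).inter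
      (measurableSet_lt measurable_const (lsAvg_measurable hT.measurable hm.neg))
  have hEinv : ∀ (k : ℕ) (x : X), T^[k] x ∈ E ↔ x ∈ E := by
    intro k x
    simp only [hEdef, Set.mem_inter_iff, Set.mem_setOf_eq, lsAvg_comp_iterate]
  have h1 : b * (μ E).toReal ≤ ∫ x in E, f x ∂μ :=
    setIntegral_ge_of_maximal hT hm hf hE hEinv fun x hx =>
      exists_birkhoffSum_gt hx.1
  have h2 : (-a) * (μ E).toReal ≤ ∫ x in E, -f x ∂μ :=
    setIntegral_ge_of_maximal hT hm.neg hf.neg hE hEinv fun x hx => by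
      obtain ⟨n, hn1, hn2⟩ := exists_birkhoffSum_gt hx.2
      exact ⟨n, hn1, hn2⟩
  rw [integral_neg] at h2
  have hμ : (μ E).toReal ≤ 0 := by nlinarith [ENNReal.toReal_nonneg (a := μ E)]
  have : (μ E).toReal = 0 := le_antisymm hμ ENNReal.toReal_nonneg
  exact (ENNReal.toReal_eq_zero_iff _).1 this |>.resolve_right (measure_ne_top μ E)

/-- The limsup is a.e. finite from above. -/
lemma lsAvg_lt_top_ae (hT : MeasurePreserving T μ μ) (hm : Measurable f)
    (hf : Integrable f μ) : ∀ᵐ x ∂μ, lsAvg T f x < ⊤ := by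
  have hkey : ∀ m : ℕ, 1 ≤ m → (m : ℝ) * (μ {x | ((m : ℝ) : EReal) < lsAvg T f x}).toReal ≤
      ∫ x, |f x| ∂μ := by
    intro m _
    set E := {x | ((m : ℝ) : EReal) < lsAvg T f x} with hEdef
    have hE : MeasurableSet E :=
      measurableSet_lt measurable_const (lsAvg_measurable hT.measurable hm)
    have hEinv : ∀ (k : ℕ) (x : X), T^[k] x ∈ E ↔ x ∈ E := by
      intro k x
      simp only [hEdef, Set.mem_setOf_eq, lsAvg_comp_iterate]
    have h1 : (m : ℝ) * (μ E).toReal ≤ ∫ x in E, f x ∂μ :=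
      setIntegral_ge_of_maximal hT hm hf hE hEinv fun x hx => exists_birkhoffSum_gt hx
    have h2 : ∫ x in E, f x ∂μ ≤ ∫ x in E, |f x| ∂μ :=
      setIntegral_mono_on hf.integrableOn hf.abs.integrableOn hE fun x _ => le_abs_self _
    have h3 : ∫ x in E, |f x| ∂μ ≤ ∫ x, |f x| ∂μ :=
      setIntegral_le_integral hf.abs (Eventually.of_forall fun x => abs_nonneg _)
    linarith
  -- conclude
  have hsub : ∀ m : ℕ, {x | lsAvg T f x = ⊤} ⊆ {x | ((m : ℝ) : EReal) < lsAvg T f x} := by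
    intro m x hx
    simp only [Set.mem_setOf_eq] at hx ⊢
    rw [hx]
    exact EReal.coe_lt_top _
  rw [ae_iff]
  have heq : {x | ¬lsAvg T f x < ⊤} = {x | lsAvg T f x = ⊤} := by
    ext x; simp [lt_top_iff_ne_top]
  rw [heq]
  by_contra hne
  have hpos : 0 < (μ {x | lsAvg T f x = ⊤}).toReal := by
    refine ENNReal.toReal_pos hne (measure_ne_top _ _)
  obtain ⟨m, hm1, hm2⟩ : ∃ m : ℕ, 1 ≤ m ∧ (∫ x, |f x| ∂μ) / (μ {x | lsAvg T f x = ⊤}).toReal < m := by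
    obtain ⟨m, hm⟩ := exists_nat_gt (max 1 ((∫ x, |f x| ∂μ) / (μ {x | lsAvg T f x = ⊤}).toReal))
    exact ⟨m, by exact_mod_cast (le_max_left _ _).trans hm.le, (le_max_right _ _).trans_lt hm⟩
  have := hkey m hm1
  have hmono : (μ {x | lsAvg T f x = ⊤}).toReal ≤
      (μ {x | ((m : ℝ) : EReal) < lsAvg T f x}).toReal :=
    ENNReal.toReal_mono (measure_ne_top _ _) (measure_mono (hsub m))
  have hm0 : (0:ℝ) < m := by exact_mod_cast hm1
  rw [div_lt_iff₀ hpos] at hm2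
  nlinarith

end BirkhoffCore

section BirkhoffAe

variable {X : Type*} [MeasurableSpace X] {μ : Measure X} [IsProbabilityMeasure μ]
  {T : X → X} {f : X → ℝ}

/-- **Birkhoff a.e. convergence** (to the `EReal` limsup, made real). -/
theorem birkhoff_ae_tendsto (hT : MeasurePreserving T μ μ) (hm : Measurable f)
    (hf : Integrable f μ) :
    ∀ᵐ x ∂μ, Tendsto (fun n : ℕ => (n : ℝ)⁻¹ * birkhoffSum T f n x) atTop
      (nhds ((lsAvg T f x).toReal)) := by
  have h1 := lsAvg_lt_top_ae hT hm hf
  have h2 := lsAvg_lt_top_ae hT hm.neg hf.neg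
  have h3 : ∀ᵐ x ∂μ, ∀ p : ℚ × ℚ, ¬(((p.1 : ℝ) < (p.2 : ℝ)) ∧
      ((p.2 : ℝ) : EReal) < lsAvg T f x ∧
      ((-(p.1 : ℝ) : ℝ) : EReal) < lsAvg T (fun y => -f y) x) := by
    rw [ae_all_iff]
    intro p
    by_cases hp : (p.1 : ℝ) < (p.2 : ℝ)
    · have hz := measure_cross_zero hT hm hf hp
      rw [ae_iff]
      refine measure_mono_null ?_ hz
      intro x hx
      simp only [Set.mem_setOf_eq, not_not] at hx
      exact ⟨hx.2.1, hx.2.2⟩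
    · exact Eventually.of_forall fun x h => hp h.1
  filter_upwards [h1, h2, h3] with x hx1 hx2 hx3
  set A : ℕ → ℝ := fun n => (n : ℝ)⁻¹ * birkhoffSum T f n x with hA
  have hnegA : ∀ n : ℕ, (n : ℝ)⁻¹ * birkhoffSum T (fun y => -f y) n x = -(A n) := by
    intro n
    rw [birkhoffSum_neg', hA]
    ring
  have hliminf : Filter.liminf (fun n => ((A n : ℝ) : EReal)) atTop =
      - lsAvg T (fun y => -f y) x := by
    have heq : (fun n : ℕ => (((n : ℝ)⁻¹ * birkhoffSum T (fun y => -f y) n x : ℝ) : EReal)) =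
        -(fun n : ℕ => ((A n : ℝ) : EReal)) := by
      funext n
      rw [hnegA n]
      simp [EReal.coe_neg]
    rw [lsAvg_def, heq, EReal.limsup_neg, neg_neg]
  have hle : Filter.liminf (fun n => ((A n : ℝ) : EReal)) atTop ≤ lsAvg T f x :=
    liminf_le_limsup
  have hge : lsAvg T f x ≤ Filter.liminf (fun n => ((A n : ℝ) : EReal)) atTop := by
    by_contra h
    push_neg at h
    obtain ⟨q, hq1, hq2⟩ := EReal.exists_rat_btwn_of_lt h
    obtain ⟨q', hq1', hq2'⟩ := EReal.exists_rat_btwn_of_lt hq2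
    refine hx3 (q, q') ⟨by exact_mod_cast hq1', hq2', ?_⟩
    have hls : lsAvg T (fun y => -f y) x =
        - Filter.liminf (fun n => ((A n : ℝ) : EReal)) atTop := by
      rw [hliminf, neg_neg]
    rw [hls, show ((-(q : ℝ) : ℝ) : EReal) = -((q : ℝ) : EReal) from EReal.coe_neg _]
    exact EReal.neg_lt_neg_iff.2 hq1
  have heq : Filter.liminf (fun n => ((A n : ℝ) : EReal)) atTop = lsAvg T f x :=
    le_antisymm hle hge
  have htop : lsAvg T f x ≠ ⊤ := hx1.ne
  have hbot : lsAvg T f x ≠ ⊥ := by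
    have hfx : lsAvg T f x = - lsAvg T (fun y => -f y) x := by rw [← hliminf, heq]
    rw [hfx]
    intro hcontra
    rw [EReal.neg_eq_bot_iff] at hcontra
    exact absurd hcontra hx2.ne
  have htends : Tendsto (fun n => ((A n : ℝ) : EReal)) atTop (nhds (lsAvg T f x)) :=
    tendsto_of_liminf_eq_limsup heq rfl
  have hco : lsAvg T f x = (((lsAvg T f x).toReal : ℝ) : EReal) :=
    (EReal.coe_toReal htop hbot).symm
  rw [hco] at htends
  exact EReal.tendsto_coe.1 htends

end BirkhoffAe


section Identify

variable {X : Type*} [MeasurableSpace X] {μ : Measure X} [IsProbabilityMeasure μ]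
  {T : X → X} {f : X → ℝ}

/-- The a.e. limit of Birkhoff averages. -/
noncomputable def bLim (T : X → X) (f : X → ℝ) (x : X) : ℝ := (lsAvg T f x).toReal

lemma invariantSigma_le (T : X → X) : invariantSigma T ≤ ‹MeasurableSpace X› :=
  fun _ hs => hs.1

omit [IsProbabilityMeasure μ] in
lemma bLim_measurable (hTm : Measurable T) (hm : Measurable f) : Measurable (bLim T f) :=
  (lsAvg_measurable hTm hm).ereal_toReal

omit [MeasurableSpace X] [IsProbabilityMeasure μ] in
lemma bLim_comp_eq (T : X → X) (f : X → ℝ) (x : X) : bLim T f (T x) = bLim T f x := by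
  unfold bLim
  rw [lsAvg_comp_eq]

omit [IsProbabilityMeasure μ] in
lemma bLim_stronglyMeasurable_inv (hTm : Measurable T) (hm : Measurable f) :
    StronglyMeasurable[invariantSigma T] (bLim T f) := by
  have hmeas : Measurable (bLim T f) := bLim_measurable hTm hm
  have hinv : @Measurable X ℝ (invariantSigma T) _ (bLim T f) := by
    intro s hs
    refine ⟨hmeas hs, ?_⟩
    ext y
    simp only [Set.mem_preimage, bLim_comp_eq]
  exact hinv.stronglyMeasurable

omit [IsProbabilityMeasure μ] in
lemma lintegral_avg_le (hT : MeasurePreserving T μ μ) (hm : Measurable f) (n : ℕ) :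
    ∫⁻ x, ‖(n : ℝ)⁻¹ * birkhoffSum T f n x‖₊ ∂μ ≤ ∫⁻ x, ‖f x‖₊ ∂μ := by
  rcases Nat.eq_zero_or_pos n with rfl | hn
  · simp [birkhoffSum]
  have hn' : (n : ℝ≥0∞) ≠ 0 := by exact_mod_cast hn.ne'
  have hnn : ((n : ℝ≥0) : ℝ≥0∞) = (n : ℝ≥0∞) := by simp
  have hpt : ∀ x, (‖(n : ℝ)⁻¹ * birkhoffSum T f n x‖₊ : ℝ≥0∞) ≤
      (n : ℝ≥0∞)⁻¹ * ∑ k ∈ Finset.range n, (‖f (T^[k] x)‖₊ : ℝ≥0∞) := by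
    intro x
    rw [nnnorm_mul, ENNReal.coe_mul]
    have h1 : (‖(n : ℝ)⁻¹‖₊ : ℝ≥0∞) = (n : ℝ≥0∞)⁻¹ := by
      rw [nnnorm_inv, nnnorm_natCast, ENNReal.coe_inv (by exact_mod_cast hn.ne'), hnn]
    rw [h1]
    gcongr
    calc (‖birkhoffSum T f n x‖₊ : ℝ≥0∞)
        ≤ ((∑ k ∈ Finset.range n, ‖f (T^[k] x)‖₊ : ℝ≥0) : ℝ≥0∞) := by
          exact_mod_cast nnnorm_sum_le _ _
      _ = ∑ k ∈ Finset.range n, (‖f (T^[k] x)‖₊ : ℝ≥0∞) := ENNReal.coe_finset_sum _ _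
  have hmk : ∀ k : ℕ, Measurable fun x => (‖f (T^[k] x)‖₊ : ℝ≥0∞) := fun k =>
    (hm.comp (hT.measurable.iterate k)).nnnorm.coe_nnreal_ennreal
  calc ∫⁻ x, ‖(n : ℝ)⁻¹ * birkhoffSum T f n x‖₊ ∂μ
      ≤ ∫⁻ x, (n : ℝ≥0∞)⁻¹ * ∑ k ∈ Finset.range n, (‖f (T^[k] x)‖₊ : ℝ≥0∞) ∂μ :=
        lintegral_mono hpt
    _ = (n : ℝ≥0∞)⁻¹ * ∫⁻ x, ∑ k ∈ Finset.range n, (‖f (T^[k] x)‖₊ : ℝ≥0∞) ∂μ :=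
        lintegral_const_mul _ (Finset.measurable_sum _ fun k _ => hmk k)
    _ = (n : ℝ≥0∞)⁻¹ * ∑ k ∈ Finset.range n, ∫⁻ x, (‖f (T^[k] x)‖₊ : ℝ≥0∞) ∂μ := by
        rw [lintegral_finset_sum _ fun k _ => hmk k]
    _ = (n : ℝ≥0∞)⁻¹ * ∑ k ∈ Finset.range n, ∫⁻ x, (‖f x‖₊ : ℝ≥0∞) ∂μ := by
        congr 1
        refine Finset.sum_congr rfl fun k _ => ?_
        exact (hT.iterate k).lintegral_comp hm.nnnorm.coe_nnreal_ennreal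
    _ = (n : ℝ≥0∞)⁻¹ * ((n : ℝ≥0∞) * ∫⁻ x, (‖f x‖₊ : ℝ≥0∞) ∂μ) := by
        rw [Finset.sum_const, Finset.card_range, nsmul_eq_mul]
    _ ≤ ∫⁻ x, (‖f x‖₊ : ℝ≥0∞) ∂μ := by
        rw [← mul_assoc, ENNReal.inv_mul_cancel hn' (ENNReal.natCast_ne_top n), one_mul]

lemma bLim_integrable (hT : MeasurePreserving T μ μ) (hm : Measurable f)
    (hf : Integrable f μ) : Integrable (bLim T f) μ := by
  have hmeas := bLim_measurable hT.measurable hm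
  refine ⟨hmeas.aestronglyMeasurable, ?_⟩
  rw [hasFiniteIntegral_def]
  have hae : ∀ᵐ x ∂μ, (‖bLim T f x‖₊ : ℝ≥0∞) ≤
      Filter.liminf (fun n : ℕ => (‖(n : ℝ)⁻¹ * birkhoffSum T f n x‖₊ : ℝ≥0∞)) atTop := by
    filter_upwards [birkhoff_ae_tendsto hT hm hf] with x hx
    have h2 : Tendsto (fun n : ℕ => (‖(n : ℝ)⁻¹ * birkhoffSum T f n x‖₊ : ℝ≥0∞)) atTop
        (nhds (‖bLim T f x‖₊ : ℝ≥0∞)) := ENNReal.tendsto_coe.2 hx.nnnorm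
    exact h2.liminf_eq.ge
  calc ∫⁻ x, ‖bLim T f x‖₊ ∂μ
      ≤ ∫⁻ x, Filter.liminf
          (fun n : ℕ => (‖(n : ℝ)⁻¹ * birkhoffSum T f n x‖₊ : ℝ≥0∞)) atTop ∂μ :=
        lintegral_mono_ae hae
    _ ≤ Filter.liminf (fun n : ℕ => ∫⁻ x, ‖(n : ℝ)⁻¹ * birkhoffSum T f n x‖₊ ∂μ) atTop :=
        lintegral_liminf_le fun n =>
          (measurable_const.mul (birkhoffSum_measurable hT.measurable hm n)).nnnorm.coe_nnreal_ennreal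
    _ ≤ ∫⁻ x, ‖f x‖₊ ∂μ :=
        liminf_le_of_frequently_le
          (Frequently.of_forall fun n => lintegral_avg_le hT hm n)
    _ < ⊤ := hf.2

omit [MeasurableSpace X] [IsProbabilityMeasure μ] in
lemma birkhoffSum_sub' (T : X → X) (f g : X → ℝ) (n : ℕ) (x : X) :
    birkhoffSum T (fun y => f y - g y) n x = birkhoffSum T f n x - birkhoffSum T g n x := by
  unfold birkhoffSum
  rw [← Finset.sum_sub_distrib]

lemma lintegral_bLim_sub_le (hT : MeasurePreserving T μ μ) {f g : X → ℝ}
    (hmf : Measurable f) (hmg : Measurable g) (hif : Integrable f μ) (hig : Integrable g μ) :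
    ∫⁻ x, ‖bLim T f x - bLim T g x‖₊ ∂μ ≤ ∫⁻ x, ‖f x - g x‖₊ ∂μ := by
  have hae : ∀ᵐ x ∂μ, (‖bLim T f x - bLim T g x‖₊ : ℝ≥0∞) ≤
      Filter.liminf (fun n : ℕ =>
        (‖(n : ℝ)⁻¹ * birkhoffSum T (fun y => f y - g y) n x‖₊ : ℝ≥0∞)) atTop := by
    filter_upwards [birkhoff_ae_tendsto hT hmf hif, birkhoff_ae_tendsto hT hmg hig]
      with x h1 h2
    have h3 : Tendsto (fun n : ℕ => (n : ℝ)⁻¹ * birkhoffSum T (fun y => f y - g y) n x)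
        atTop (nhds (bLim T f x - bLim T g x)) := by
      have heq : (fun n : ℕ => (n : ℝ)⁻¹ * birkhoffSum T (fun y => f y - g y) n x) =
          fun n : ℕ => (n : ℝ)⁻¹ * birkhoffSum T f n x - (n : ℝ)⁻¹ * birkhoffSum T g n x := by
        funext n
        rw [birkhoffSum_sub']
        ring
      rw [heq]
      exact h1.sub h2
    exact (ENNReal.tendsto_coe.2 h3.nnnorm).liminf_eq.ge
  calc ∫⁻ x, ‖bLim T f x - bLim T g x‖₊ ∂μ
      ≤ ∫⁻ x, Filter.liminf (fun n : ℕ =>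
          (‖(n : ℝ)⁻¹ * birkhoffSum T (fun y => f y - g y) n x‖₊ : ℝ≥0∞)) atTop ∂μ :=
        lintegral_mono_ae hae
    _ ≤ Filter.liminf (fun n : ℕ =>
          ∫⁻ x, ‖(n : ℝ)⁻¹ * birkhoffSum T (fun y => f y - g y) n x‖₊ ∂μ) atTop :=
        lintegral_liminf_le fun n =>
          (measurable_const.mul
            (birkhoffSum_measurable hT.measurable (hmf.sub hmg) n)).nnnorm.coe_nnreal_ennreal
    _ ≤ ∫⁻ x, ‖f x - g x‖₊ ∂μ :=
        liminf_le_of_frequently_le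
          (Frequently.of_forall fun n => lintegral_avg_le hT (hmf.sub hmg) n)

end Identify

section SetIntegral

variable {X : Type*} [MeasurableSpace X] {μ : Measure X} [IsProbabilityMeasure μ]
  {T : X → X} {f : X → ℝ}

omit [MeasurableSpace X] [IsProbabilityMeasure μ] in
lemma iterate_preimage_eq {A : Set X} (hA : T ⁻¹' A = A) (k : ℕ) : T^[k] ⁻¹' A = A := by
  induction k with
  | zero => rfl
  | succ k ih => rw [Function.iterate_succ, Set.preimage_comp, ih, hA]

omit [IsProbabilityMeasure μ] in
lemma measurePreserving_iterate_restrict (hT : MeasurePreserving T μ μ) {A : Set X}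
    (hAm : MeasurableSet A) (hA : T ⁻¹' A = A) (k : ℕ) :
    MeasurePreserving (T^[k]) (μ.restrict A) (μ.restrict A) := by
  refine ⟨hT.measurable.iterate k, ?_⟩
  calc Measure.map (T^[k]) (μ.restrict A)
      = Measure.map (T^[k]) (μ.restrict (T^[k] ⁻¹' A)) := by rw [iterate_preimage_eq hA]
    _ = (Measure.map (T^[k]) μ).restrict A :=
        (Measure.restrict_map (hT.measurable.iterate k) hAm).symm
    _ = μ.restrict A := by rw [(hT.iterate k).map_eq]

lemma setIntegral_avg_eq (hT : MeasurePreserving T μ μ) (hm : Measurable f)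
    (hf : Integrable f μ) {A : Set X} (hAm : MeasurableSet A) (hAinv : T ⁻¹' A = A)
    {n : ℕ} (hn : 1 ≤ n) :
    ∫ x in A, (n : ℝ)⁻¹ * birkhoffSum T f n x ∂μ = ∫ x in A, f x ∂μ := by
  have hint : ∀ k : ℕ, Integrable (fun x => f (T^[k] x)) (μ.restrict A) :=
    fun k => (((hT.iterate k).integrable_comp hf.aestronglyMeasurable).2 hf).restrict
  have hcomp : ∀ k : ℕ, ∫ x in A, f (T^[k] x) ∂μ = ∫ x in A, f x ∂μ := by
    intro k
    have hmp := measurePreserving_iterate_restrict hT hAm hAinv k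
    calc ∫ x in A, f (T^[k] x) ∂μ
        = ∫ y, f y ∂(Measure.map (T^[k]) (μ.restrict A)) :=
          (integral_map (hT.measurable.iterate k).aemeasurable
            (hmp.map_eq.symm ▸ hf.aestronglyMeasurable.restrict)).symm
      _ = ∫ x in A, f x ∂μ := by rw [hmp.map_eq]
  have hn0 : (n : ℝ) ≠ 0 := by positivity
  rw [integral_const_mul]
  unfold birkhoffSum
  rw [integral_finset_sum _ fun k _ => hint k,
    Finset.sum_congr rfl fun k _ => hcomp k, Finset.sum_const, Finset.card_range,
    nsmul_eq_mul, ← mul_assoc, inv_mul_cancel₀ hn0, one_mul]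

lemma setIntegral_bLim_bounded (hT : MeasurePreserving T μ μ) (hm : Measurable f)
    (hf : Integrable f μ) {C : ℝ} (hC : ∀ x, |f x| ≤ C) {A : Set X}
    (hAm : MeasurableSet A) (hAinv : T ⁻¹' A = A) :
    ∫ x in A, bLim T f x ∂μ = ∫ x in A, f x ∂μ := by
  have htendA : ∀ᵐ x ∂(μ.restrict A), Tendsto (fun n : ℕ => (n : ℝ)⁻¹ * birkhoffSum T f n x)
      atTop (nhds (bLim T f x)) := ae_restrict_of_ae (birkhoff_ae_tendsto hT hm hf)
  have hbound : ∀ n : ℕ, ∀ᵐ x ∂(μ.restrict A), ‖(n : ℝ)⁻¹ * birkhoffSum T f n x‖ ≤ |C| := by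
    intro n
    refine Eventually.of_forall fun x => ?_
    rcases Nat.eq_zero_or_pos n with rfl | hn
    · simp [birkhoffSum, abs_nonneg]
    · have hn0 : (0 : ℝ) < n := by exact_mod_cast hn
      have h1 : |birkhoffSum T f n x| ≤ n * C := by
        calc |birkhoffSum T f n x| ≤ ∑ k ∈ Finset.range n, |f (T^[k] x)| :=
              Finset.abs_sum_le_sum_abs _ _
          _ ≤ ∑ _k ∈ Finset.range n, C := Finset.sum_le_sum fun k _ => hC _
          _ = n * C := by rw [Finset.sum_const, Finset.card_range, nsmul_eq_mul]
      rw [Real.norm_eq_abs, abs_mul, abs_inv, Nat.abs_cast]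
      calc (n : ℝ)⁻¹ * |birkhoffSum T f n x| ≤ (n : ℝ)⁻¹ * (n * C) :=
            mul_le_mul_of_nonneg_left h1 (by positivity)
        _ = C := by field_simp
        _ ≤ |C| := le_abs_self C
  have hDCT := tendsto_integral_of_dominated_convergence (μ := μ.restrict A)
    (F := fun n x => (n : ℝ)⁻¹ * birkhoffSum T f n x) (f := bLim T f) (bound := fun _ => |C|)
    (fun n => (measurable_const.mul
      (birkhoffSum_measurable hT.measurable hm n)).aestronglyMeasurable)
    (integrable_const _) hbound htendA
  have heven : ∀ᶠ n : ℕ in atTop,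
      ∫ x in A, (n : ℝ)⁻¹ * birkhoffSum T f n x ∂μ = ∫ x in A, f x ∂μ :=
    eventually_atTop.2 ⟨1, fun n hn => setIntegral_avg_eq hT hm hf hAm hAinv hn⟩
  exact tendsto_nhds_unique (hDCT.congr' heven) tendsto_const_nhds

lemma integral_abs_eq_lintegral' {h : X → ℝ} (hh : AEStronglyMeasurable h μ) :
    ∫ x, |h x| ∂μ = (∫⁻ x, ‖h x‖₊ ∂μ).toReal := by
  simp_rw [← enorm_eq_nnnorm, ← integral_norm_eq_lintegral_enorm hh]
  simp [Real.norm_eq_abs]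

lemma setIntegral_bLim (hT : MeasurePreserving T μ μ) (hm : Measurable f)
    (hf : Integrable f μ) {A : Set X} (hAm : MeasurableSet A) (hAinv : T ⁻¹' A = A) :
    ∫ x in A, bLim T f x ∂μ = ∫ x in A, f x ∂μ := by
  have habs : ∀ (a c : ℝ), 0 ≤ c → |max (min a c) (-c)| ≤ |a| := by
    intro a c hc
    rcases le_total a (-c) with h | h
    · rw [min_eq_left (h.trans (by linarith)), max_eq_right h,
        abs_of_nonpos (by linarith), abs_of_nonpos (h.trans (by linarith))]
      linarith
    · rcases le_total a c with h2 | h2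
      · rw [min_eq_left h2, max_eq_left h]
      · rw [min_eq_right h2, max_eq_left (by linarith),
          abs_of_nonneg hc, abs_of_nonneg (hc.trans h2)]
        linarith
  set fm : ℕ → X → ℝ := fun m x => max (min (f x) m) (-(m : ℝ)) with hfm
  have hfmm : ∀ m : ℕ, Measurable (fm m) := fun m =>
    (hm.min measurable_const).max measurable_const
  have hfmabs : ∀ (m : ℕ) (x : X), |fm m x| ≤ |f x| := fun m x =>
    habs (f x) m (by positivity)
  have hfmi : ∀ m : ℕ, Integrable (fm m) μ := fun m =>
    hf.abs.mono' (hfmm m).aestronglyMeasurable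
      (Eventually.of_forall fun x => by
        rw [Real.norm_eq_abs]; exact hfmabs m x)
  have hfmb : ∀ (m : ℕ) (x : X), |fm m x| ≤ (m : ℝ) := by
    intro m x
    rw [abs_le]
    exact ⟨le_max_right _ _, max_le (min_le_right _ _) (neg_le_self (by positivity))⟩
  have hfmtend : ∀ x, Tendsto (fun m : ℕ => fm m x) atTop (nhds (f x)) := by
    intro x
    refine tendsto_atTop_of_eventually_const (i₀ := ⌈|f x|⌉₊) fun m hm' => ?_
    have h1 : |f x| ≤ (m : ℝ) := (Nat.le_ceil _).trans (by exact_mod_cast hm')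
    rw [abs_le] at h1
    rw [hfm]
    simp only
    rw [min_eq_left h1.2, max_eq_left (by linarith [h1.1])]
  have hL1 : Tendsto (fun m : ℕ => ∫ x, |f x - fm m x| ∂μ) atTop (nhds 0) := by
    have hDCT := tendsto_integral_of_dominated_convergence (μ := μ)
      (F := fun m x => |f x - fm m x|) (f := fun _ => (0 : ℝ))
      (bound := fun x => 2 * |f x|)
      (fun m => (hm.sub (hfmm m)).abs.aestronglyMeasurable)
      (hf.abs.const_mul 2)
      (fun m => Eventually.of_forall fun x => by
        rw [Real.norm_eq_abs, abs_abs]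
        calc |f x - fm m x| ≤ |f x| + |fm m x| := abs_sub _ _
          _ ≤ |f x| + |f x| := by linarith [hfmabs m x]
          _ = 2 * |f x| := by ring)
      (Eventually.of_forall fun x => by
        have h1 : Tendsto (fun m : ℕ => f x - fm m x) atTop (nhds 0) := by
          simpa using (hfmtend x).const_sub (f x)
        simpa using h1.abs)
    simpa using hDCT
  have hkey : ∀ m : ℕ, |∫ x in A, bLim T f x ∂μ - ∫ x in A, f x ∂μ| ≤
      2 * ∫ x, |f x - fm m x| ∂μ := by
    intro m
    have e1 : ∫ x in A, bLim T (fm m) x ∂μ = ∫ x in A, fm m x ∂μ :=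
      setIntegral_bLim_bounded hT (hfmm m) (hfmi m) (hfmb m) hAm hAinv
    have hsubint : Integrable (fun x => f x - fm m x) μ := hf.sub (hfmi m)
    have e2 : |∫ x in A, bLim T f x ∂μ - ∫ x in A, bLim T (fm m) x ∂μ| ≤
        ∫ x, |f x - fm m x| ∂μ := by
      rw [← integral_sub (bLim_integrable hT hm hf).integrableOn
        (bLim_integrable hT (hfmm m) (hfmi m)).integrableOn]
      have hbi : Integrable (fun x => bLim T f x - bLim T (fm m) x) μ :=
        (bLim_integrable hT hm hf).sub (bLim_integrable hT (hfmm m) (hfmi m))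
      calc |∫ x in A, (bLim T f x - bLim T (fm m) x) ∂μ|
          ≤ ∫ x in A, |bLim T f x - bLim T (fm m) x| ∂μ := by
            rw [← Real.norm_eq_abs]
            exact (norm_integral_le_integral_norm _).trans
              (le_of_eq (integral_congr_ae (Eventually.of_forall fun x =>
                Real.norm_eq_abs _)))
        _ ≤ ∫ x, |bLim T f x - bLim T (fm m) x| ∂μ :=
            setIntegral_le_integral hbi.abs
              (Eventually.of_forall fun x => abs_nonneg _)
        _ ≤ ∫ x, |f x - fm m x| ∂μ := by
            rw [integral_abs_eq_lintegral' hbi.aestronglyMeasurable,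
              integral_abs_eq_lintegral' hsubint.aestronglyMeasurable]
            exact ENNReal.toReal_mono hsubint.2.ne
              (lintegral_bLim_sub_le hT hm (hfmm m) hf (hfmi m))
    have e3 : |∫ x in A, fm m x ∂μ - ∫ x in A, f x ∂μ| ≤ ∫ x, |f x - fm m x| ∂μ := by
      rw [← integral_sub (hfmi m).integrableOn hf.integrableOn]
      calc |∫ x in A, (fm m x - f x) ∂μ|
          ≤ ∫ x in A, |fm m x - f x| ∂μ := by
            rw [← Real.norm_eq_abs]
            exact (norm_integral_le_integral_norm _).trans
              (le_of_eq (integral_congr_ae (Eventually.of_forall fun x =>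
                Real.norm_eq_abs _)))
        _ ≤ ∫ x, |fm m x - f x| ∂μ :=
            setIntegral_le_integral ((hfmi m).sub hf).abs
              (Eventually.of_forall fun x => abs_nonneg _)
        _ = ∫ x, |f x - fm m x| ∂μ :=
            integral_congr_ae (Eventually.of_forall fun x => abs_sub_comm _ _)
    calc |∫ x in A, bLim T f x ∂μ - ∫ x in A, f x ∂μ|
        ≤ |∫ x in A, bLim T f x ∂μ - ∫ x in A, bLim T (fm m) x ∂μ| +
          |∫ x in A, bLim T (fm m) x ∂μ - ∫ x in A, f x ∂μ| := abs_sub_le _ _ _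
      _ ≤ ∫ x, |f x - fm m x| ∂μ + ∫ x, |f x - fm m x| ∂μ := by
          rw [e1] at *
          exact add_le_add e2 e3
      _ = 2 * ∫ x, |f x - fm m x| ∂μ := by ring
  have h0 : Tendsto (fun m : ℕ => 2 * ∫ x, |f x - fm m x| ∂μ) atTop (nhds 0) := by
    simpa using hL1.const_mul 2
  have hle : |∫ x in A, bLim T f x ∂μ - ∫ x in A, f x ∂μ| ≤ 0 :=
    ge_of_tendsto h0 (Eventually.of_forall hkey)
  have := abs_nonneg (∫ x in A, bLim T f x ∂μ - ∫ x in A, f x ∂μ)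
  have habs0 : |∫ x in A, bLim T f x ∂μ - ∫ x in A, f x ∂μ| = 0 := le_antisymm hle this
  have := abs_eq_zero.1 habs0
  linarith [sub_eq_zero.1 this]

end SetIntegral

section Condexp

variable {X : Type*} [MeasurableSpace X] {μ : Measure X} [IsProbabilityMeasure μ]
  {T : X → X} {f : X → ℝ}

theorem bLim_ae_eq_condexp (hT : MeasurePreserving T μ μ) (hm : Measurable f)
    (hf : Integrable f μ) : bLim T f =ᵐ[μ] μ[f | invariantSigma T] := by
  haveI : SigmaFinite (μ.trim (invariantSigma_le T)) := by infer_instance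
  exact ae_eq_condExp_of_forall_setIntegral_eq (invariantSigma_le T) hf
    (fun s _ _ => (bLim_integrable hT hm hf).integrableOn)
    (fun s hs _ => setIntegral_bLim hT hm hf hs.1 hs.2)
    (StronglyMeasurable.aestronglyMeasurable (bLim_stronglyMeasurable_inv hT.measurable hm))

/-- **Birkhoff pointwise ergodic theorem.** -/
theorem birkhoff_ae_condexp (hT : MeasurePreserving T μ μ) (hf : Integrable f μ) :
    ∀ᵐ x ∂μ, Tendsto (fun n : ℕ => (n : ℝ)⁻¹ * birkhoffSum T f n x) atTop
      (nhds ((μ[f | invariantSigma T]) x)) := by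
  have hmk : f =ᵐ[μ] hf.1.mk f := hf.1.ae_eq_mk
  have hm' : Measurable (hf.1.mk f) := hf.1.stronglyMeasurable_mk.measurable
  have hi' : Integrable (hf.1.mk f) μ := hf.congr hmk
  have h1 := birkhoff_ae_tendsto hT hm' hi'
  have h2 := bLim_ae_eq_condexp hT hm' hi'
  have h3 : μ[hf.1.mk f | invariantSigma T] =ᵐ[μ] μ[f | invariantSigma T] :=
    condExp_congr_ae hmk.symm
  have h4 : ∀ᵐ x ∂μ, ∀ k : ℕ, hf.1.mk f (T^[k] x) = f (T^[k] x) := by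
    rw [ae_all_iff]
    intro k
    exact ((hT.iterate k).quasiMeasurePreserving.ae_eq_comp hmk.symm).mono fun x hx => hx
  filter_upwards [h1, h2, h3, h4] with x hx1 hx2 hx3 hx4
  have hsum : ∀ n : ℕ, birkhoffSum T (hf.1.mk f) n x = birkhoffSum T f n x := fun n =>
    Finset.sum_congr rfl fun k _ => hx4 k
  rw [← hx3, ← hx2]
  exact hx1.congr fun n => by rw [hsum n]

end Condexp


/-- **A strengthened Birkhoff theorem.**
Let `T` be measure preserving on a probability space `(X, ℬ, μ)`, `(G_n) ⊂ L¹(μ)`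
with `G_n → G` a.e. and `G* = sup_n |G_n| ∈ L¹(μ)`.  Then
`(1/n) ∑_{k<n} |G_{n-k} - G|∘T^k → 0` a.e., and in particular
`(1/n) ∑_{k<n} G_{n-k}∘T^k → 𝔼(G|ℐ)` a.e., with `ℐ` the invariant σ-field. -/

theorem strengthened_birkhoff {X : Type*} [MeasurableSpace X]
    (μ : Measure X) [IsProbabilityMeasure μ] (T : X → X)
    (hT : MeasurePreserving T μ μ)
    (G : ℕ → X → ℝ) (Glim : X → ℝ)
    (hint : ∀ n, Integrable (G n) μ)
    (hae : ∀ᵐ x ∂μ, Tendsto (fun n => G n x) atTop (nhds (Glim x)))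
    (hbdd : ∀ᵐ x ∂μ, BddAbove (Set.range fun n => |G n x|))
    (hstar : Integrable (fun x => ⨆ n, |G n x|) μ) :
    (∀ᵐ x ∂μ, Tendsto (fun n : ℕ =>
        (n : ℝ)⁻¹ * ∑ k ∈ Finset.range n, |G (n - k) (T^[k] x) - Glim (T^[k] x)|)
        atTop (nhds 0)) ∧
    (∀ᵐ x ∂μ, Tendsto (fun n : ℕ =>
        (n : ℝ)⁻¹ * ∑ k ∈ Finset.range n, G (n - k) (T^[k] x))
        atTop (nhds ((μ[Glim | invariantSigma T]) x))) := by
  classical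
  -- measurable representatives
  set G' : ℕ → X → ℝ := fun n => (hint n).1.mk (G n) with hG'def
  have hGmk : ∀ n, G n =ᵐ[μ] G' n := fun n => (hint n).1.ae_eq_mk
  have hGm : ∀ n, Measurable (G' n) := fun n => (hint n).1.stronglyMeasurable_mk.measurable
  have hGlim_aesm : AEStronglyMeasurable Glim μ :=
    aestronglyMeasurable_of_tendsto_ae atTop (fun n => (hint n).1) hae
  set L : X → ℝ := hGlim_aesm.mk Glim with hLdef
  have hLmk : Glim =ᵐ[μ] L := hGlim_aesm.ae_eq_mk
  have hLm : Measurable L := hGlim_aesm.stronglyMeasurable_mk.measurable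
  have hGlimInt : Integrable Glim μ := by
    refine hstar.mono' hGlim_aesm ?_
    filter_upwards [hae, hbdd] with x h1 h2
    rw [Real.norm_eq_abs]
    exact le_of_tendsto h1.abs (Eventually.of_forall fun n => le_ciSup h2 n)
  -- dominating decreasing functions
  set FE : ℕ → X → ℝ≥0∞ := fun N x => ⨆ n, (‖G' (n + N) x - L x‖₊ : ℝ≥0∞) with hFEdef
  have hFEm : ∀ N, Measurable (FE N) := fun N =>
    Measurable.iSup fun n => ((hGm (n + N)).sub hLm).nnnorm.coe_nnreal_ennreal
  set F : ℕ → X → ℝ := fun N x => (FE N x).toReal with hFdef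
  have hFm : ∀ N, Measurable (F N) := fun N => (hFEm N).ennreal_toReal
  have hF0 : ∀ N x, 0 ≤ F N x := fun N x => ENNReal.toReal_nonneg
  -- good points
  set Good : X → Prop := fun y => (∀ n, G' n y = G n y) ∧ L y = Glim y ∧
      Tendsto (fun n => G n y) atTop (nhds (Glim y)) ∧
      BddAbove (Set.range fun n => |G n y|) with hGooddef
  have hgood : ∀ᵐ y ∂μ, Good y := by
    have h1 : ∀ᵐ y ∂μ, ∀ n, G' n y = G n y := ae_all_iff.2 fun n => (hGmk n).symm
    filter_upwards [h1, hLmk.symm, hae, hbdd] with y a b c d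
    exact ⟨a, b, c, d⟩
  have hgoodk : ∀ᵐ x ∂μ, ∀ k : ℕ, Good (T^[k] x) :=
    ae_all_iff.2 fun k => ae_of_ae_map (hT.measurable.iterate k).aemeasurable
      (by rw [(hT.iterate k).map_eq]; exact hgood)
  -- facts at good points
  have hsupnn : ∀ y, Good y → 0 ≤ ⨆ n, |G n y| := by
    intro y hy
    exact le_trans (abs_nonneg (G 0 y)) (le_ciSup hy.2.2.2 0)
  have hFEle : ∀ y, Good y → ∀ N, FE N y ≤ ENNReal.ofReal ((⨆ n, |G n y|) + |Glim y|) := by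
    intro y hy N
    refine iSup_le fun n => ?_
    rw [hy.1 (n + N), hy.2.1, ← enorm_eq_nnnorm, ← ofReal_norm]
    refine ENNReal.ofReal_le_ofReal ?_
    rw [Real.norm_eq_abs]
    calc |G (n + N) y - Glim y| ≤ |G (n + N) y| + |Glim y| := abs_sub _ _
      _ ≤ (⨆ m, |G m y|) + |Glim y| := by
          have := le_ciSup hy.2.2.2 (n + N)
          linarith
  have hFEfin : ∀ y, Good y → ∀ N, FE N y ≠ ⊤ := fun y hy N =>
    ((hFEle y hy N).trans_lt ENNReal.ofReal_lt_top).ne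
  have hFbound : ∀ y, Good y → ∀ N, F N y ≤ (⨆ n, |G n y|) + |Glim y| := by
    intro y hy N
    refine ENNReal.toReal_le_of_le_ofReal ?_ (hFEle y hy N)
    have := hsupnn y hy
    positivity
  have hFterm : ∀ y, Good y → ∀ N m, N ≤ m → |G m y - Glim y| ≤ F N y := by
    intro y hy N m hNm
    have h1 : (‖G' ((m - N) + N) y - L y‖₊ : ℝ≥0∞) ≤ FE N y :=
      le_iSup (fun n => (‖G' (n + N) y - L y‖₊ : ℝ≥0∞)) (m - N)
    rw [Nat.sub_add_cancel hNm] at h1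
    have h2 := ENNReal.toReal_mono (hFEfin y hy N) h1
    rw [ENNReal.coe_toReal, coe_nnnorm, Real.norm_eq_abs, hy.1 m, hy.2.1] at h2
    exact h2
  have hFtend : ∀ y, Good y → Tendsto (fun N => F N y) atTop (nhds 0) := by
    intro y hy
    rw [Metric.tendsto_atTop]
    intro ε hε
    obtain ⟨N₀, hN₀⟩ := Metric.tendsto_atTop.1 hy.2.2.1 (ε / 2) (by positivity)
    refine ⟨N₀, fun N hN => ?_⟩
    have hFE : FE N y ≤ ENNReal.ofReal (ε / 2) := by
      refine iSup_le fun n => ?_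
      have h1 := hN₀ (n + N) (hN.trans (Nat.le_add_left N n))
      rw [Real.dist_eq] at h1
      rw [hy.1 (n + N), hy.2.1, ← enorm_eq_nnnorm, ← ofReal_norm, Real.norm_eq_abs]
      exact ENNReal.ofReal_le_ofReal h1.le
    have h2 : F N y ≤ ε / 2 := ENNReal.toReal_le_of_le_ofReal (by positivity) hFE
    rw [Real.dist_eq, sub_zero, abs_of_nonneg (hF0 N y)]
    linarith
  -- integrability of the F N
  have hFi : ∀ N, Integrable (F N) μ := by
    intro N
    refine (hstar.add hGlimInt.abs).mono' (hFm N).aestronglyMeasurable ?_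
    filter_upwards [hgood] with y hy
    rw [Real.norm_eq_abs, abs_of_nonneg (hF0 N y)]
    exact hFbound y hy N
  -- conditional expectations
  set eN : ℕ → X → ℝ := fun N => μ[F N | invariantSigma T] with heNdef
  have hBk : ∀ᵐ x ∂μ, ∀ N : ℕ, Tendsto (fun n : ℕ => (n : ℝ)⁻¹ * birkhoffSum T (F N) n x)
      atTop (nhds (eN N x)) := ae_all_iff.2 fun N => birkhoff_ae_condexp hT (hFi N)
  have hBL : ∀ᵐ x ∂μ, Tendsto (fun n : ℕ => (n : ℝ)⁻¹ * birkhoffSum T Glim n x)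
      atTop (nhds ((μ[Glim | invariantSigma T]) x)) := birkhoff_ae_condexp hT hGlimInt
  have heNpos : ∀ N, 0 ≤ᵐ[μ] eN N := fun N =>
    condExp_nonneg (Eventually.of_forall fun x => hF0 N x)
  have hInt0 : Tendsto (fun N => ∫ x, F N x ∂μ) atTop (nhds 0) := by
    have hDCT := tendsto_integral_of_dominated_convergence (μ := μ)
      (F := fun N x => F N x) (f := fun _ => (0 : ℝ))
      (bound := fun x => (⨆ n, |G n x|) + |Glim x|)
      (fun N => (hFm N).aestronglyMeasurable)
      (hstar.add hGlimInt.abs)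
      (fun N => by
        filter_upwards [hgood] with y hy
        rw [Real.norm_eq_abs, abs_of_nonneg (hF0 N y)]
        exact hFbound y hy N)
      (by filter_upwards [hgood] with y hy; exact hFtend y hy)
    simpa using hDCT
  have heps : ∀ᵐ x ∂μ, ∀ j : ℕ, ∃ N, eN N x < 1 / ((j : ℝ) + 1) := by
    rw [ae_all_iff]
    intro j
    set c : ℝ := 1 / ((j : ℝ) + 1) with hcdef
    have hc : 0 < c := by positivity
    set A : Set X := ⋂ N, {x | c ≤ eN N x} with hAdef
    have heNm : ∀ N, Measurable (eN N) :=
      fun N => (stronglyMeasurable_condExp.mono (invariantSigma_le T)).measurable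
    have hA : MeasurableSet A :=
      MeasurableSet.iInter fun N => measurableSet_le measurable_const (heNm N)
    have hkey : ∀ N, c * (μ A).toReal ≤ ∫ x, F N x ∂μ := by
      intro N
      have h1 : ∫ x in A, c ∂μ ≤ ∫ x in A, eN N x ∂μ := by
        refine setIntegral_mono_on (integrableOn_const (measure_ne_top μ A))
          integrable_condExp.integrableOn hA fun x hx => ?_
        exact Set.mem_iInter.1 hx N
      rw [setIntegral_const, measureReal_def, smul_eq_mul, mul_comm] at h1
      have h2 : ∫ x in A, eN N x ∂μ ≤ ∫ x, eN N x ∂μ :=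
        setIntegral_le_integral integrable_condExp (heNpos N)
      have h3 : ∫ x, eN N x ∂μ = ∫ x, F N x ∂μ := integral_condExp (invariantSigma_le T)
      linarith
    have hA0 : (μ A).toReal = 0 := by
      have hle : c * (μ A).toReal ≤ 0 :=
        ge_of_tendsto hInt0 (Eventually.of_forall hkey)
      nlinarith [ENNReal.toReal_nonneg (a := μ A)]
    have hA0' : μ A = 0 :=
      ((ENNReal.toReal_eq_zero_iff _).1 hA0).resolve_right (measure_ne_top μ A)
    rw [ae_iff]
    refine measure_mono_null (fun x hx => ?_) hA0'
    simp only [Set.mem_setOf_eq, not_exists, not_lt] at hx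
    exact Set.mem_iInter.2 fun N => hx N
  -- main pointwise argument
  have main : ∀ᵐ x ∂μ,
      (Tendsto (fun n : ℕ =>
        (n : ℝ)⁻¹ * ∑ k ∈ Finset.range n, |G (n - k) (T^[k] x) - Glim (T^[k] x)|)
        atTop (nhds 0)) ∧
      (Tendsto (fun n : ℕ =>
        (n : ℝ)⁻¹ * ∑ k ∈ Finset.range n, G (n - k) (T^[k] x))
        atTop (nhds ((μ[Glim | invariantSigma T]) x))) := by
    filter_upwards [hgoodk, hBk, hBL, heps] with x hgd hBkx hBLx hepsx
    set D : ℕ → ℝ := fun n =>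
      (n : ℝ)⁻¹ * ∑ k ∈ Finset.range n, |G (n - k) (T^[k] x) - Glim (T^[k] x)| with hDdef
    have hDnonneg : ∀ n, 0 ≤ D n := fun n =>
      mul_nonneg (by positivity) (Finset.sum_nonneg fun k _ => abs_nonneg _)
    have claim1 : Tendsto D atTop (nhds 0) := by
      rw [NormedAddCommGroup.tendsto_nhds_zero]
      intro ε hε
      obtain ⟨j, hj⟩ := exists_nat_one_div_lt (show (0 : ℝ) < ε / 3 by positivity)
      obtain ⟨N, hN⟩ := hepsx j
      have heNx : eN N x < ε / 3 := hN.trans hj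
      have hsplit : ∀ n : ℕ, D n ≤ (n : ℝ)⁻¹ * birkhoffSum T (F N) n x +
          ((n : ℝ)⁻¹ * birkhoffSum T (F 0) n x -
           (n : ℝ)⁻¹ * birkhoffSum T (F 0) (n - N) x) := by
        intro n
        have hterm : ∀ k ∈ Finset.range n,
            |G (n - k) (T^[k] x) - Glim (T^[k] x)| ≤
            F N (T^[k] x) + (F 0 (T^[k] x) - if k < n - N then F 0 (T^[k] x) else 0) := by
          intro k hk
          have hgdk := hgd k
          by_cases hcase : k < n - N
          · have h1 : N ≤ n - k := by omega
            have h2 := hFterm _ hgdk N (n - k) h1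
            rw [if_pos hcase]
            linarith
          · have h2 := hFterm _ hgdk 0 (n - k) (Nat.zero_le _)
            rw [if_neg hcase]
            have := hF0 N (T^[k] x)
            linarith
        have hsum1 : ∑ k ∈ Finset.range n, |G (n - k) (T^[k] x) - Glim (T^[k] x)| ≤
            ∑ k ∈ Finset.range n, (F N (T^[k] x) +
              (F 0 (T^[k] x) - if k < n - N then F 0 (T^[k] x) else 0)) :=
          Finset.sum_le_sum hterm
        have hsum2 : ∑ k ∈ Finset.range n, (if k < n - N then F 0 (T^[k] x) else 0) =
            ∑ k ∈ Finset.range (n - N), F 0 (T^[k] x) := by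
          rw [← Finset.sum_subset (Finset.range_subset_range.2 (Nat.sub_le n N))
            (fun k _ hk => if_neg (by simpa using hk))]
          exact Finset.sum_congr rfl fun k hk => if_pos (Finset.mem_range.1 hk)
        have hexp : ∑ k ∈ Finset.range n, (F N (T^[k] x) +
              (F 0 (T^[k] x) - if k < n - N then F 0 (T^[k] x) else 0)) =
            birkhoffSum T (F N) n x + (birkhoffSum T (F 0) n x -
              birkhoffSum T (F 0) (n - N) x) := by
          rw [Finset.sum_add_distrib, Finset.sum_sub_distrib, hsum2]
          rfl
        rw [hexp] at hsum1
        have h3 : (0 : ℝ) ≤ (n : ℝ)⁻¹ := by positivity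
        calc D n ≤ (n : ℝ)⁻¹ * (birkhoffSum T (F N) n x + (birkhoffSum T (F 0) n x -
              birkhoffSum T (F 0) (n - N) x)) := mul_le_mul_of_nonneg_left hsum1 h3
          _ = _ := by ring
      have hc1 : Tendsto (fun n : ℕ => (n : ℝ)⁻¹ * birkhoffSum T (F N) n x) atTop
          (nhds (eN N x)) := hBkx N
      have hc2 : Tendsto (fun n : ℕ => (n : ℝ)⁻¹ * birkhoffSum T (F 0) n x) atTop
          (nhds (eN 0 x)) := hBkx 0
      have hc3 : Tendsto (fun n : ℕ => (n : ℝ)⁻¹ * birkhoffSum T (F 0) (n - N) x) atTop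
          (nhds (eN 0 x)) := by
        have hratio : Tendsto (fun n : ℕ => ((n - N : ℕ) : ℝ) / (n : ℝ)) atTop (nhds 1) := by
          have h1 : Tendsto (fun n : ℕ => 1 - (N : ℝ) / (n : ℝ)) atTop (nhds 1) := by
            have h2 : Tendsto (fun n : ℕ => (N : ℝ) / (n : ℝ)) atTop (nhds 0) :=
              tendsto_const_nhds.div_atTop tendsto_natCast_atTop_atTop
            simpa using tendsto_const_nhds.sub h2
          refine h1.congr' ?_
          filter_upwards [eventually_ge_atTop N, eventually_ge_atTop 1] with n h1n h2n
          have hn0 : (n : ℝ) ≠ 0 := by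
            have : (0:ℝ) < n := by exact_mod_cast h2n
            exact this.ne'
          rw [Nat.cast_sub h1n]
          field_simp
        have hcomp : Tendsto (fun n : ℕ =>
            ((n - N : ℕ) : ℝ)⁻¹ * birkhoffSum T (F 0) (n - N) x) atTop (nhds (eN 0 x)) :=
          (hBkx 0).comp (tendsto_sub_atTop_nat N)
        have hmul := hratio.mul hcomp
        rw [one_mul] at hmul
        refine hmul.congr' ?_
        filter_upwards [eventually_ge_atTop (N + 1)] with n hn
        have h2 : ((n - N : ℕ) : ℝ) ≠ 0 := by
          have : 1 ≤ n - N := by omega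
          have : (0:ℝ) < ((n - N : ℕ) : ℝ) := by exact_mod_cast this
          exact this.ne'
        have h3 : (n : ℝ) ≠ 0 := by
          have : (0:ℝ) < n := by exact_mod_cast (by omega : 0 < n)
          exact this.ne'
        field_simp
      have htail : Tendsto (fun n : ℕ => (n : ℝ)⁻¹ * birkhoffSum T (F 0) n x -
          (n : ℝ)⁻¹ * birkhoffSum T (F 0) (n - N) x) atTop (nhds 0) := by
        simpa using hc2.sub hc3
      have hev1 : ∀ᶠ n : ℕ in atTop,
          (n : ℝ)⁻¹ * birkhoffSum T (F N) n x < eN N x + ε / 3 :=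
        hc1.eventually_lt_const (by linarith)
      have hev2 : ∀ᶠ n : ℕ in atTop, (n : ℝ)⁻¹ * birkhoffSum T (F 0) n x -
          (n : ℝ)⁻¹ * birkhoffSum T (F 0) (n - N) x < ε / 3 :=
        htail.eventually_lt_const (by positivity)
      filter_upwards [hev1, hev2] with n h1 h2
      rw [Real.norm_eq_abs, abs_of_nonneg (hDnonneg n)]
      have := hsplit n
      linarith
    refine ⟨claim1, ?_⟩
    have hdiff : ∀ n : ℕ, ‖(n : ℝ)⁻¹ * ∑ k ∈ Finset.range n, G (n - k) (T^[k] x) -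
        (n : ℝ)⁻¹ * birkhoffSum T Glim n x‖ ≤ D n := by
      intro n
      rw [← mul_sub, Real.norm_eq_abs, abs_mul, abs_inv, Nat.abs_cast]
      refine mul_le_mul_of_nonneg_left ?_ (by positivity)
      rw [show birkhoffSum T Glim n x = ∑ k ∈ Finset.range n, Glim (T^[k] x) from rfl,
        ← Finset.sum_sub_distrib]
      exact Finset.abs_sum_le_sum_abs _ _
    have h0 : Tendsto (fun n : ℕ => (n : ℝ)⁻¹ * ∑ k ∈ Finset.range n, G (n - k) (T^[k] x) -
        (n : ℝ)⁻¹ * birkhoffSum T Glim n x) atTop (nhds 0) :=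
      squeeze_zero_norm hdiff claim1
    have hfin := h0.add hBLx
    rw [zero_add] at hfin
    refine hfin.congr fun n => ?_
    ring
  exact ⟨main.mono fun x hx => hx.1, main.mono fun x hx => hx.2⟩
end

section
/- (Salem–Zygmund.) There is an absolute constant C such that for every N ≥ 2, every sequence of complex scalars a_1, …, a_N, and a Rademacher sequence (r_n) (independent random variables with P(r_n = 1) = P(r_n = −1) = 1/2), the random trigonometric polynomial Q_N(x) = ∑_{n=1}^N r_n a_n e(nx) satisfies 𝔼(‖Q_N‖_∞) ≤ C (∑_{n=1}^N |a_n|²)^{1/2} √(log N), where ‖·‖_∞ is the supremum norm over x ∈ 𝕋. -/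
open Real Filter MeasureTheory ProbabilityTheory Finset

namespace SZ
variable {Ω : Type} [MeasurableSpace Ω] {P : Measure Ω}

lemma mgf_single [IsProbabilityMeasure P] {r : Ω → ℝ} (hr : Measurable r)
    (h1 : P {ω | r ω = 1} = 1/2) (h2 : P {ω | r ω = -1} = 1/2) (s : ℝ) :
    ∫ ω, Real.exp (s * r ω) ∂P = Real.cosh s := by
  set A : Set Ω := r ⁻¹' {1} with hA
  set B : Set Ω := r ⁻¹' {-1} with hB
  have hAm : MeasurableSet A := hr (measurableSet_singleton 1)
  have hBm : MeasurableSet B := hr (measurableSet_singleton (-1))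
  have hPA : P A = 1/2 := h1
  have hPB : P B = 1/2 := h2
  have hdisj : Disjoint A B := by
    refine Set.disjoint_left.2 fun ω hω1 hω2 => ?_
    simp only [hA, hB, Set.mem_preimage, Set.mem_singleton_iff] at hω1 hω2
    norm_num [hω1] at hω2
  have hunion : P (A ∪ B) = 1 := by
    rw [measure_union hdisj hBm, hPA, hPB, ENNReal.add_halves]
  have hae : ∀ᵐ ω ∂P, ω ∈ A ∪ B := by
    rw [MeasureTheory.ae_iff]
    have : {ω | ¬ ω ∈ A ∪ B} = (A ∪ B)ᶜ := rfl
    rw [this, measure_compl (hAm.union hBm) (measure_ne_top _ _), hunion]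
    simp
  have hcongr : (fun ω => Real.exp (s * r ω)) =ᵐ[P]
      (fun ω => A.indicator (fun _ => Real.exp s) ω + B.indicator (fun _ => Real.exp (-s)) ω) := by
    filter_upwards [hae] with ω hω
    rcases hω with hω | hω
    · have hr1 : r ω = 1 := hω
      have hnB : ω ∉ B := by
        simp only [hB, Set.mem_preimage, Set.mem_singleton_iff, hr1]; norm_num
      simp [Set.indicator_of_mem hω, Set.indicator_of_notMem hnB, hr1]
    · have hr1 : r ω = -1 := hω
      have hnA : ω ∉ A := by
        simp only [hA, Set.mem_preimage, Set.mem_singleton_iff, hr1]; norm_num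
      simp [Set.indicator_of_mem hω, Set.indicator_of_notMem hnA, hr1]
  rw [integral_congr_ae hcongr, integral_add ((integrable_const _).indicator hAm)
    ((integrable_const _).indicator hBm), integral_indicator_const _ hAm,
    integral_indicator_const _ hBm, measureReal_def, measureReal_def, hPA, hPB, Real.cosh_eq]
  simp [ENNReal.toReal_div]
  ring

lemma exp_lip (n : ℕ) (x y : ℝ) :
    ‖Complex.exp (2*π*Complex.I*(n*x)) - Complex.exp (2*π*Complex.I*(n*y))‖
      ≤ 2*π*n*|x-y| := by
  set c : ℂ := 2*π*Complex.I*n with hc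
  have hderiv : ∀ z : ℝ, HasDerivAt (fun t : ℝ => Complex.exp (c * t))
      (Complex.exp (c * z) * c) z := by
    intro z
    have h0 : HasDerivAt (fun t : ℝ => c * (t:ℂ)) c z := by
      simpa using Complex.ofRealCLM.hasDerivAt.const_mul c
    exact h0.cexp
  have hre : ∀ z : ℝ, (c * (z:ℂ)).re = 0 := by
    intro z
    simp [hc, Complex.mul_re, Complex.mul_im]
  have hbound : ∀ z ∈ (Set.univ : Set ℝ), ‖Complex.exp (c * z) * c‖ ≤ 2*π*n := by
    intro z _
    rw [norm_mul, Complex.norm_exp, hre z,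
      Real.exp_zero, one_mul, hc]
    simp [map_mul, abs_of_nonneg Real.pi_pos.le]
  have key := Convex.norm_image_sub_le_of_norm_hasDerivWithin_le
    (f := fun t : ℝ => Complex.exp (c * t)) (f' := fun z => Complex.exp (c * z) * c)
    (fun z _ => (hderiv z).hasDerivWithinAt) hbound convex_univ (Set.mem_univ y) (Set.mem_univ x)
  have hrw : ∀ t : ℝ, c * (t:ℂ) = 2*π*Complex.I*(n*t) := by intro t; rw [hc]; ring
  calc ‖Complex.exp (2*π*Complex.I*(n*x)) - Complex.exp (2*π*Complex.I*(n*y))‖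
      = ‖Complex.exp (c*x) - Complex.exp (c*y)‖ := by rw [hrw x, hrw y]
    _ ≤ 2*π*n * ‖x - y‖ := key
    _ = 2*π*n*|x-y| := by rw [Real.norm_eq_abs]

end SZ

namespace SZ
variable {Ω : Type} [MeasurableSpace Ω] {P : Measure Ω}

lemma mgf_rademacher [IsProbabilityMeasure P] {r : ℕ → Ω → ℝ} (hmeas : ∀ n, Measurable (r n))
    (hindep : iIndepFun r P)
    (h1 : ∀ n, P {ω | r n ω = 1} = 1/2) (h2 : ∀ n, P {ω | r n ω = -1} = 1/2)
    (s : Finset ℕ) (c : ℕ → ℝ) (t : ℝ) :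
    ∫ ω, Real.exp (t * ∑ n ∈ s, c n * r n ω) ∂P
      ≤ Real.exp (t^2 * (∑ n ∈ s, (c n)^2) / 2) := by
  set X : ℕ → Ω → ℝ := fun n ω => c n * r n ω with hX
  have hXmeas : ∀ n, Measurable (X n) := fun n => (hmeas n).const_mul _
  have hXindep : iIndepFun X P := by
    have := hindep.comp (g := fun n (x : ℝ) => c n * x) (fun n => measurable_const_mul _)
    exact this
  have heq : ∫ ω, Real.exp (t * ∑ n ∈ s, c n * r n ω) ∂P = mgf (∑ n ∈ s, X n) P t := by
    unfold mgf
    congr 1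
    ext ω
    simp [hX]
  rw [heq, iIndepFun.mgf_sum hXindep hXmeas s]
  have hterm : ∀ n ∈ s, mgf (X n) P t ≤ Real.exp ((t * c n)^2 / 2) := by
    intro n _
    have : mgf (X n) P t = Real.cosh (t * c n) := by
      unfold mgf
      rw [← mgf_single (hmeas n) (h1 n) (h2 n) (t * c n)]
      congr 1; ext ω; rw [hX]; ring_nf
    rw [this]
    exact Real.cosh_le_exp_half_sq _
  calc ∏ n ∈ s, mgf (X n) P t ≤ ∏ n ∈ s, Real.exp ((t * c n)^2 / 2) := by
        refine Finset.prod_le_prod (fun n _ => ?_) hterm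
        exact mgf_nonneg
    _ = Real.exp (∑ n ∈ s, (t * c n)^2 / 2) := by rw [Real.exp_sum]
    _ = Real.exp (t^2 * (∑ n ∈ s, (c n)^2) / 2) := by
        congr 1
        rw [Finset.mul_sum, Finset.sum_div]
        congr 1; ext n; ring

lemma expectation_max_le [IsProbabilityMeasure P] {ι : Type*} (I : Finset ι) (hI : I.Nonempty)
    (Y : ι → Ω → ℝ) (hYmeas : ∀ i, Measurable (Y i)) (B : ℝ)
    (hbdd : ∀ᵐ ω ∂P, ∀ i ∈ I, |Y i ω| ≤ B)
    {t : ℝ} (ht : 0 < t) {K : ℝ} (hK : 1 ≤ K)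
    (hmgf : ∀ i ∈ I, ∫ ω, Real.exp (t * Y i ω) ∂P ≤ K) :
    ∫ ω, I.sup' hI (fun i => Y i ω) ∂P ≤ Real.log (I.card * K) / t := by
  set Z : Ω → ℝ := fun ω => I.sup' hI (fun i => Y i ω) with hZ
  have hZmeas : Measurable Z := by
    have h := Finset.measurable_sup' hI (fun i (_ : i ∈ I) => hYmeas i)
    have hzz : Z = I.sup' hI Y := by ext ω; rw [Finset.sup'_apply]
    rwa [hzz]
  have hZbdd : ∀ᵐ ω ∂P, |Z ω| ≤ B := by
    filter_upwards [hbdd] with ω hω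
    rw [abs_le]
    constructor
    · obtain ⟨i, hi⟩ := hI
      have h1 : -B ≤ Y i ω := (abs_le.1 (hω i hi)).1
      exact le_trans h1 (Finset.le_sup' (fun i => Y i ω) hi)
    · refine Finset.sup'_le hI _ fun i hi => le_of_abs_le (hω i hi)
  have hZint : Integrable Z P := by
    refine Integrable.mono' (integrable_const B) hZmeas.aestronglyMeasurable ?_
    filter_upwards [hZbdd] with ω hω
    rwa [Real.norm_eq_abs]
  -- exp (t Z) bounds
  have hexp_le : ∀ ω, Real.exp (t * Z ω) ≤ ∑ i ∈ I, Real.exp (t * Y i ω) := by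
    intro ω
    obtain ⟨i0, hi0, hEq⟩ := Finset.exists_mem_eq_sup' hI (fun i => Y i ω)
    rw [hZ]
    simp only
    rw [hEq]
    exact Finset.single_le_sum (f := fun i => Real.exp (t * Y i ω))
      (fun i _ => (Real.exp_pos _).le) hi0
  have hexpZint : Integrable (fun ω => Real.exp (t * Z ω)) P := by
    refine Integrable.mono' (integrable_const (Real.exp (t * B)))
      (((hZmeas.const_mul t).exp).aestronglyMeasurable) ?_
    filter_upwards [hZbdd] with ω hω
    rw [Real.norm_eq_abs, abs_of_pos (Real.exp_pos _)]
    exact Real.exp_le_exp.2 (mul_le_mul_of_nonneg_left (le_of_abs_le hω) ht.le)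
  have hexpYint : ∀ i ∈ I, Integrable (fun ω => Real.exp (t * Y i ω)) P := by
    intro i hi
    refine Integrable.mono' (integrable_const (Real.exp (t * B)))
      ((((hYmeas i).const_mul t).exp).aestronglyMeasurable) ?_
    filter_upwards [hbdd] with ω hω
    rw [Real.norm_eq_abs, abs_of_pos (Real.exp_pos _)]
    exact Real.exp_le_exp.2 (mul_le_mul_of_nonneg_left (le_of_abs_le (hω i hi)) ht.le)
  -- Jensen
  have hjensen : Real.exp (t * ∫ ω, Z ω ∂P) ≤ ∫ ω, Real.exp (t * Z ω) ∂P := by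
    have hconv : ConvexOn ℝ Set.univ Real.exp := convexOn_exp
    have := hconv.map_integral_le (f := fun ω => t * Z ω) (μ := P)
      (Real.continuous_exp.continuousOn) isClosed_univ
      (Filter.Eventually.of_forall fun ω => Set.mem_univ _) (hZint.const_mul t)
      (by exact hexpZint)
    rwa [integral_const_mul] at this
  have hsum : ∫ ω, Real.exp (t * Z ω) ∂P ≤ I.card * K := by
    calc ∫ ω, Real.exp (t * Z ω) ∂P
        ≤ ∫ ω, ∑ i ∈ I, Real.exp (t * Y i ω) ∂P := by
          refine integral_mono hexpZint (integrable_finset_sum I hexpYint) hexp_le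
      _ = ∑ i ∈ I, ∫ ω, Real.exp (t * Y i ω) ∂P := integral_finset_sum I hexpYint
      _ ≤ ∑ _i ∈ I, K := Finset.sum_le_sum hmgf
      _ = I.card * K := by rw [Finset.sum_const, nsmul_eq_mul]
  have hcard : (1:ℝ) ≤ I.card := by
    have := Finset.card_pos.2 hI
    exact_mod_cast this
  have hpos : (0:ℝ) < I.card * K := by nlinarith
  have : t * ∫ ω, Z ω ∂P ≤ Real.log (I.card * K) := by
    rw [Real.le_log_iff_exp_le hpos]
    exact le_trans hjensen hsum
  rw [le_div_iff₀ ht]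
  linarith

lemma rademacher_ae' [IsProbabilityMeasure P] {r : Ω → ℝ} (hr : Measurable r)
    (h1 : P {ω | r ω = 1} = 1/2) (h2 : P {ω | r ω = -1} = 1/2) :
    ∀ᵐ ω ∂P, r ω = 1 ∨ r ω = -1 := by
  set A : Set Ω := r ⁻¹' {1} with hA
  set B : Set Ω := r ⁻¹' {-1} with hB
  have hAm : MeasurableSet A := hr (measurableSet_singleton 1)
  have hBm : MeasurableSet B := hr (measurableSet_singleton (-1))
  have hdisj : Disjoint A B := by
    refine Set.disjoint_left.2 fun ω hω1 hω2 => ?_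
    simp only [hA, hB, Set.mem_preimage, Set.mem_singleton_iff] at hω1 hω2
    norm_num [hω1] at hω2
  have hunion : P (A ∪ B) = 1 := by
    have hPA : P A = 1/2 := h1
    have hPB : P B = 1/2 := h2
    rw [measure_union hdisj hBm, hPA, hPB, ENNReal.add_halves]
  rw [MeasureTheory.ae_iff]
  have : {ω | ¬ (r ω = 1 ∨ r ω = -1)} = (A ∪ B)ᶜ := by
    ext ω; simp [hA, hB, not_or]
  rw [this, measure_compl (hAm.union hBm) (measure_ne_top _ _), hunion]
  simp

lemma norm_e (n : ℕ) (x : ℝ) : ‖Complex.exp (2*π*Complex.I*(n*x))‖ = 1 := by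
  rw [Complex.norm_exp]
  have : (2*(π:ℂ)*Complex.I*(n*x)).re = 0 := by
    simp [Complex.mul_re, Complex.mul_im]
  rw [this, Real.exp_zero]

end SZ

namespace SZ
variable {Ω : Type} [MeasurableSpace Ω] {P : Measure Ω}

lemma integrable_sup' [IsProbabilityMeasure P] {ι : Type*} (I : Finset ι) (hI : I.Nonempty)
    (Y : ι → Ω → ℝ) (hYmeas : ∀ i, Measurable (Y i)) {B : ℝ}
    (hbdd : ∀ᵐ ω ∂P, ∀ i ∈ I, |Y i ω| ≤ B) :
    Integrable (fun ω => I.sup' hI (fun i => Y i ω)) P := by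
  set Z : Ω → ℝ := fun ω => I.sup' hI (fun i => Y i ω) with hZ
  have hZmeas : Measurable Z := by
    have h := Finset.measurable_sup' hI (fun i (_ : i ∈ I) => hYmeas i)
    have hzz : Z = I.sup' hI Y := by ext ω; rw [Finset.sup'_apply]
    rwa [hzz]
  have hZbdd : ∀ᵐ ω ∂P, |Z ω| ≤ B := by
    filter_upwards [hbdd] with ω hω
    rw [abs_le]
    constructor
    · obtain ⟨i, hi⟩ := hI
      have h1 : -B ≤ Y i ω := (abs_le.1 (hω i hi)).1
      exact le_trans h1 (Finset.le_sup' (fun i => Y i ω) hi)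
    · refine Finset.sup'_le hI _ fun i hi => le_of_abs_le (hω i hi)
  refine Integrable.mono' (integrable_const B) hZmeas.aestronglyMeasurable ?_
  filter_upwards [hZbdd] with ω hω
  rwa [Real.norm_eq_abs]

end SZ

open SZ

set_option maxHeartbeats 2000000 in
/-- **Salem–Zygmund inequality.**
There is an absolute constant `C` such that for every Rademacher sequence `(r_n)`
(independent, `P(r_n = 1) = P(r_n = −1) = 1/2`), every `N ≥ 2` and all complex
scalars `a_1, …, a_N`, the random polynomial `Q_N(x) = ∑_{n=1}^N r_n a_n e(nx)`
satisfies `𝔼 ‖Q_N‖_∞ ≤ C (∑ |a_n|²)^{1/2} √(log N)`. -/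
theorem salem_zygmund :
    ∃ C : ℝ, 0 < C ∧
      ∀ (Ω : Type) (_ : MeasurableSpace Ω) (P : Measure Ω),
        IsProbabilityMeasure P →
        ∀ r : ℕ → Ω → ℝ, (∀ n, Measurable (r n)) →
          iIndepFun r P →
          (∀ n, P {ω | r n ω = 1} = 1 / 2) →
          (∀ n, P {ω | r n ω = -1} = 1 / 2) →
          ∀ N : ℕ, 2 ≤ N → ∀ a : ℕ → ℂ,
            (∫ ω, (⨆ x : ℝ, ‖∑ n ∈ Finset.Icc 1 N,
                (r n ω : ℂ) * a n * Complex.exp (2 * Real.pi * Complex.I * (n * x))‖) ∂P)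
              ≤ C * Real.sqrt (∑ n ∈ Finset.Icc 1 N, ‖a n‖ ^ 2) * Real.sqrt (Real.log N) := by
  classical
  refine ⟨100, by norm_num, ?_⟩
  intro Ω mΩ P hP r hrmeas hindep h1 h2 N hN a
  set s : Finset ℕ := Finset.Icc 1 N with hs
  set S2 : ℝ := ∑ n ∈ s, ‖a n‖ ^ 2 with hS2
  set σ : ℝ := Real.sqrt S2 with hσdef
  set w : ℝ := Real.sqrt (Real.log N) with hwdef
  have hS2nonneg : 0 ≤ S2 := Finset.sum_nonneg fun n _ => sq_nonneg _
  have hN2 : (2:ℝ) ≤ (N:ℝ) := by exact_mod_cast hN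
  have hlogN2 : Real.log 2 ≤ Real.log N := Real.log_le_log (by norm_num) hN2
  have hlogNpos : 0 < Real.log N := lt_of_lt_of_le (Real.log_pos (by norm_num)) hlogN2
  have hwpos : 0 < w := Real.sqrt_pos.2 hlogNpos
  -- trivial case
  by_cases hS0 : S2 = 0
  · have hzero : ∀ n ∈ s, a n = 0 := by
      intro n hn
      have := (Finset.sum_eq_zero_iff_of_nonneg (fun m _ => sq_nonneg ‖a m‖)).1 hS0 n hn
      have : ‖a n‖ = 0 := by nlinarith [norm_nonneg (a n), sq_nonneg ‖a n‖]
      exact norm_eq_zero.1 this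
    have hz : ∀ ω : Ω, (⨆ x : ℝ, ‖∑ n ∈ s, (r n ω : ℂ) * a n *
        Complex.exp (2 * Real.pi * Complex.I * (n * x))‖) = 0 := by
      intro ω
      have he : ∀ x : ℝ, ‖∑ n ∈ s, (r n ω : ℂ) * a n *
          Complex.exp (2 * Real.pi * Complex.I * (n * x))‖ = 0 := by
        intro x
        rw [Finset.sum_eq_zero (fun n hn => by rw [hzero n hn]; ring)]
        simp
      simp only [he]
      exact ciSup_const
    simp only [hz, integral_zero, hS0, hσdef]
    rw [Real.sqrt_zero]
    norm_num
  have hS2pos : 0 < S2 := lt_of_le_of_ne hS2nonneg (Ne.symm hS0)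
  have hσpos : 0 < σ := Real.sqrt_pos.2 hS2pos
  have hσ2 : σ^2 = S2 := Real.sq_sqrt hS2nonneg
  have hw2 : w^2 = Real.log N := Real.sq_sqrt hlogNpos.le
  -- setup
  set M : ℕ := N^2 with hM
  have hNpos : (0:ℝ) < N := by linarith
  have hMpos : (0:ℝ) < M := by
    rw [hM]; push_cast; nlinarith
  set τ : ℝ := Real.sqrt (2 * S2) with hτdef
  have hτpos : 0 < τ := Real.sqrt_pos.2 (by linarith)
  have hτ2 : τ^2 = 2 * S2 := Real.sq_sqrt (by linarith)
  have hτle : τ ≤ 2 * σ := by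
    have h4 : 2 * S2 ≤ (2*σ)^2 := by nlinarith
    have h5 : Real.sqrt (2*S2) ≤ Real.sqrt ((2*σ)^2) := Real.sqrt_le_sqrt h4
    have h6 : Real.sqrt ((2*σ)^2) = 2*σ := Real.sqrt_sq (by linarith : (0:ℝ) ≤ 2*σ)
    rw [hτdef]
    linarith
  set t : ℝ := w / τ with htdef
  have htpos : 0 < t := div_pos hwpos hτpos
  -- index set and linear forms
  set xg : ℕ → ℝ := fun j => (j:ℝ) / (M:ℝ) with hxg
  set sgn : Bool → ℝ := fun b => if b then 1 else -1 with hsgn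
  set cc : ℕ × Bool × Bool → ℕ → ℝ := fun i n =>
    sgn i.2.1 * (a n * Complex.exp (2 * Real.pi * Complex.I * (n * xg i.1))).re
      + sgn i.2.2 * (a n * Complex.exp (2 * Real.pi * Complex.I * (n * xg i.1))).im
    with hcc
  set Y : ℕ × Bool × Bool → Ω → ℝ := fun i ω => ∑ n ∈ s, cc i n * r n ω with hY
  set I : Finset (ℕ × Bool × Bool) := (Finset.range M) ×ˢ (Finset.univ) with hIdef
  have hM0 : 0 < M := by
    have : (0:ℝ) < (M:ℝ) := hMpos
    exact_mod_cast this
  have hIne : I.Nonempty := by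
    refine ⟨(0, true, true), ?_⟩
    rw [hIdef, Finset.mem_product]
    exact ⟨Finset.mem_range.2 hM0, Finset.mem_univ _⟩
  set Z : Ω → ℝ := fun ω => I.sup' hIne (fun i => Y i ω) with hZ
  have hsgn_sq : ∀ b, (sgn b)^2 = 1 := by intro b; cases b <;> simp [hsgn]
  have hsgn_abs : ∀ b, |sgn b| = 1 := by intro b; cases b <;> simp [hsgn]
  -- norm of a_n e
  have hnormae : ∀ (j n : ℕ),
      ‖a n * Complex.exp (2 * Real.pi * Complex.I * (n * xg j))‖ = ‖a n‖ := by
    intro j n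
    rw [norm_mul]
    have h := norm_e n (xg j)
    rw [h, mul_one]
  have hcomp : ∀ (j n : ℕ),
      (a n * Complex.exp (2 * Real.pi * Complex.I * (n * xg j))).re ^ 2
      + (a n * Complex.exp (2 * Real.pi * Complex.I * (n * xg j))).im ^ 2
      = ‖a n‖ ^ 2 := by
    intro j n
    have h := Complex.sq_norm (a n * Complex.exp (2 * Real.pi * Complex.I * (n * xg j)))
    rw [Complex.normSq_apply, hnormae j n] at h
    nlinarith [h]
  have hcc_abs : ∀ i n, |cc i n| ≤ 2 * ‖a n‖ := by
    intro i n
    rw [hcc]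
    refine le_trans (abs_add_le _ _) ?_
    rw [abs_mul, abs_mul, hsgn_abs, hsgn_abs, one_mul, one_mul]
    have h1 := Complex.abs_re_le_norm
      (a n * Complex.exp (2 * Real.pi * Complex.I * (n * xg i.1)))
    have h2 := Complex.abs_im_le_norm
      (a n * Complex.exp (2 * Real.pi * Complex.I * (n * xg i.1)))
    rw [hnormae i.1 n] at h1 h2
    linarith
  have hcc_sq : ∀ i n, (cc i n)^2 ≤ 2 * ‖a n‖^2 := by
    rintro ⟨j, b1, b2⟩ n
    have h := hcomp j n
    rw [hcc]
    simp only
    cases b1 <;> cases b2 <;>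
      simp only [hsgn, if_true, if_false, Bool.false_eq_true] <;>
      nlinarith [sq_nonneg ((a n * Complex.exp (2 * Real.pi * Complex.I * (n * xg j))).re
          + (a n * Complex.exp (2 * Real.pi * Complex.I * (n * xg j))).im),
        sq_nonneg ((a n * Complex.exp (2 * Real.pi * Complex.I * (n * xg j))).re
          - (a n * Complex.exp (2 * Real.pi * Complex.I * (n * xg j))).im)]
  -- measurability of Y
  have hYmeas : ∀ i, Measurable (Y i) := by
    intro i
    rw [hY]
    exact Finset.measurable_sum s (fun n _ => ((hrmeas n).const_mul _))
  -- a.e. event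
  have hE : ∀ᵐ ω ∂P, ∀ n, r n ω = 1 ∨ r n ω = -1 :=
    ae_all_iff.2 fun n => rademacher_ae' (hrmeas n) (h1 n) (h2 n)
  -- uniform bound
  set B0 : ℝ := ∑ n ∈ s, 2 * ‖a n‖ with hB0
  have hbdd : ∀ᵐ ω ∂P, ∀ i ∈ I, |Y i ω| ≤ B0 := by
    filter_upwards [hE] with ω hω
    intro i _
    rw [hY]
    refine le_trans (Finset.abs_sum_le_sum_abs _ _) ?_
    rw [hB0]
    refine Finset.sum_le_sum fun n hn => ?_
    rw [abs_mul]
    have hr1 : |r n ω| = 1 := by rcases hω n with h | h <;> simp [h]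
    rw [hr1, mul_one]
    exact hcc_abs i n
  -- mgf bound
  set K : ℝ := Real.exp (t^2 * (2*S2) / 2) with hKdef
  have hK1 : 1 ≤ K := by
    rw [hKdef]
    refine Real.one_le_exp ?_
    nlinarith [sq_nonneg t]
  have hmgfY : ∀ i ∈ I, ∫ ω, Real.exp (t * Y i ω) ∂P ≤ K := by
    intro i _
    have h := mgf_rademacher hrmeas hindep h1 h2 s (cc i) t
    calc ∫ ω, Real.exp (t * Y i ω) ∂P
        = ∫ ω, Real.exp (t * ∑ n ∈ s, cc i n * r n ω) ∂P := rfl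
      _ ≤ Real.exp (t^2 * (∑ n ∈ s, (cc i n)^2) / 2) := h
      _ ≤ K := by
          rw [hKdef]
          refine Real.exp_le_exp.2 ?_
          have hsum : ∑ n ∈ s, (cc i n)^2 ≤ 2 * S2 := by
            rw [hS2, Finset.mul_sum]
            exact Finset.sum_le_sum fun n _ => hcc_sq i n
          nlinarith [sq_nonneg t]
  have hEmax : ∫ ω, Z ω ∂P ≤ Real.log (I.card * K) / t :=
    expectation_max_le I hIne Y hYmeas B0 hbdd htpos hK1 hmgfY
  have hZint : Integrable Z P := integrable_sup' I hIne Y hYmeas hbdd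
  -- deterministic grid bound
  set L : ℝ := 2 * π * ∑ n ∈ s, (n:ℝ) * ‖a n‖ with hL
  set D : ℝ := L / (M:ℝ) with hD
  have hDnonneg : 0 ≤ D := by
    rw [hD, hL]
    have hsum0 : 0 ≤ ∑ n ∈ s, (n:ℝ) * ‖a n‖ :=
      Finset.sum_nonneg fun n _ => mul_nonneg (Nat.cast_nonneg n) (norm_nonneg _)
    have := Real.pi_pos
    have h2M : 0 < (M:ℝ) := hMpos
    positivity
  have hpoint : ∀ᵐ ω ∂P, (⨆ x : ℝ, ‖∑ n ∈ s, (r n ω : ℂ) * a n *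
      Complex.exp (2 * Real.pi * Complex.I * (n * x))‖) ≤ Z ω + D := by
    filter_upwards [hE] with ω hω
    have hrn : ∀ n : ℕ, ‖((r n ω : ℝ) : ℂ)‖ = 1 := by
      intro n; rcases hω n with h | h <;> rw [h] <;> simp
    refine ciSup_le fun x => ?_
    set u : ℝ := Int.fract x with hu
    have hu0 : 0 ≤ u := Int.fract_nonneg x
    have hu1 : u < 1 := Int.fract_lt_one x
    -- periodicity
    have hper : ∀ n : ℕ, Complex.exp (2 * Real.pi * Complex.I * (n * x))
        = Complex.exp (2 * Real.pi * Complex.I * (n * u)) := by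
      intro n
      have hre : u + (⌊x⌋ : ℝ) = x := by
        rw [hu]; exact Int.fract_add_floor x
      have hxu : (x : ℂ) = (u : ℂ) + ((⌊x⌋ : ℤ) : ℂ) := by
        exact_mod_cast congrArg Complex.ofReal hre.symm
      have harg : 2 * (Real.pi:ℂ) * Complex.I * (n * x)
          = 2 * Real.pi * Complex.I * (n * u) + ((n * ⌊x⌋ : ℤ) : ℂ) * (2 * Real.pi * Complex.I) := by
        rw [hxu]
        push_cast
        ring
      rw [harg, Complex.exp_add, Complex.exp_int_mul_two_pi_mul_I, mul_one]
    -- grid point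
    set j : ℕ := (⌊u * (M:ℝ)⌋).toNat with hj
    have hfl0 : 0 ≤ ⌊u * (M:ℝ)⌋ := Int.floor_nonneg.2 (mul_nonneg hu0 hMpos.le)
    have hjr : (j:ℝ) = ((⌊u * (M:ℝ)⌋ : ℤ) : ℝ) := by
      rw [hj]
      exact_mod_cast congrArg (fun z : ℤ => (z : ℝ)) (Int.toNat_of_nonneg hfl0)
    have hjle : (j:ℝ) ≤ u * M := by rw [hjr]; exact Int.floor_le _
    have hjgt : u * M < (j:ℝ) + 1 := by rw [hjr]; exact Int.lt_floor_add_one _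
    have hjM : j < M := by
      have hr1 : (j:ℝ) < (M:ℝ) := lt_of_le_of_lt hjle (by nlinarith)
      exact_mod_cast hr1
    have he1 : (j:ℝ)/(M:ℝ) ≤ u := (div_le_iff₀ hMpos).2 (by linarith)
    have he2 : u ≤ ((j:ℝ)+1)/(M:ℝ) := (le_div_iff₀ hMpos).2 (by linarith)
    have hdist : |u - xg j| ≤ 1/(M:ℝ) := by
      rw [hxg]
      simp only
      rw [abs_le]
      have hq : ((j:ℝ)+1)/(M:ℝ) - (j:ℝ)/(M:ℝ) = 1/(M:ℝ) := by field_simp; ring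
      constructor
      · have h1M : 0 < 1/(M:ℝ) := by positivity
        linarith
      · linarith
    -- Lipschitz step
    have hlip : ‖(∑ n ∈ s, (r n ω:ℂ) * a n * Complex.exp (2*Real.pi*Complex.I*(n*u)))
        - ∑ n ∈ s, (r n ω:ℂ) * a n * Complex.exp (2*Real.pi*Complex.I*(n * xg j))‖ ≤ D := by
      rw [← Finset.sum_sub_distrib]
      refine le_trans (norm_sum_le _ _) ?_
      have hterm : ∀ n ∈ s, ‖(r n ω:ℂ) * a n * Complex.exp (2*Real.pi*Complex.I*(n*u))
          - (r n ω:ℂ) * a n * Complex.exp (2*Real.pi*Complex.I*(n * xg j))‖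
          ≤ 2*π*(n:ℝ)*‖a n‖*(1/(M:ℝ)) := by
        intro n _
        rw [← mul_sub, norm_mul, norm_mul, hrn n, one_mul]
        have hll := exp_lip n u (xg j)
        have h2 : ‖Complex.exp (2*Real.pi*Complex.I*(n*u))
            - Complex.exp (2*Real.pi*Complex.I*(n * xg j))‖ ≤ 2*π*(n:ℝ)*(1/(M:ℝ)) := by
          refine le_trans hll ?_
          have hpin : 0 ≤ 2*π*(n:ℝ) := by positivity
          exact mul_le_mul_of_nonneg_left hdist hpin
        calc ‖a n‖ * ‖Complex.exp (2*Real.pi*Complex.I*(n*u))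
              - Complex.exp (2*Real.pi*Complex.I*(n * xg j))‖
            ≤ ‖a n‖ * (2*π*(n:ℝ)*(1/(M:ℝ))) := mul_le_mul_of_nonneg_left h2 (norm_nonneg _)
          _ = 2*π*(n:ℝ)*‖a n‖*(1/(M:ℝ)) := by ring
      refine le_trans (Finset.sum_le_sum hterm) ?_
      rw [hD, hL]
      refine le_of_eq ?_
      rw [Finset.mul_sum, Finset.sum_div]
      refine Finset.sum_congr rfl fun n _ => by ring
    -- max step
    set z : ℂ := ∑ n ∈ s, (r n ω:ℂ) * a n * Complex.exp (2*Real.pi*Complex.I*(n * xg j)) with hzdef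
    have hmem : (j, decide (0 ≤ z.re), decide (0 ≤ z.im)) ∈ I := by
      rw [hIdef, Finset.mem_product]
      exact ⟨Finset.mem_range.2 hjM, Finset.mem_univ _⟩
    have hYval : Y (j, decide (0 ≤ z.re), decide (0 ≤ z.im)) ω
        = sgn (decide (0 ≤ z.re)) * z.re + sgn (decide (0 ≤ z.im)) * z.im := by
      rw [hY, hzdef]
      simp only
      rw [Complex.re_sum, Complex.im_sum, Finset.mul_sum, Finset.mul_sum,
        ← Finset.sum_add_distrib]
      refine Finset.sum_congr rfl fun n hn => ?_
      rw [hcc]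
      simp only
      have hre : ((r n ω:ℂ) * a n * Complex.exp (2*Real.pi*Complex.I*(n * xg j))).re
          = r n ω * (a n * Complex.exp (2*Real.pi*Complex.I*(n * xg j))).re := by
        rw [mul_assoc, Complex.re_ofReal_mul]
      have him : ((r n ω:ℂ) * a n * Complex.exp (2*Real.pi*Complex.I*(n * xg j))).im
          = r n ω * (a n * Complex.exp (2*Real.pi*Complex.I*(n * xg j))).im := by
        rw [mul_assoc, Complex.im_ofReal_mul]
      rw [hre, him]
      ring
    have hzZ : ‖z‖ ≤ Z ω := by
      have habs := Complex.norm_le_abs_re_add_abs_im z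
      have hb1 : sgn (decide (0 ≤ z.re)) * z.re = |z.re| := by
        by_cases h0 : 0 ≤ z.re
        · simp [hsgn, h0, abs_of_nonneg h0]
        · simp [hsgn, h0, abs_of_neg (lt_of_not_ge h0)]
      have hb2 : sgn (decide (0 ≤ z.im)) * z.im = |z.im| := by
        by_cases h0 : 0 ≤ z.im
        · simp [hsgn, h0, abs_of_nonneg h0]
        · simp [hsgn, h0, abs_of_neg (lt_of_not_ge h0)]
      have hle : ‖z‖ ≤ Y (j, decide (0 ≤ z.re), decide (0 ≤ z.im)) ω := by
        rw [hYval, hb1, hb2]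
        exact habs
      refine le_trans hle ?_
      rw [hZ]
      exact Finset.le_sup' (fun i => Y i ω) hmem
    -- combine
    have hQeq : (∑ n ∈ s, (r n ω : ℂ) * a n * Complex.exp (2 * Real.pi * Complex.I * (n * x)))
        = ∑ n ∈ s, (r n ω : ℂ) * a n * Complex.exp (2 * Real.pi * Complex.I * (n * u)) :=
      Finset.sum_congr rfl fun n _ => by rw [hper n]
    rw [hQeq]
    calc ‖∑ n ∈ s, (r n ω : ℂ) * a n * Complex.exp (2 * Real.pi * Complex.I * (n * u))‖
        = ‖z + ((∑ n ∈ s, (r n ω : ℂ) * a n * Complex.exp (2 * Real.pi * Complex.I * (n * u))) - z)‖ := by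
          congr 1; ring
      _ ≤ ‖z‖ + ‖(∑ n ∈ s, (r n ω : ℂ) * a n * Complex.exp (2 * Real.pi * Complex.I * (n * u))) - z‖ :=
          norm_add_le _ _
      _ ≤ Z ω + D := add_le_add hzZ (by rw [hzdef]; exact hlip)
  -- arithmetic for the max bound
  have hIcard : (I.card : ℝ) = 4 * (N:ℝ)^2 := by
    have hc : I.card = M * 4 := by
      rw [hIdef, Finset.card_product, Finset.card_range]
      rfl
    rw [hc, hM]
    push_cast
    ring
  have hKpos : (0:ℝ) < K := by rw [hKdef]; exact Real.exp_pos _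
  have hlogK : Real.log K = Real.log N / 2 := by
    rw [hKdef, Real.log_exp]
    have ht2 : t^2 * (2*S2) = Real.log N := by
      rw [htdef, div_pow, hτ2, hw2]
      field_simp
    rw [ht2]
  have hcardpos : (0:ℝ) < (I.card:ℝ) := by rw [hIcard]; nlinarith
  have hcardK : Real.log ((I.card:ℝ) * K) ≤ (9/2) * Real.log N := by
    rw [Real.log_mul (ne_of_gt hcardpos) (ne_of_gt hKpos), hlogK]
    have h4 : (4:ℝ) ≤ (N:ℝ)^2 := by nlinarith
    have h44 : (4:ℝ)*(N:ℝ)^2 ≤ (N:ℝ)^4 := by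
      nlinarith [mul_le_mul_of_nonneg_right h4 (sq_nonneg (N:ℝ))]
    have hlogc : Real.log ((I.card:ℝ)) ≤ Real.log ((N:ℝ)^4) := by
      rw [hIcard]
      exact Real.log_le_log (by nlinarith) h44
    rw [Real.log_pow] at hlogc
    push_cast at hlogc
    linarith
  have harith : Real.log ((I.card:ℝ) * K) / t ≤ 9 * σ * w := by
    rw [div_le_iff₀ htpos]
    have hrhs : 9*σ*w*t = 9*σ*Real.log N/τ := by
      rw [htdef, ← hw2]
      ring
    rw [hrhs, le_div_iff₀ hτpos]
    have s1 : Real.log ((I.card:ℝ)*K) * τ ≤ ((9/2)*Real.log N) * τ :=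
      mul_le_mul_of_nonneg_right hcardK hτpos.le
    have s2 : ((9/2)*Real.log N) * τ ≤ ((9/2)*Real.log N) * (2*σ) :=
      mul_le_mul_of_nonneg_left hτle (by nlinarith)
    have s3 : ((9/2)*Real.log N)*(2*σ) = 9*σ*Real.log N := by ring
    linarith
  -- bound on D
  have hsum_norm : ∑ n ∈ s, ‖a n‖ ≤ (N:ℝ) * σ := by
    have h0 : 0 ≤ ∑ n ∈ s, ‖a n‖ := Finset.sum_nonneg fun n _ => norm_nonneg _
    have hCS := Finset.sum_mul_sq_le_sq_mul_sq s (fun _ => (1:ℝ)) (fun n => ‖a n‖)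
    simp only [one_pow, one_mul] at hCS
    have hcard : ((s.card : ℕ) : ℝ) ≤ (N:ℝ) := by
      have : s.card = N := by rw [hs, Nat.card_Icc]; omega
      rw [this]
    have hys : (∑ n ∈ s, ‖a n‖)^2 ≤ ((N:ℝ)*σ)^2 := by
      calc (∑ n ∈ s, ‖a n‖)^2 ≤ (∑ _n ∈ s, (1:ℝ)) * ∑ n ∈ s, ‖a n‖^2 := hCS
        _ = (s.card : ℝ) * S2 := by rw [Finset.sum_const, nsmul_eq_mul, mul_one, hS2]
        _ ≤ (N:ℝ) * S2 := mul_le_mul_of_nonneg_right hcard hS2nonneg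
        _ ≤ ((N:ℝ)*σ)^2 := by nlinarith
    have hq := Real.sqrt_le_sqrt hys
    rwa [Real.sqrt_sq h0, Real.sqrt_sq (mul_nonneg hNpos.le hσpos.le)] at hq
  have hS1 : ∑ n ∈ s, (n:ℝ)*‖a n‖ ≤ (N:ℝ) * ∑ n ∈ s, ‖a n‖ := by
    rw [Finset.mul_sum]
    refine Finset.sum_le_sum fun n hn => ?_
    have hn' : n ∈ Finset.Icc 1 N := hn
    have hnN : (n:ℝ) ≤ (N:ℝ) := by exact_mod_cast (Finset.mem_Icc.1 hn').2
    exact mul_le_mul_of_nonneg_right hnN (norm_nonneg _)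
  have hN2pos : (0:ℝ) < (N:ℝ)^2 := by nlinarith
  have hMcast : (M:ℝ) = (N:ℝ)^2 := by rw [hM]; push_cast; ring
  have hDle2pi : D ≤ 2*π*σ := by
    rw [hD, hL, hMcast]
    rw [div_le_iff₀ hN2pos]
    have hfin : ∑ n ∈ s, (n:ℝ)*‖a n‖ ≤ (N:ℝ)^2*σ := by
      calc ∑ n ∈ s, (n:ℝ)*‖a n‖ ≤ (N:ℝ) * ∑ n ∈ s, ‖a n‖ := hS1
        _ ≤ (N:ℝ) * ((N:ℝ)*σ) := mul_le_mul_of_nonneg_left hsum_norm hNpos.le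
        _ = (N:ℝ)^2*σ := by ring
    calc 2*π*∑ n ∈ s, (n:ℝ)*‖a n‖ ≤ 2*π*((N:ℝ)^2*σ) :=
        mul_le_mul_of_nonneg_left hfin (by linarith [Real.pi_pos])
      _ = 2*π*σ*(N:ℝ)^2 := by ring
  have hw_half : (1:ℝ)/2 ≤ w := by
    have h14 : (1:ℝ)/4 ≤ Real.log N := by linarith [Real.log_two_gt_d9]
    have hq := Real.sqrt_le_sqrt h14
    have hsq : Real.sqrt (1/4) = 1/2 := by
      rw [show (1:ℝ)/4 = (1/2)^2 by norm_num, Real.sqrt_sq (by norm_num : (0:ℝ) ≤ 1/2)]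
    rw [hsq] at hq
    rw [hwdef]
    exact hq
  have hDle : D ≤ 16*σ*w := by
    have hpi4 : π ≤ 4 := Real.pi_le_four
    have hps : π*σ ≤ 4*σ := mul_le_mul_of_nonneg_right hpi4 hσpos.le
    have h8 : 0 ≤ 16*(σ*(w - 1/2)) := by
      have := mul_nonneg hσpos.le (by linarith : (0:ℝ) ≤ w - 1/2)
      linarith
    have hexp : 16*(σ*(w - 1/2)) = 16*σ*w - 8*σ := by ring
    linarith
  -- final chain
  have hint_nonneg : ∀ ω : Ω, 0 ≤ (⨆ x : ℝ, ‖∑ n ∈ s, (r n ω : ℂ) * a n *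
      Complex.exp (2 * Real.pi * Complex.I * (n * x))‖) :=
    fun ω => Real.iSup_nonneg fun x => norm_nonneg _
  have hZD_int : Integrable (fun ω => Z ω + D) P := hZint.add (integrable_const D)
  have hIle : (∫ ω, (⨆ x : ℝ, ‖∑ n ∈ s, (r n ω : ℂ) * a n *
      Complex.exp (2 * Real.pi * Complex.I * (n * x))‖) ∂P) ≤ ∫ ω, (Z ω + D) ∂P :=
    integral_mono_of_nonneg (Eventually.of_forall hint_nonneg) hZD_int hpoint
  have hsplit : ∫ ω, (Z ω + D) ∂P = (∫ ω, Z ω ∂P) + D := by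
    rw [integral_add hZint (integrable_const D), integral_const]
    simp [measure_univ]
  have hfinal : (∫ ω, (⨆ x : ℝ, ‖∑ n ∈ s, (r n ω : ℂ) * a n *
      Complex.exp (2 * Real.pi * Complex.I * (n * x))‖) ∂P) ≤ 25 * σ * w := by
    have hZle : ∫ ω, Z ω ∂P ≤ 9 * σ * w := le_trans hEmax harith
    calc (∫ ω, (⨆ x : ℝ, ‖∑ n ∈ s, (r n ω : ℂ) * a n *
        Complex.exp (2 * Real.pi * Complex.I * (n * x))‖) ∂P)
        ≤ ∫ ω, (Z ω + D) ∂P := hIle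
      _ = (∫ ω, Z ω ∂P) + D := hsplit
      _ ≤ 9 * σ * w + 16*σ*w := add_le_add hZle hDle
      _ = 25 * σ * w := by ring
  refine le_trans hfinal ?_
  have h0 : 0 ≤ σ*w := mul_nonneg hσpos.le hwpos.le
  have : 100*σ*w - 25*σ*w = 75*(σ*w) := by ring
  linarith
end
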